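/- arXiv:2006.14309 — 11 statements merged into one kernel-verified Lean document; each statement's English description precedes it below -/
import Mathlib

section
/- Let G be a finite connected simple graph and let T₁ and T₂ be two spanning trees of G. Then there exists a transformation from T₁ to T₂ such that every tree T of the sequence satisfies in(T) ⊆ in(T₁) ∪ in(T₂). -/
open SimpleGraph

/-- `T` is a spanning tree of `G`: a subgraph of `G` (on the same vertex set)
that is a tree. Being a tree on the whole vertex type, it contains all vertices. -/
def IsSpanningTree {V : Type*} (G T : SimpleGraph V) : Prop :=
  T ≤ G ∧ T.IsTree

/-- `T₁` and `T₂` differ by an edge flip: there are edges `e ∈ E(T₁) \ E(T₂)` and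
`f ∈ E(T₂) \ E(T₁)` with `E(T₂) = (E(T₁) \ {e}) ∪ {f}`. -/
def EdgeFlip {V : Type*} (T₁ T₂ : SimpleGraph V) : Prop :=
  ∃ e ∈ T₁.edgeSet, e ∉ T₂.edgeSet ∧
    ∃ f ∈ T₂.edgeSet, f ∉ T₁.edgeSet ∧ T₂.edgeSet = (T₁.edgeSet \ {e}) ∪ {f}

/-- The internal nodes of `T`: vertices that are not leaves (a leaf has degree one). -/
def internalNodes {V : Type*} (T : SimpleGraph V) : Set V :=
  {v | (T.neighborSet v).ncard ≠ 1}

/-- One step of a transformation keeping property `P`: both trees are spanning trees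
of `G` satisfying `P`, and they differ by an edge flip. -/
def Step {V : Type*} (G : SimpleGraph V) (P : SimpleGraph V → Prop)
    (T₁ T₂ : SimpleGraph V) : Prop :=
  IsSpanningTree G T₁ ∧ IsSpanningTree G T₂ ∧ P T₁ ∧ P T₂ ∧ EdgeFlip T₁ T₂

/-- There is a transformation from `T₁` to `T₂`: a finite sequence of spanning trees of `G`,
all satisfying `P`, starting at `T₁`, ending at `T₂`, consecutive ones differing by an
edge flip. -/
def Transformable {V : Type*} (G : SimpleGraph V) (P : SimpleGraph V → Prop)
    (T₁ T₂ : SimpleGraph V) : Prop :=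
  Relation.ReflTransGen (Step G P) T₁ T₂

private lemma ncard_ne_one_of_two {V : Type*} {S : Set V} {a b : V}
    (ha : a ∈ S) (hb : b ∈ S) (hab : a ≠ b) : S.ncard ≠ 1 := by
  intro h
  obtain ⟨c, rfl⟩ := Set.ncard_eq_one.mp h
  simp only [Set.mem_singleton_iff] at ha hb
  exact hab (ha.trans hb.symm)

private lemma exists_cross_edge {V : Type*} (T : SimpleGraph V) (A : Set V) :
    ∀ {a b : V} (p : T.Walk a b), p.IsPath → a ∈ A → b ∉ A →
      ∃ x y, T.Adj x y ∧ x ∈ A ∧ y ∉ A ∧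
        (x = a ∨ (T.neighborSet x).ncard ≠ 1) ∧ (y = b ∨ (T.neighborSet y).ncard ≠ 1) := by
  intro a b p
  induction p with
  | nil => intro _ ha hb; exact absurd ha hb
  | @cons a c b h q ih =>
    intro hp ha hb
    by_cases hc : c ∈ A
    · obtain ⟨x, y, hxy, hx, hy, hx', hy'⟩ := ih hp.of_cons hc hb
      refine ⟨x, y, hxy, hx, hy, Or.inr ?_, hy'⟩
      rcases hx' with rfl | hx'
      · exact ncard_ne_one_of_two (T.mem_neighborSet x a |>.mpr h.symm)
          (T.mem_neighborSet x y |>.mpr hxy) (fun hay => hy (hay ▸ ha))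
      · exact hx'
    · refine ⟨a, c, h, ha, hc, Or.inl rfl, ?_⟩
      cases q with
      | nil => exact Or.inl rfl
      | @cons _ d _ h' q' =>
        right
        have hps := (Walk.cons_isPath_iff _ _).mp hp
        have had : a ≠ d := by
          intro had
          apply hps.2
          rw [had, Walk.support_cons]
          exact List.mem_cons_of_mem c q'.start_mem_support
        exact ncard_ne_one_of_two (T.mem_neighborSet c a |>.mpr h.symm)
          (T.mem_neighborSet c d |>.mpr h') had

private lemma flip_step {V : Type*} (G T₁ T₂ : SimpleGraph V)
    (h₁ : IsSpanningTree G T₁) (h₂ : IsSpanningTree G T₂) {u v : V}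
    (huv : T₁.Adj u v) (he₂ : s(u, v) ∉ T₂.edgeSet) :
    ∃ T, IsSpanningTree G T ∧ EdgeFlip T₁ T ∧
      internalNodes T ⊆ internalNodes T₁ ∪ internalNodes T₂ ∧
      T.edgeSet \ T₂.edgeSet = (T₁.edgeSet \ T₂.edgeSet) \ {s(u, v)} := by
  classical
  set D := T₁.deleteEdges {s(u, v)} with hD
  set A : Set V := {w | D.Reachable u w} with hA
  have huA : u ∈ A := Reachable.refl u
  have hvA : v ∉ A := by
    have hb := isAcyclic_iff_forall_adj_isBridge.mp h₁.2.IsAcyclic huv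
    have := isBridge_iff.mp hb
    intro hv
    exact this hv
  have hcomp : ∀ w, D.Reachable u w ∨ D.Reachable v w := by
    have key : ∀ {a b : V} (_ : T₁.Walk a b),
        (D.Reachable u a ∨ D.Reachable v a) → (D.Reachable u b ∨ D.Reachable v b) := by
      intro a b p
      induction p with
      | nil => exact id
      | @cons a c b h q ih =>
        intro hyp
        apply ih
        by_cases hs : s(a, c) = s(u, v)
        · rw [Sym2.eq_iff] at hs
          rcases hs with ⟨rfl, rfl⟩ | ⟨rfl, rfl⟩
          · exact Or.inr (Reachable.refl _)
          · exact Or.inl (Reachable.refl _)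
        · have hadj : D.Adj a c := by
            rw [hD, deleteEdges_adj]
            exact ⟨h, by simpa using hs⟩
          rcases hyp with hl | hr
          · exact Or.inl (hl.trans hadj.reachable)
          · exact Or.inr (hr.trans hadj.reachable)
    intro w
    obtain ⟨p⟩ := h₁.2.isConnected.preconnected u w
    exact key p (Or.inl (Reachable.refl u))
  -- path in T₂ from u to v
  obtain ⟨q⟩ := h₂.2.isConnected.preconnected u v
  obtain ⟨x, y, hxy, hxA, hyA, hx', hy'⟩ :=
    exists_cross_edge T₂ A q.toPath q.toPath.2 huA hvA
  have hf₂ : s(x, y) ∈ T₂.edgeSet := hxy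
  have hfne : s(x, y) ∉ T₁.edgeSet := by
    intro hmem
    by_cases hs : s(x, y) = s(u, v)
    · exact he₂ (hs ▸ hf₂)
    · have hadj : D.Adj x y := by
        rw [hD, deleteEdges_adj]
        exact ⟨hmem, by simpa using hs⟩
      exact hyA (hxA.trans hadj.reachable)
  set T := D ⊔ fromEdgeSet {s(x, y)} with hT
  have hTadj : ∀ a b : V, T.Adj a b ↔ ((T₁.Adj a b ∧ s(a, b) ≠ s(u, v)) ∨ s(a, b) = s(x, y)) := by
    intro a b
    rw [hT, sup_adj, deleteEdges_adj, fromEdgeSet_adj]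
    constructor
    · rintro (⟨h1, h2⟩ | ⟨h1, _⟩)
      · exact Or.inl ⟨h1, by simpa using h2⟩
      · exact Or.inr (by simpa using h1)
    · rintro (⟨h1, h2⟩ | h1)
      · exact Or.inl ⟨h1, by simpa using h2⟩
      · refine Or.inr ⟨by simpa using h1, ?_⟩
        rw [Sym2.eq_iff] at h1
        rcases h1 with ⟨rfl, rfl⟩ | ⟨rfl, rfl⟩
        · exact hxy.ne
        · exact hxy.ne'
  have hTedge : T.edgeSet = (T₁.edgeSet \ {s(u, v)}) ∪ {s(x, y)} := by
    rw [hT, edgeSet_sup, edgeSet_deleteEdges, edgeSet_fromEdgeSet]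
    congr 1
    ext e
    simp only [Set.mem_diff, Set.mem_singleton_iff, Set.mem_setOf_eq, and_iff_left_iff_imp]
    rintro rfl
    simp only [Sym2.mem_diagSet, Sym2.isDiag_iff_proj_eq]
    exact hxy.ne
  have hDT : D ≤ T := le_sup_left
  have hTG : T ≤ G := by
    rw [hT]
    refine sup_le (le_trans (deleteEdges_le _) h₁.1) ?_
    intro a b hab
    rw [fromEdgeSet_adj] at hab
    obtain ⟨h1, _⟩ := hab
    simp only [Set.mem_singleton_iff] at h1
    rw [← mem_edgeSet, h1]
    exact edgeSet_mono h₂.1 hf₂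
  have hxyT : T.Adj x y := (hTadj x y).mpr (Or.inr rfl)
  have hreach_vy : D.Reachable v y := by
    rcases hcomp y with h | h
    · exact absurd h hyA
    · exact h
  have huvT : T.Reachable u v := by
    have h1 : T.Reachable u x := (hxA : D.Reachable u x).mono hDT
    have h2 : T.Reachable y v := ((hreach_vy).mono hDT).symm
    exact (h1.trans hxyT.reachable).trans h2
  have hTreach : ∀ w, T.Reachable u w := by
    intro w
    rcases hcomp w with h | h
    · exact h.mono hDT
    · exact huvT.trans (h.mono hDT)
  have hTconn : T.Connected := by
    rw [connected_iff]
    exact ⟨fun a b => (hTreach a).symm.trans (hTreach b), ⟨u⟩⟩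
  have hTacyc : T.IsAcyclic := by
    intro v₀ c hc
    by_cases hfc : s(x, y) ∈ c.edges
    · have hkey : T.Adj x y ∧ (T \ fromEdgeSet {s(x, y)}).Reachable x y :=
        adj_and_reachable_delete_edges_iff_exists_cycle.mpr ⟨v₀, c, hc, hfc⟩
      have hle : (T \ fromEdgeSet {s(x, y)}) ≤ D := by
        intro a b hab
        rw [sdiff_adj] at hab
        obtain ⟨hTab, hnf⟩ := hab
        rw [fromEdgeSet_adj] at hnf
        have hne : s(a, b) ≠ s(x, y) := fun hs => hnf ⟨by simpa using hs, hTab.ne⟩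
        rcases (hTadj a b).mp hTab with ⟨h1, h2⟩ | h1
        · rw [hD, deleteEdges_adj]
          exact ⟨h1, by simpa using h2⟩
        · exact absurd h1 hne
      exact hyA (hxA.trans (hkey.2.mono hle))
    · have hsub : ∀ e ∈ c.edges, e ∈ T₁.edgeSet := by
        intro e he
        have h1 : e ∈ T.edgeSet := c.edges_subset_edgeSet he
        rw [hTedge] at h1
        rcases h1 with ⟨h2, _⟩ | h2
        · exact h2
        · simp only [Set.mem_singleton_iff] at h2
          exact absurd (h2 ▸ he) hfc
      exact h₁.2.IsAcyclic _ (hc.transfer hsub)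
  have hneigh : ∀ a b : V, a ≠ b → ∃ c, T.Adj a c := by
    intro a b hab
    obtain ⟨p⟩ := hTconn.preconnected a b
    cases p with
    | nil => exact absurd rfl hab
    | cons h _ => exact ⟨_, h⟩
  refine ⟨T, ⟨hTG, hTconn, hTacyc⟩, ?_, ?_, ?_⟩
  · -- EdgeFlip
    refine ⟨s(u, v), huv, ?_, s(x, y), ?_, hfne, hTedge⟩
    · rw [hTedge]
      rintro (⟨_, h2⟩ | h2)
      · exact h2 rfl
      · simp only [Set.mem_singleton_iff] at h2
        exact he₂ (h2 ▸ hf₂)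
    · rw [hTedge]; exact Or.inr rfl
  · -- internal nodes
    intro w hw
    have hw' : (T.neighborSet w).ncard ≠ 1 := hw
    by_cases hwu : w = u
    · subst hwu
      by_cases hl : (T₁.neighborSet w).ncard = 1
      · exfalso
        have hNu : T₁.neighborSet w = {v} := by
          obtain ⟨c, hc⟩ := Set.ncard_eq_one.mp hl
          have hv : v ∈ T₁.neighborSet w := huv
          rw [hc] at hv ⊢
          simp only [Set.mem_singleton_iff] at hv
          rw [hv]
        have hadj_iff : ∀ z, T.Adj w z ↔ s(w, z) = s(x, y) := by
          intro z
          rw [hTadj]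
          constructor
          · rintro (⟨h1, h2⟩ | h1)
            · exfalso
              have : z ∈ T₁.neighborSet w := h1
              rw [hNu] at this
              simp only [Set.mem_singleton_iff] at this
              exact h2 (by rw [this])
            · exact h1
          · exact fun h => Or.inr h
        have hwy : w ≠ y := fun h => hyA (h ▸ huA)
        by_cases hwx : w = x
        · apply hw'
          have : T.neighborSet w = {y} := by
            ext z
            rw [mem_neighborSet, hadj_iff z, Set.mem_singleton_iff, Sym2.eq_iff]
            constructor
            · rintro (⟨_, rfl⟩ | ⟨h1, _⟩)
              · rfl
              · exact absurd h1 hwy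
            · exact fun h => Or.inl ⟨hwx, h⟩
          rw [this, Set.ncard_singleton]
        · have : T.neighborSet w = ∅ := by
            ext z
            rw [mem_neighborSet, hadj_iff z, Sym2.eq_iff]
            simp only [Set.mem_empty_iff_false, iff_false]
            rintro (⟨h1, _⟩ | ⟨h1, _⟩)
            · exact hwx h1
            · exact hwy h1
          obtain ⟨c, hc⟩ := hneigh w v huv.ne
          rw [← mem_neighborSet, this] at hc
          exact hc
      · exact Or.inl hl
    · by_cases hwv : w = v
      · subst hwv
        by_cases hl : (T₁.neighborSet w).ncard = 1
        · exfalso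
          have hNv : T₁.neighborSet w = {u} := by
            obtain ⟨c, hc⟩ := Set.ncard_eq_one.mp hl
            have hu : u ∈ T₁.neighborSet w := huv.symm
            rw [hc] at hu ⊢
            simp only [Set.mem_singleton_iff] at hu
            rw [hu]
          have hadj_iff : ∀ z, T.Adj w z ↔ s(w, z) = s(x, y) := by
            intro z
            rw [hTadj]
            constructor
            · rintro (⟨h1, h2⟩ | h1)
              · exfalso
                have : z ∈ T₁.neighborSet w := h1
                rw [hNv] at this
                simp only [Set.mem_singleton_iff] at this
                exact h2 (by rw [this, Sym2.eq_swap])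
              · exact h1
            · exact fun h => Or.inr h
          have hwx : w ≠ x := fun h => hvA (h ▸ hxA)
          by_cases hwy : w = y
          · apply hw'
            have : T.neighborSet w = {x} := by
              ext z
              rw [mem_neighborSet, hadj_iff z, Set.mem_singleton_iff, Sym2.eq_iff]
              constructor
              · rintro (⟨h1, _⟩ | ⟨_, rfl⟩)
                · exact absurd h1 hwx
                · rfl
              · exact fun h => Or.inr ⟨hwy, h⟩
            rw [this, Set.ncard_singleton]
          · have : T.neighborSet w = ∅ := by
              ext z
              rw [mem_neighborSet, hadj_iff z, Sym2.eq_iff]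
              simp only [Set.mem_empty_iff_false, iff_false]
              rintro (⟨h1, _⟩ | ⟨h1, _⟩)
              · exact hwx h1
              · exact hwy h1
            obtain ⟨c, hc⟩ := hneigh w u huv.ne'
            rw [← mem_neighborSet, this] at hc
            exact hc
        · exact Or.inl hl
      · by_cases hwx : w = x
        · subst hwx
          rcases hx' with h | h
          · exact absurd h hwu
          · exact Or.inr h
        · by_cases hwy : w = y
          · subst hwy
            rcases hy' with h | h
            · exact absurd h hwv
            · exact Or.inr h
          · left
            have hsame : T.neighborSet w = T₁.neighborSet w := by
              ext z
              simp only [mem_neighborSet]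
              rw [hTadj]
              constructor
              · rintro (⟨h1, _⟩ | h1)
                · exact h1
                · exfalso
                  rw [Sym2.eq_iff] at h1
                  rcases h1 with ⟨h2, _⟩ | ⟨h2, _⟩
                  · exact hwx h2
                  · exact hwy h2
              · intro h1
                refine Or.inl ⟨h1, fun hs => ?_⟩
                rw [Sym2.eq_iff] at hs
                rcases hs with ⟨h2, _⟩ | ⟨h2, _⟩
                · exact hwu h2
                · exact hwv h2
            show (T₁.neighborSet w).ncard ≠ 1
            rw [← hsame]
            exact hw'
  · -- measure
    rw [hTedge]
    ext z
    simp only [Set.mem_diff, Set.mem_union, Set.mem_singleton_iff]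
    constructor
    · rintro ⟨h1 | rfl, h3⟩
      · exact ⟨⟨h1.1, h3⟩, h1.2⟩
      · exact absurd hf₂ h3
    · rintro ⟨⟨h1, h2⟩, h3⟩
      exact ⟨Or.inl ⟨h1, h3⟩, h2⟩

private lemma spanning_tree_eq_of_subset {V : Type*} {G T₁ T₂ : SimpleGraph V}
    (h₁ : IsSpanningTree G T₁) (h₂ : IsSpanningTree G T₂)
    (h : T₁.edgeSet ⊆ T₂.edgeSet) : T₁ = T₂ := by
  refine le_antisymm (edgeSet_subset_edgeSet.mp h) ?_
  intro a b hab
  by_contra hno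
  have hb := isAcyclic_iff_forall_adj_isBridge.mp h₂.2.IsAcyclic hab
  apply isBridge_iff.mp hb
  have hle : T₁ ≤ T₂ \ fromEdgeSet {s(a, b)} := by
    intro c d hcd
    rw [sdiff_adj, fromEdgeSet_adj]
    refine ⟨edgeSet_subset_edgeSet.mp h hcd, ?_⟩
    rintro ⟨hs, -⟩
    simp only [Set.mem_singleton_iff] at hs
    exact hno (hs ▸ hcd : s(a, b) ∈ T₁.edgeSet)
  exact (h₁.2.isConnected.preconnected a b).mono hle


private lemma transformable_mono {V : Type*} {G : SimpleGraph V} {P Q : SimpleGraph V → Prop}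
    (h : ∀ S, P S → Q S) {a b : SimpleGraph V} (ht : Transformable G P a b) :
    Transformable G Q a b :=
  Relation.ReflTransGen.mono (p := Step G Q)
    (fun _ _ hs => ⟨hs.1, hs.2.1, h _ hs.2.2.1, h _ hs.2.2.2.1, hs.2.2.2.2⟩) _ _ ht

private lemma aux_transform {V : Type*} [Fintype V] (G T₂ : SimpleGraph V)
    (h₂ : IsSpanningTree G T₂) :
    ∀ n (T₁ : SimpleGraph V), IsSpanningTree G T₁ → (T₁.edgeSet \ T₂.edgeSet).ncard = n →
      Transformable G
        (fun T => internalNodes T ⊆ internalNodes T₁ ∪ internalNodes T₂) T₁ T₂ := by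
  intro n
  induction n using Nat.strong_induction_on with
  | _ n ih =>
    intro T₁ h₁ hn
    by_cases hdiff : T₁.edgeSet \ T₂.edgeSet = ∅
    · have heq : T₁ = T₂ :=
        spanning_tree_eq_of_subset h₁ h₂ (Set.diff_eq_empty.mp hdiff)
      subst heq
      exact Relation.ReflTransGen.refl
    · obtain ⟨e, he⟩ := Set.nonempty_iff_ne_empty.mpr hdiff
      induction e using Sym2.ind with
      | _ u v =>
        have huv : T₁.Adj u v := he.1
        obtain ⟨T, hT, hflip, hint, hmeas⟩ := flip_step G T₁ T₂ h₁ h₂ huv he.2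
        have hlt : (T.edgeSet \ T₂.edgeSet).ncard < n := by
          rw [hmeas, ← hn]
          exact Set.ncard_diff_singleton_lt_of_mem he (Set.toFinite _)
        have htail := ih _ hlt T hT rfl
        refine Relation.ReflTransGen.head
          ⟨h₁, hT, Set.subset_union_left, hint, hflip⟩ (transformable_mono ?_ htail)
        intro S hS z hz
        rcases hS hz with h | h
        · exact hint h
        · exact Or.inr h

/-- There is a transformation between any two spanning trees in which every intermediate
tree has its internal nodes contained in `in(T₁) ∪ in(T₂)`. -/
theorem spanning_tree_transformation_internal_union
    {V : Type*} [Fintype V] (G : SimpleGraph V) (hG : G.Connected)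
    (T₁ T₂ : SimpleGraph V)
    (h₁ : IsSpanningTree G T₁) (h₂ : IsSpanningTree G T₂) :
    Transformable G
      (fun T => internalNodes T ⊆ internalNodes T₁ ∪ internalNodes T₂) T₁ T₂ :=
  aux_transform G T₂ h₂ _ T₁ h₁ rfl
end

section
/- Let G be a finite connected simple graph on n vertices and let T be a spanning tree of G with exactly two internal nodes u and v, where both u and v have degree at most n − 3 in G. Then T is frozen with respect to the threshold of two internal nodes: every spanning tree T' of G that can be reached from T by a transformation in which every tree of the sequence has at most two internal nodes satisfies in(T') = {u, v}. -/
open SimpleGraph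

lemma tree_deg_sum {V : Type*} [Fintype V] (S : SimpleGraph V) (hS : S.IsTree)
    (u v : V) (huv : u ≠ v) (hin : internalNodes S = {u, v}) :
    (S.neighborSet u).ncard + (S.neighborSet v).ncard = Fintype.card V := by
  classical
  have hdeg : ∀ w, (S.neighborSet w).ncard = S.degree w := by
    intro w
    rw [Set.ncard_eq_toFinset_card']
    rfl
  have hsum : ∑ w, S.degree w = 2 * S.edgeFinset.card :=
    S.sum_degrees_eq_twice_card_edges
  have hcard : S.edgeFinset.card + 1 = Fintype.card V := hS.card_edgeFinset
  have hleaf : ∀ w, w ≠ u → w ≠ v → S.degree w = 1 := by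
    intro w hwu hwv
    have : w ∉ internalNodes S := by
      rw [hin]; simp [hwu, hwv]
    have h1 : (S.neighborSet w).ncard = 1 := by
      by_contra h; exact this h
    rw [← hdeg w]; exact h1
  have hsplit : ∑ w, S.degree w =
      ∑ w ∈ ({u, v} : Finset V), S.degree w + ∑ w ∈ Finset.univ \ {u, v}, S.degree w := by
    rw [← Finset.sum_union (Finset.disjoint_sdiff)]
    congr 1
    rw [Finset.union_sdiff_of_subset (Finset.subset_univ _)]
  have hpair : ∑ w ∈ ({u, v} : Finset V), S.degree w = S.degree u + S.degree v :=
    Finset.sum_pair huv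
  have hrest : ∑ w ∈ Finset.univ \ {u, v}, S.degree w = (Finset.univ \ ({u, v} : Finset V)).card := by
    rw [Finset.card_eq_sum_ones]
    apply Finset.sum_congr rfl
    intro w hw
    simp only [Finset.mem_sdiff, Finset.mem_insert, Finset.mem_singleton] at hw
    push_neg at hw
    exact hleaf w hw.2.1 hw.2.2
  have hcard2 : (Finset.univ \ ({u, v} : Finset V)).card = Fintype.card V - 2 := by
    rw [Finset.card_sdiff_of_subset (Finset.subset_univ _), Finset.card_pair huv]
    rfl
  have hn2 : 2 ≤ Fintype.card V := Fintype.one_lt_card_iff_nontrivial.mpr ⟨u, v, huv⟩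
  rw [hdeg, hdeg]
  omega

lemma flip_deg {V : Type*} [Fintype V] (S S' : SimpleGraph V)
    (hflip : EdgeFlip S S') (x : V) :
    (S.neighborSet x).ncard ≤ (S'.neighborSet x).ncard + 1 := by
  obtain ⟨e, he, heS', f, hf, hfS, hedges⟩ := hflip
  set D := S.neighborSet x \ S'.neighborSet x with hD
  have hDe : ∀ w ∈ D, s(x, w) = e := by
    intro w hw
    obtain ⟨hw1, hw2⟩ := hw
    have hmem : s(x, w) ∈ S.edgeSet := hw1
    by_contra hne
    have : s(x, w) ∈ S'.edgeSet := by
      rw [hedges]; left; exact ⟨hmem, hne⟩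
    exact hw2 this
  have hDsub : D.Subsingleton := by
    intro w hw w' hw'
    have h1 := hDe w hw
    have h2 := hDe w' hw'
    rw [← h2] at h1
    rw [Sym2.eq_iff] at h1
    rcases h1 with ⟨_, h⟩ | ⟨hxw, hx⟩
    · exact h
    · rw [hx, hxw]
  have hDcard : D.ncard ≤ 1 := (Set.ncard_le_one (Set.toFinite _)).mpr (fun a ha b hb => hDsub ha hb)
  have hsub : S.neighborSet x ⊆ S'.neighborSet x ∪ D := by
    intro w hw
    by_cases h : w ∈ S'.neighborSet x
    · exact Or.inl h
    · exact Or.inr ⟨hw, h⟩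
  calc (S.neighborSet x).ncard ≤ (S'.neighborSet x ∪ D).ncard :=
        Set.ncard_le_ncard hsub (Set.toFinite _)
    _ ≤ (S'.neighborSet x).ncard + D.ncard := Set.ncard_union_le _ _
    _ ≤ (S'.neighborSet x).ncard + 1 := by omega

lemma step_preserves {V : Type*} [Fintype V] (G : SimpleGraph V) (u v : V) (huv : u ≠ v)
    (hu : (G.neighborSet u).ncard ≤ Fintype.card V - 3)
    (hv : (G.neighborSet v).ncard ≤ Fintype.card V - 3)
    (S S' : SimpleGraph V)
    (hS : IsSpanningTree G S) (hS' : IsSpanningTree G S')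
    (hP' : (internalNodes S').ncard ≤ 2)
    (hflip : EdgeFlip S S')
    (hin : internalNodes S = {u, v}) : internalNodes S' = {u, v} := by
  have hsum := tree_deg_sum S hS.2 u v huv hin
  have hmono : ∀ x, (S.neighborSet x).ncard ≤ (G.neighborSet x).ncard := by
    intro x
    exact Set.ncard_le_ncard (fun w hw => hS.1 hw) (Set.toFinite _)
  have hn1 : 1 ≤ Fintype.card V := Fintype.card_pos_iff.mpr ⟨u⟩
  have hu3 : 3 ≤ (S.neighborSet u).ncard := by
    have := hmono u; have := hmono v; omega
  have hv3 : 3 ≤ (S.neighborSet v).ncard := by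
    have := hmono u; have := hmono v; omega
  have hu' : 2 ≤ (S'.neighborSet u).ncard := by
    have := flip_deg S S' hflip u; omega
  have hv' : 2 ≤ (S'.neighborSet v).ncard := by
    have := flip_deg S S' hflip v; omega
  have hsubset : ({u, v} : Set V) ⊆ internalNodes S' := by
    intro x hx
    rcases hx with rfl | rfl
    · exact fun h => by omega
    · exact fun h => by omega
  have hpair : ({u, v} : Set V).ncard = 2 := Set.ncard_pair huv
  exact (Set.eq_of_subset_of_ncard_le hsubset (by omega) (Set.toFinite _)).symm

/-- If a spanning tree `T` has exactly two internal nodes `u, v`, both of degree at most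
`n - 3` in `G`, then `T` is frozen: every spanning tree reachable from `T` by a
transformation in which every tree has at most two internal nodes has internal
nodes exactly `{u, v}`. -/
theorem two_internal_nodes_frozen
    {V : Type*} [Fintype V] (G : SimpleGraph V) (hG : G.Connected)
    (T : SimpleGraph V) (hT : IsSpanningTree G T)
    (u v : V) (huv : u ≠ v)
    (hin : internalNodes T = {u, v})
    (hu : (G.neighborSet u).ncard ≤ Fintype.card V - 3)
    (hv : (G.neighborSet v).ncard ≤ Fintype.card V - 3)
    (T' : SimpleGraph V)
    (hreach : Transformable G (fun S => (internalNodes S).ncard ≤ 2) T T') :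
    internalNodes T' = {u, v} := by
  induction hreach with
  | refl => exact hin
  | tail _ hstep ih =>
    obtain ⟨hS, hS', _, hP', hflip⟩ := hstep
    exact step_preserves G u v huv hu hv _ _ hS hS' hP' hflip ih
end

section
/- Let G be a finite connected simple graph on n vertices and let u be a pivot vertex of G, i.e. deg_G(u) ≥ n − 2. Then any two spanning trees T and T' of G, each having at most two internal nodes and each having u as an internal node, are connected by a transformation in which every tree of the sequence has at most two internal nodes. -/
open SimpleGraph

namespace Pivot


variable {V : Type*}

/-- Double star: `u` adjacent to everything outside `A ∪ {u}`, `v` adjacent to `A`. -/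
def dstar (u v : V) (A : Set V) : SimpleGraph V where
  Adj a b := a ≠ b ∧ ((a = u ∧ b ∉ A) ∨ (b = u ∧ a ∉ A) ∨ (a = v ∧ b ∈ A) ∨ (b = v ∧ a ∈ A))
  symm := by constructor; rintro a b ⟨h, h2⟩; exact ⟨h.symm, by tauto⟩
  loopless := by constructor; rintro a ⟨h, _⟩; exact h rfl

lemma dstar_adj {u v : V} {A : Set V} {a b : V} :
    (dstar u v A).Adj a b ↔ a ≠ b ∧
      ((a = u ∧ b ∉ A) ∨ (b = u ∧ a ∉ A) ∨ (a = v ∧ b ∈ A) ∨ (b = v ∧ a ∈ A)) := Iff.rfl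

variable {u v : V} {A : Set V}

lemma dstar_adj_u (hA : u ∉ A) (huv : u ≠ v) {b : V} :
    (dstar u v A).Adj u b ↔ b ≠ u ∧ b ∉ A := by
  rw [dstar_adj]
  constructor
  · rintro ⟨h, (⟨_, hb⟩ | ⟨hb, _⟩ | ⟨h3, _⟩ | ⟨_, h4⟩)⟩
    · exact ⟨h.symm, hb⟩
    · exact absurd hb.symm h
    · exact absurd h3 huv
    · exact absurd h4 hA
  · rintro ⟨h1, h2⟩; exact ⟨h1.symm, Or.inl ⟨rfl, h2⟩⟩

lemma dstar_adj_v (hA : v ∉ A) (huv : u ≠ v) {b : V} :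
    (dstar u v A).Adj v b ↔ b = u ∨ b ∈ A := by
  rw [dstar_adj]
  constructor
  · rintro ⟨h, (⟨h1, _⟩ | ⟨hb, _⟩ | ⟨_, h3⟩ | ⟨_, h4⟩)⟩
    · exact absurd h1.symm huv
    · exact Or.inl hb
    · exact Or.inr h3
    · exact absurd h4 hA
  · rintro (rfl | hb)
    · exact ⟨fun h => huv h.symm, Or.inr (Or.inl ⟨rfl, hA⟩)⟩
    · exact ⟨fun h => hA (h ▸ hb), Or.inr (Or.inr (Or.inl ⟨rfl, hb⟩))⟩

lemma dstar_nb_mem (hu : u ∉ A) (hv : v ∉ A) {x : V} (hx : x ∈ A) :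
    (dstar u v A).neighborSet x = {v} := by
  ext b
  simp only [mem_neighborSet, dstar_adj, Set.mem_singleton_iff]
  constructor
  · rintro ⟨h, (⟨h1, _⟩ | ⟨_, h2⟩ | ⟨h3, _⟩ | ⟨hb, _⟩)⟩
    · exact absurd (h1 ▸ hx) hu
    · exact absurd hx h2
    · exact absurd (h3 ▸ hx) hv
    · exact hb
  · rintro rfl; exact ⟨fun h => hv (h ▸ hx), Or.inr (Or.inr (Or.inr ⟨rfl, hx⟩))⟩

lemma dstar_nb_notmem (hu : u ∉ A) {x : V} (hx : x ∉ A) (hxu : x ≠ u) (hxv : x ≠ v) :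
    (dstar u v A).neighborSet x = {u} := by
  ext b
  simp only [mem_neighborSet, dstar_adj, Set.mem_singleton_iff]
  constructor
  · rintro ⟨h, (⟨h1, _⟩ | ⟨hb, _⟩ | ⟨h3, _⟩ | ⟨_, h4⟩)⟩
    · exact absurd h1 hxu
    · exact hb
    · exact absurd h3 hxv
    · exact absurd h4 hx
  · rintro rfl; exact ⟨hxu, Or.inr (Or.inl ⟨rfl, hx⟩)⟩

variable {V : Type*} {u v : V} {A : Set V}

lemma internalNodes_def {T : SimpleGraph V} {x : V} :
    x ∈ internalNodes T ↔ (T.neighborSet x).ncard ≠ 1 := Iff.rfl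

lemma dstar_internal (hu : u ∉ A) (hv : v ∉ A) :
    internalNodes (dstar u v A) ⊆ {u, v} := by
  intro x hx
  by_contra hmem
  simp only [Set.mem_insert_iff, Set.mem_singleton_iff, not_or] at hmem
  obtain ⟨hxu, hxv⟩ := hmem
  by_cases hA : x ∈ A
  · exact hx (by rw [dstar_nb_mem hu hv hA]; exact Set.ncard_singleton v)
  · exact hx (by rw [dstar_nb_notmem hu hA hxu hxv]; exact Set.ncard_singleton u)

lemma dstar_internal_card (hu : u ∉ A) (hv : v ∉ A) :
    (internalNodes (dstar u v A)).ncard ≤ 2 := by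
  calc (internalNodes (dstar u v A)).ncard ≤ ({u, v} : Set V).ncard :=
        Set.ncard_le_ncard (dstar_internal hu hv) (Set.toFinite _)
    _ ≤ 2 := (Set.ncard_insert_le _ _).trans (by simp)

lemma dstar_connected (hu : u ∉ A) (hv : v ∉ A) (huv : u ≠ v) :
    (dstar u v A).Connected := by
  have key : ∀ b, (dstar u v A).Reachable u b := by
    intro b
    by_cases hb : b = u
    · subst hb; exact Reachable.refl b
    by_cases hbA : b ∈ A
    · have h1 : (dstar u v A).Adj u v := (dstar_adj_u hu huv).2 ⟨huv.symm, hv⟩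
      have h2 : (dstar u v A).Adj v b := (dstar_adj_v hv huv).2 (Or.inr hbA)
      exact h1.reachable.trans h2.reachable
    · exact ((dstar_adj_u hu huv).2 ⟨hb, hbA⟩).reachable
  have : Nonempty V := ⟨u⟩
  refine Connected.mk ?_
  intro a b
  exact (key a).symm.trans (key b)

lemma dstar_le {G : SimpleGraph V}
    (h1 : ∀ x, x ≠ u → x ∉ A → G.Adj u x) (h2 : ∀ x ∈ A, G.Adj v x) :
    dstar u v A ≤ G := by
  rintro a b ⟨hab, (⟨rfl, hb⟩ | ⟨rfl, ha⟩ | ⟨rfl, hb⟩ | ⟨rfl, ha⟩)⟩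
  · exact h1 b (fun h => hab h.symm) hb
  · exact (h1 a (fun h => hab h) ha).symm
  · exact h2 b hb
  · exact (h2 a ha).symm

lemma dstar_not_adj_both (hu : u ∉ A) (hv : v ∉ A) (huv : u ≠ v) (x : V) :
    ¬((dstar u v A).Adj x u ∧ (dstar u v A).Adj x v) := by
  rintro ⟨h1, h2⟩
  have hxu : x ≠ u := h1.ne
  have hxA : x ∉ A := by
    rcases h1.2 with ⟨rfl, _⟩ | ⟨_, h⟩ | ⟨rfl, h⟩ | ⟨h, _⟩
    · exact absurd rfl hxu
    · exact h
    · exact absurd h hu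
    · exact absurd h huv
  rcases h2.2 with ⟨rfl, _⟩ | ⟨h, _⟩ | ⟨rfl, _⟩ | ⟨_, h⟩
  · exact hxu rfl
  · exact absurd h huv.symm
  · exact h2.1 rfl
  · exact hxA h

lemma dstar_adj_touches {a b : V} (h : (dstar u v A).Adj a b) :
    a ∈ ({u, v} : Set V) ∨ b ∈ ({u, v} : Set V) := by
  rcases h.2 with ⟨rfl, _⟩ | ⟨rfl, _⟩ | ⟨rfl, _⟩ | ⟨rfl, _⟩ <;> simp


lemma cycle_two_neighbors {H : SimpleGraph V} {x : V} (c : H.Walk x x) (hc : c.IsCycle) :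
    ∃ y z, y ≠ z ∧ H.Adj x y ∧ H.Adj x z := by
  have hlen3 := hc.three_le_length
  have hdl : c.darts.length = c.length := Walk.length_darts c
  have hd : c.darts ≠ [] := by
    intro h
    rw [h] at hdl
    simp at hdl
    omega
  set d1 := c.darts.head hd with hd1
  set d2 := c.darts.getLast hd with hd2
  have h1 : d1.fst = x := by rw [hd1, Walk.head_darts_eq_firstDart]; rfl
  have h2 : d2.snd = x := by rw [hd2, Walk.getLast_darts_eq_lastDart]; rfl
  have had1 : H.Adj x d1.snd := h1 ▸ d1.adj
  have had2 : H.Adj x d2.fst := (h2 ▸ d2.adj).symm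
  refine ⟨d1.snd, d2.fst, ?_, had1, had2⟩
  intro heq
  have hedge : d1.edge = d2.edge := by
    rw [Dart.edge, Dart.edge]
    have e1 : d1.toProd = (x, d1.snd) := Prod.ext h1 rfl
    have e2 : d2.toProd = (d2.fst, x) := Prod.ext rfl h2
    rw [e1, e2, ← heq]
    exact Sym2.eq_swap
  have hnd := hc.edges_nodup
  have hinj := List.inj_on_of_nodup_map (l := c.darts) (f := Dart.edge) hnd
  have h12 : d1 = d2 := hinj (List.head_mem hd) (List.getLast_mem hd) hedge
  have hff : d1.fst = d2.fst := congrArg (fun d => d.toProd.1) h12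
  rw [h1] at hff
  exact had1.ne (by rw [heq]; exact hff)

lemma dstar_acyclic (hu : u ∉ A) (hv : v ∉ A) (huv : u ≠ v) :
    (dstar u v A).IsAcyclic := by
  classical
  intro a c hc
  have hnodup := hc.support_nodup
  have h3 := hc.three_le_length
  have hlen : c.support.tail.length = c.length := by
    have := Walk.length_support c
    have ht : c.support.tail.length = c.support.length - 1 := by
      cases h : c.support with
      | nil => exact absurd h (Walk.support_ne_nil c)
      | cons hd tl => simp [h]
    omega
  have hex : ∃ x ∈ c.support.tail, x ≠ u ∧ x ≠ v := by
    by_contra h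
    push_neg at h
    have hsub : c.support.tail.toFinset ⊆ {u, v} := by
      intro x hx
      rw [List.mem_toFinset] at hx
      rcases h x hx with h'
      by_cases hxu : x = u
      · simp [hxu]
      · simp [h' hxu]
    have hcard := List.toFinset_card_of_nodup hnodup
    have hle := Finset.card_le_card hsub
    have : ({u, v} : Finset V).card ≤ 2 := Finset.card_insert_le _ _ |>.trans (by simp)
    omega
  obtain ⟨x, hxt, hxu, hxv⟩ := hex
  have hxs : x ∈ c.support := List.mem_of_mem_tail hxt
  obtain ⟨y, z, hyz, hy, hz⟩ := cycle_two_neighbors (c.rotate x hxs) (hc.rotate hxs)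
  have hmem : ∀ {w}, (dstar u v A).Adj x w → w = u ∨ w = v := by
    intro w hw
    rcases dstar_adj_touches hw with h | h
    · rcases h with h | h
      · exact absurd h hxu
      · exact absurd h hxv
    · rcases h with h | h
      · exact Or.inl h
      · exact Or.inr h
  rcases hmem hy with rfl | rfl <;> rcases hmem hz with rfl | rfl
  · exact hyz rfl
  · exact dstar_not_adj_both hu hv huv x ⟨hy, hz⟩
  · exact dstar_not_adj_both hu hv huv x ⟨hz, hy⟩
  · exact hyz rfl

lemma dstar_isTree (hu : u ∉ A) (hv : v ∉ A) (huv : u ≠ v) :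
    (dstar u v A).IsTree :=
  ⟨dstar_connected hu hv huv, dstar_acyclic hu hv huv⟩


lemma flip1_edgeSet (hu : u ∉ A) (hv : v ∉ A) (huv : u ≠ v) {x : V} (hx : x ∈ A) :
    (dstar u v (A \ {x})).edgeSet = ((dstar u v A).edgeSet \ {s(v,x)}) ∪ {s(u,x)} := by
  have hxu : x ≠ u := fun h => hu (h ▸ hx)
  have hxv : x ≠ v := fun h => hv (h ▸ hx)
  ext e
  induction e with
  | _ a b =>
    simp only [Set.mem_union, Set.mem_diff, Set.mem_singleton_iff, mem_edgeSet, dstar_adj,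
      Sym2.eq_iff, Set.mem_diff, Set.mem_singleton_iff]
    constructor
    · rintro ⟨hab, (⟨rfl, hb⟩ | ⟨rfl, ha⟩ | ⟨rfl, hb⟩ | ⟨rfl, ha⟩)⟩
      · by_cases hbx : b = x
        · exact Or.inr (Or.inl ⟨rfl, hbx⟩)
        · refine Or.inl ⟨⟨hab, Or.inl ⟨rfl, fun hbA => hb ⟨hbA, hbx⟩⟩⟩, ?_⟩
          rintro (⟨h, _⟩ | ⟨h, _⟩)
          · exact huv h
          · exact hxu h.symm
      · by_cases hax : a = x
        · exact Or.inr (Or.inr ⟨hax, rfl⟩)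
        · refine Or.inl ⟨⟨hab, Or.inr (Or.inl ⟨rfl, fun haA => ha ⟨haA, hax⟩⟩)⟩, ?_⟩
          rintro (⟨_, h⟩ | ⟨h, _⟩)
          · exact hxu h.symm
          · exact hax h
      · refine Or.inl ⟨⟨hab, Or.inr (Or.inr (Or.inl ⟨rfl, hb.1⟩))⟩, ?_⟩
        rintro (⟨_, h⟩ | ⟨h, _⟩)
        · exact hb.2 h
        · exact hxv h.symm
      · refine Or.inl ⟨⟨hab, Or.inr (Or.inr (Or.inr ⟨rfl, ha.1⟩))⟩, ?_⟩
        rintro (⟨_, h⟩ | ⟨h, _⟩)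
        · exact hxv h.symm
        · exact ha.2 h
    · rintro (⟨⟨hab, (⟨rfl, hb⟩ | ⟨rfl, ha⟩ | ⟨rfl, hb⟩ | ⟨rfl, ha⟩)⟩, hne⟩ | (⟨rfl, rfl⟩ | ⟨rfl, rfl⟩))
      · exact ⟨hab, Or.inl ⟨rfl, fun h => hb h.1⟩⟩
      · exact ⟨hab, Or.inr (Or.inl ⟨rfl, fun h => ha h.1⟩)⟩
      · refine ⟨hab, Or.inr (Or.inr (Or.inl ⟨rfl, hb, ?_⟩))⟩
        intro hbx
        exact hne (Or.inl ⟨rfl, hbx⟩)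
      · refine ⟨hab, Or.inr (Or.inr (Or.inr ⟨rfl, ha, ?_⟩))⟩
        intro hax
        exact hne (Or.inr ⟨hax, rfl⟩)
      · exact ⟨hxu.symm, Or.inl ⟨rfl, fun h => h.2 rfl⟩⟩
      · exact ⟨hxu, Or.inr (Or.inl ⟨rfl, fun h => h.2 rfl⟩)⟩

lemma flip2_edgeSet {v' w : V} (hvu : v ≠ u) (hv'u : v' ≠ u) (hwu : w ≠ u)
    (hwv : w ≠ v) (hwv' : w ≠ v') :
    (dstar u v' {w}).edgeSet = ((dstar u v ({w} : Set V)).edgeSet \ {s(v,w)}) ∪ {s(v',w)} := by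
  ext e
  induction e with
  | _ a b =>
    simp only [Set.mem_union, Set.mem_diff, Set.mem_singleton_iff, mem_edgeSet, dstar_adj,
      Sym2.eq_iff, Set.mem_singleton_iff]
    constructor
    · rintro ⟨hab, (⟨rfl, hb⟩ | ⟨rfl, ha⟩ | ⟨rfl, rfl⟩ | ⟨rfl, rfl⟩)⟩
      · refine Or.inl ⟨⟨hab, Or.inl ⟨rfl, hb⟩⟩, ?_⟩
        rintro (⟨h, _⟩ | ⟨h, _⟩)
        · exact hvu h.symm
        · exact hwu h.symm
      · refine Or.inl ⟨⟨hab, Or.inr (Or.inl ⟨rfl, ha⟩)⟩, ?_⟩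
        rintro (⟨_, h⟩ | ⟨h, _⟩)
        · exact hwu h.symm
        · exact ha (by simp [h])
      · exact Or.inr (Or.inl ⟨rfl, rfl⟩)
      · exact Or.inr (Or.inr ⟨rfl, rfl⟩)
    · rintro (⟨⟨hab, (⟨rfl, hb⟩ | ⟨rfl, ha⟩ | ⟨rfl, rfl⟩ | ⟨rfl, rfl⟩)⟩, hne⟩ | (⟨rfl, rfl⟩ | ⟨rfl, rfl⟩))
      · exact ⟨hab, Or.inl ⟨rfl, hb⟩⟩
      · exact ⟨hab, Or.inr (Or.inl ⟨rfl, ha⟩)⟩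
      · exact absurd (Or.inl ⟨rfl, rfl⟩) hne
      · exact absurd (Or.inr ⟨rfl, rfl⟩) hne
      · exact ⟨hwv'.symm, Or.inr (Or.inr (Or.inl ⟨rfl, rfl⟩))⟩
      · exact ⟨hwv', Or.inr (Or.inr (Or.inr ⟨rfl, rfl⟩))⟩

lemma dstar_empty_eq (v' : V) : dstar u v (∅ : Set V) = dstar u v' ∅ := by
  ext a b
  simp only [dstar_adj, Set.mem_empty_iff_false, not_false_iff, and_true, and_false, or_false,
    false_or]


lemma flip1_step {G : SimpleGraph V} (hu : u ∉ A) (hv : v ∉ A) (huv : u ≠ v) {x : V}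
    (hx : x ∈ A) (hux : G.Adj u x)
    (h1 : ∀ y, y ≠ u → y ∉ A → G.Adj u y) (h2 : ∀ y ∈ A, G.Adj v y) :
    Step G (fun S => (internalNodes S).ncard ≤ 2) (dstar u v A) (dstar u v (A \ {x})) := by
  have hxu : x ≠ u := fun h => hu (h ▸ hx)
  have hxv : x ≠ v := fun h => hv (h ▸ hx)
  have huB : u ∉ A \ {x} := fun h => hu h.1
  have hvB : v ∉ A \ {x} := fun h => hv h.1
  refine ⟨⟨dstar_le h1 h2, dstar_isTree hu hv huv⟩, ⟨?_, dstar_isTree huB hvB huv⟩,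
    dstar_internal_card hu hv, dstar_internal_card huB hvB, ?_⟩
  · refine dstar_le (fun y hyu hyB => ?_) (fun y hy => h2 y hy.1)
    by_cases hyx : y = x
    · exact hyx ▸ hux
    · exact h1 y hyu (fun hyA => hyB ⟨hyA, hyx⟩)
  · refine ⟨s(v,x), ?_, ?_, s(u,x), ?_, ?_, flip1_edgeSet hu hv huv hx⟩
    · exact (SimpleGraph.mem_edgeSet _).2 ((dstar_adj_v hv huv).2 (Or.inr hx))
    · rw [mem_edgeSet]
      intro h
      rcases (dstar_adj_v hvB huv).1 h with h' | h'
      · exact hxu h'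
      · exact h'.2 rfl
    · exact (SimpleGraph.mem_edgeSet _).2 ((dstar_adj_u huB huv).2 ⟨hxu, fun h => h.2 rfl⟩)
    · rw [mem_edgeSet]
      intro h
      exact ((dstar_adj_u hu huv).1 h).2 hx

lemma flip2_step {G : SimpleGraph V} {v' w : V} (hvu : v ≠ u) (hv'u : v' ≠ u) (hwu : w ≠ u)
    (hwv : w ≠ v) (hwv' : w ≠ v') (hvv' : v ≠ v')
    (h1 : ∀ y, y ≠ u → y ∉ ({w} : Set V) → G.Adj u y) (h2 : G.Adj v w) (h2' : G.Adj v' w) :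
    Step G (fun S => (internalNodes S).ncard ≤ 2) (dstar u v ({w} : Set V)) (dstar u v' {w}) := by
  have huw : u ∉ ({w} : Set V) := fun h => hwu (by simpa using h.symm)
  have hvw : v ∉ ({w} : Set V) := fun h => hwv (by simpa using h.symm)
  have hv'w : v' ∉ ({w} : Set V) := fun h => hwv' (by simpa using h.symm)
  refine ⟨⟨dstar_le h1 (by simpa using h2), dstar_isTree huw hvw hvu.symm⟩,
    ⟨dstar_le h1 (by simpa using h2'), dstar_isTree huw hv'w hv'u.symm⟩,
    dstar_internal_card huw hvw, dstar_internal_card huw hv'w, ?_⟩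
  refine ⟨s(v,w), ?_, ?_, s(v',w), ?_, ?_, flip2_edgeSet hvu hv'u hwu hwv hwv'⟩
  · exact (SimpleGraph.mem_edgeSet _).2 ((dstar_adj_v hvw hvu.symm).2 (Or.inr rfl))
  · rw [mem_edgeSet]
    rintro ⟨hne, (⟨h, _⟩ | ⟨h, _⟩ | ⟨h, _⟩ | ⟨h, _⟩)⟩
    · exact hvu h
    · exact hwu h
    · exact hvv' h
    · exact hwv' h
  · exact (SimpleGraph.mem_edgeSet _).2 ((dstar_adj_v hv'w hv'u.symm).2 (Or.inr rfl))
  · rw [mem_edgeSet]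
    rintro ⟨hne, (⟨h, _⟩ | ⟨h, _⟩ | ⟨h, _⟩ | ⟨h, _⟩)⟩
    · exact hv'u h
    · exact hwu h
    · exact hvv' h.symm
    · exact hwv h


/-- Reachability stays inside an adjacency-closed set. -/
lemma closure_reach {H : SimpleGraph V} {S : Set V}
    (hS : ∀ x ∈ S, ∀ y, H.Adj x y → y ∈ S) {a b : V} (h : H.Reachable a b) (ha : a ∈ S) :
    b ∈ S := by
  obtain ⟨w⟩ := h
  induction w with
  | nil => exact ha
  | cons hadj p ih => exact ih (hS _ ha _ hadj)

lemma exists_adj_of_reachable {H : SimpleGraph V} {a b : V} (h : H.Reachable a b)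
    (hab : a ≠ b) : ∃ y, H.Adj a y := by
  obtain ⟨w⟩ := h
  cases w with
  | nil => exact absurd rfl hab
  | cons hadj p => exact ⟨_, hadj⟩

lemma ncard_one_of_mem {S : Set V} {a : V} (h : S.ncard = 1) (ha : a ∈ S) : S = {a} := by
  obtain ⟨c, rfl⟩ := Set.ncard_eq_one.1 h
  rw [Set.mem_singleton_iff] at ha
  rw [ha]

/-- In a connected graph on ≥ 3 vertices, every edge has an endpoint of degree ≠ 1. -/
lemma edge_endpoint_internal [Fintype V] (hn : 3 ≤ Fintype.card V) {T : SimpleGraph V}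
    (hT : T.Connected) {a b : V} (hab : T.Adj a b) :
    a ∈ internalNodes T ∨ b ∈ internalNodes T := by
  by_contra h
  push_neg at h
  obtain ⟨ha, hb⟩ := h
  rw [internalNodes_def, not_not] at ha hb
  have hNa : T.neighborSet a = {b} := ncard_one_of_mem ha hab
  have hNb : T.neighborSet b = {a} := ncard_one_of_mem hb hab.symm
  have hclosed : ∀ x ∈ ({a, b} : Set V), ∀ y, T.Adj x y → y ∈ ({a, b} : Set V) := by
    rintro x (rfl | rfl) y hy
    · have : y ∈ T.neighborSet x := hy
      rw [hNa] at this
      exact Or.inr this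
    · have : y ∈ T.neighborSet x := hy
      rw [hNb] at this
      exact Or.inl this
  have hall : ∀ z : V, z ∈ ({a, b} : Set V) := fun z =>
    closure_reach hclosed (hT.preconnected a z) (Or.inl rfl)
  have : (Set.univ : Set V) ⊆ {a, b} := fun z _ => hall z
  have hcard := Set.ncard_le_ncard this (Set.toFinite _)
  rw [Set.ncard_univ, Nat.card_eq_fintype_card] at hcard
  have : ({a, b} : Set V).ncard ≤ 2 := (Set.ncard_insert_le _ _).trans (by simp)
  omega

/-- Structure lemma: a spanning tree on ≥3 vertices whose internal nodes lie in {u, v}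
is the double star `dstar u v (N(v) \ {u})`. -/
lemma tree_eq_dstar [Fintype V] (hn : 3 ≤ Fintype.card V) {T : SimpleGraph V}
    (hT : T.IsTree) (huv : u ≠ v) (hint : internalNodes T ⊆ {u, v}) :
    T = dstar u v (T.neighborSet v \ {u}) := by
  have hconn := hT.isConnected
  set A := T.neighborSet v \ {u} with hA
  -- u and v are adjacent in T
  have hadj_uv : T.Adj u v := by
    by_contra huvadj
    have hclosed : ∀ x ∈ ({v} ∪ T.neighborSet v : Set V), ∀ y, T.Adj x y →
        y ∈ ({v} ∪ T.neighborSet v : Set V) := by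
      rintro x (rfl | hx) y hy
      · exact Or.inr hy
      · -- x is a neighbor of v, x ≠ u (else u ~ v), x ≠ v
        have hxu : x ≠ u := fun h => huvadj (h ▸ hx).symm
        have hxv : x ≠ v := fun h => T.irrefl (h ▸ hx)
        have hxint : x ∉ internalNodes T := fun h => by
          rcases hint h with h' | h'
          · exact hxu h'
          · exact hxv h'
        rw [internalNodes_def, not_not] at hxint
        have hNx : T.neighborSet x = {v} := ncard_one_of_mem hxint hx.symm
        have : y ∈ T.neighborSet x := hy
        rw [hNx] at this
        exact Or.inl this
    have := closure_reach hclosed (hconn.preconnected v u) (Or.inl rfl)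
    rcases this with h | h
    · exact huv h
    · exact huvadj h.symm
  -- leaves and their unique neighbors
  have hleaf : ∀ x : V, x ≠ u → x ≠ v → ∃ c, T.neighborSet x = {c} ∧ (c = u ∨ c = v) := by
    intro x hxu hxv
    have hxint : x ∉ internalNodes T := fun h => by
      rcases hint h with h' | h'
      · exact hxu h'
      · exact hxv h'
    rw [internalNodes_def, not_not] at hxint
    obtain ⟨c, hc⟩ := Set.ncard_eq_one.1 hxint
    refine ⟨c, hc, ?_⟩
    have hadj : T.Adj x c := by
      have : c ∈ T.neighborSet x := by rw [hc]; exact rfl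
      exact this
    rcases edge_endpoint_internal hn hconn hadj with h | h
    · exact absurd (hint h) (by
        rintro (rfl | rfl)
        · exact hxu rfl
        · exact hxv rfl)
    · rcases hint h with h' | h'
      · exact Or.inl h'
      · exact Or.inr h'
  -- now prove graph equality
  ext a b
  constructor
  · intro hab
    refine ⟨hab.ne, ?_⟩
    -- each edge touches u or v
    by_cases hau : a = u
    · subst hau
      refine Or.inl ⟨rfl, ?_⟩
      rintro ⟨hbv, hbu⟩
      -- b ~ v and b ~ a(=u) : b has two neighbors, so b internal, so b ∈ {u,v} ; but b ≠ u, and b = v impossible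
      have hbint : b ∈ internalNodes T := by
        rw [internalNodes_def]
        intro h1
        have := ncard_one_of_mem h1 hab.symm
        have hv' : (v : V) ∈ T.neighborSet b := hbv.symm
        rw [this] at hv'
        exact huv (Set.mem_singleton_iff.1 hv').symm
      rcases hint hbint with h | h
      · exact hbu h
      · exact T.irrefl (h ▸ hbv)
    by_cases hbu : b = u
    · subst hbu
      refine Or.inr (Or.inl ⟨rfl, ?_⟩)
      rintro ⟨hav, hau'⟩
      have haint : a ∈ internalNodes T := by
        rw [internalNodes_def]
        intro h1
        have := ncard_one_of_mem h1 hab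
        have hv' : (v : V) ∈ T.neighborSet a := hav.symm
        rw [this] at hv'
        exact huv (Set.mem_singleton_iff.1 hv').symm
      rcases hint haint with h | h
      · exact hau' h
      · exact T.irrefl (h ▸ hav)
    by_cases hav : a = v
    · subst hav
      exact Or.inr (Or.inr (Or.inl ⟨rfl, hab, hbu⟩))
    by_cases hbv : b = v
    · subst hbv
      exact Or.inr (Or.inr (Or.inr ⟨rfl, hab.symm, hau⟩))
    · -- both endpoints are leaves: contradiction
      exfalso
      rcases edge_endpoint_internal hn hconn hab with h | h
      · rcases hint h with h' | h'
        · exact hau h'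
        · exact hav h'
      · rcases hint h with h' | h'
        · exact hbu h'
        · exact hbv h'
  · rintro ⟨hab, (⟨rfl, hb⟩ | ⟨rfl, ha⟩ | ⟨rfl, hb⟩ | ⟨rfl, ha⟩)⟩
    · -- a = u, b ∉ A : T.Adj u b
      by_cases hbv : b = v
      · exact hbv ▸ hadj_uv
      obtain ⟨c, hNc, hc⟩ := hleaf b (fun h => hab h.symm) hbv
      rcases hc with rfl | rfl
      · have : c ∈ T.neighborSet b := by rw [hNc]; exact rfl
        exact this.symm
      · exfalso
        apply hb
        have hcb : c ∈ T.neighborSet b := by rw [hNc]; exact rfl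
        exact ⟨hcb.symm, fun h => hab h.symm⟩
    · by_cases hav : a = v
      · exact (hav ▸ hadj_uv).symm
      obtain ⟨c, hNc, hc⟩ := hleaf a (fun h => hab h) hav
      rcases hc with rfl | rfl
      · have : c ∈ T.neighborSet a := by rw [hNc]; exact rfl
        exact this
      · exfalso
        apply ha
        have hca : c ∈ T.neighborSet a := by rw [hNc]; exact rfl
        exact ⟨hca.symm, fun h => hab h⟩
    · exact hb.1
    · exact ha.1.symm


lemma edgeFlip_symm {T₁ T₂ : SimpleGraph V} (h : EdgeFlip T₁ T₂) : EdgeFlip T₂ T₁ := by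
  obtain ⟨e, he1, he2, f, hf2, hf1, heq⟩ := h
  refine ⟨f, hf2, hf1, e, he1, he2, ?_⟩
  rw [heq]
  ext g
  simp only [Set.mem_union, Set.mem_diff, Set.mem_singleton_iff]
  constructor
  · intro hg
    by_cases hge : g = e
    · exact Or.inr hge
    · exact Or.inl ⟨Or.inl ⟨hg, hge⟩, fun h => hf1 (h ▸ hg)⟩
  · rintro (⟨(⟨hg, _⟩ | rfl), hgf⟩ | rfl)
    · exact hg
    · exact absurd rfl hgf
    · exact he1

lemma step_symm {G : SimpleGraph V} {P : SimpleGraph V → Prop} {T₁ T₂ : SimpleGraph V}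
    (h : Step G P T₁ T₂) : Step G P T₂ T₁ :=
  ⟨h.2.1, h.1, h.2.2.2.1, h.2.2.1, edgeFlip_symm h.2.2.2.2⟩

lemma transformable_symm {G : SimpleGraph V} {P : SimpleGraph V → Prop} {T₁ T₂ : SimpleGraph V}
    (h : Transformable G P T₁ T₂) : Transformable G P T₂ T₁ := by
  induction h with
  | refl => exact Relation.ReflTransGen.refl
  | tail hs hstep ih => exact Relation.ReflTransGen.head (step_symm hstep) ih

lemma reduce [Fintype V] {G : SimpleGraph V} (huv : u ≠ v) :
    ∀ (n : ℕ) (B : Set V), B.ncard ≤ n → u ∉ B → v ∉ B →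
      (∀ y, y ≠ u → y ∉ B → G.Adj u y) → (∀ y ∈ B, G.Adj v y) →
      Transformable G (fun S => (internalNodes S).ncard ≤ 2)
        (dstar u v B) (dstar u v (B \ G.neighborSet u)) := by
  intro n
  induction n with
  | zero =>
    intro B hB huB hvB _ _
    have hBe : B = ∅ := Set.ncard_eq_zero (Set.toFinite _) |>.1 (Nat.le_zero.1 hB)
    rw [hBe, Set.empty_diff]
    exact Relation.ReflTransGen.refl
  | succ n ih =>
    intro B hB huB hvB h1 h2
    by_cases hBN : B ∩ G.neighborSet u = ∅
    · have : B \ G.neighborSet u = B := by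
        ext y
        simp only [Set.mem_diff]
        refine ⟨fun h => h.1, fun h => ⟨h, fun hN => ?_⟩⟩
        exact Set.eq_empty_iff_forall_notMem.1 hBN y ⟨h, hN⟩
      rw [this]
      exact Relation.ReflTransGen.refl
    · obtain ⟨x, hxB, hxN⟩ := Set.nonempty_iff_ne_empty.2 hBN
      have hstep := flip1_step huB hvB huv hxB hxN h1 h2
      have hcard : (B \ {x}).ncard ≤ n := by
        have h1' := Set.ncard_diff_singleton_of_mem hxB
        have h2' : 1 ≤ B.ncard := (Set.ncard_pos (Set.toFinite _)).2 ⟨x, hxB⟩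
        omega
      have hrec := ih (B \ {x}) hcard (fun h => huB h.1) (fun h => hvB h.1)
        (fun y hyu hyB => by
          by_cases hyx : y = x
          · exact hyx ▸ hxN
          · exact h1 y hyu (fun hyA => hyB ⟨hyA, hyx⟩))
        (fun y hy => h2 y hy.1)
      have heq : (B \ {x}) \ G.neighborSet u = B \ G.neighborSet u := by
        ext y
        simp only [Set.mem_diff, Set.mem_singleton_iff]
        constructor
        · rintro ⟨⟨h, _⟩, hN⟩
          exact ⟨h, hN⟩
        · rintro ⟨h, hN⟩
          exact ⟨⟨h, fun hyx => hN (hyx ▸ hxN)⟩, hN⟩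
      rw [heq] at hrec
      exact Relation.ReflTransGen.head hstep hrec

end Pivot

open Pivot

/-- If `u` is a pivot vertex of `G` (degree at least `n - 2`), then any two spanning
trees with at most two internal nodes that both have `u` as an internal node are
connected by a transformation in which every tree has at most two internal nodes. -/
theorem pivot_vertex_same_component
    {V : Type*} [Fintype V] (G : SimpleGraph V) (hG : G.Connected)
    (u : V) (hu : Fintype.card V - 2 ≤ (G.neighborSet u).ncard)
    (T T' : SimpleGraph V)
    (hT : IsSpanningTree G T) (hT' : IsSpanningTree G T')
    (hkT : (internalNodes T).ncard ≤ 2) (hkT' : (internalNodes T').ncard ≤ 2)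
    (huT : u ∈ internalNodes T) (huT' : u ∈ internalNodes T') :
    Transformable G (fun S => (internalNodes S).ncard ≤ 2) T T' := by
  classical
  have hpos : 1 ≤ Fintype.card V := by
    have : Nonempty V := ⟨u⟩
    exact Fintype.card_pos
  by_cases hbig : 3 ≤ Fintype.card V
  swap
  · -- small cases: T = T'
    have hTT : T = T' := by
      by_cases hone : Fintype.card V ≤ 1
      · have hsub : Subsingleton V := Fintype.card_le_one_iff_subsingleton.1 hone
        ext a b
        constructor
        · intro h; exact absurd (Subsingleton.elim a b) h.ne
        · intro h; exact absurd (Subsingleton.elim a b) h.ne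
      · -- card = 2 : contradiction with u internal
        exfalso
        obtain ⟨v0, hv0⟩ := Fintype.exists_ne_of_one_lt_card (by omega) u
        obtain ⟨y, hy⟩ := exists_adj_of_reachable
          (hT.2.isConnected.preconnected u v0) (fun h => hv0 h.symm)
        have hle : (T.neighborSet u).ncard ≤ 1 := by
          have hsub : T.neighborSet u ⊆ Set.univ \ {u} := fun z hz =>
            ⟨Set.mem_univ z, fun h => T.irrefl ((Set.mem_singleton_iff.1 h) ▸ hz)⟩
          have := Set.ncard_le_ncard hsub (Set.toFinite _)
          have hd := Set.ncard_diff (Set.singleton_subset_iff.2 (Set.mem_univ u))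
            (Set.toFinite _)
          rw [Set.ncard_univ, Nat.card_eq_fintype_card, Set.ncard_singleton] at hd
          omega
        have hge : 1 ≤ (T.neighborSet u).ncard :=
          (Set.ncard_pos (Set.toFinite _)).2 ⟨y, hy⟩
        exact huT (by omega)
    rw [hTT]
    exact Relation.ReflTransGen.refl
  · -- main case
    have hpick : ∀ T₀ : SimpleGraph V, (internalNodes T₀).ncard ≤ 2 → u ∈ internalNodes T₀ →
        ∃ v, v ≠ u ∧ internalNodes T₀ ⊆ {u, v} := by
      intro T₀ hk hu0
      by_cases hex : ∃ w ∈ internalNodes T₀, w ≠ u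
      · obtain ⟨w, hw, hwu⟩ := hex
        refine ⟨w, hwu, ?_⟩
        have hsub : ({u, w} : Set V) ⊆ internalNodes T₀ := by
          rintro x (rfl | rfl)
          · exact hu0
          · exact hw
        have heq := Set.eq_of_subset_of_ncard_le hsub
          (by rw [Set.ncard_pair (Ne.symm hwu)]; exact hk) (Set.toFinite _)
        rw [← heq]
      · push_neg at hex
        obtain ⟨w, hwu⟩ := Fintype.exists_ne_of_one_lt_card (by omega) u
        exact ⟨w, hwu, fun x hx => Or.inl (hex x hx)⟩
    obtain ⟨v, hvu, hintT⟩ := hpick T hkT huT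
    obtain ⟨v', hv'u, hintT'⟩ := hpick T' hkT' huT'
    set A := T.neighborSet v \ {u} with hAdef
    set A' := T'.neighborSet v' \ {u} with hA'def
    have hTeq : T = dstar u v A := tree_eq_dstar hbig hT.2 (Ne.symm hvu) hintT
    have hT'eq : T' = dstar u v' A' := tree_eq_dstar hbig hT'.2 (Ne.symm hv'u) hintT'
    have huA : u ∉ A := fun h => h.2 rfl
    have hvA : v ∉ A := fun h => T.irrefl h.1
    have huA' : u ∉ A' := fun h => h.2 rfl
    have hv'A' : v' ∉ A' := fun h => T'.irrefl h.1
    have h1 : ∀ y, y ≠ u → y ∉ A → G.Adj u y := fun y hyu hyA =>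
      hT.1 (by rw [hTeq]; exact (dstar_adj_u huA (Ne.symm hvu)).2 ⟨hyu, hyA⟩)
    have h2 : ∀ y ∈ A, G.Adj v y := fun y hy => hT.1 hy.1
    have h1' : ∀ y, y ≠ u → y ∉ A' → G.Adj u y := fun y hyu hyA =>
      hT'.1 (by rw [hT'eq]; exact (dstar_adj_u huA' (Ne.symm hv'u)).2 ⟨hyu, hyA⟩)
    have h2' : ∀ y ∈ A', G.Adj v' y := fun y hy => hT'.1 hy.1
    set N := G.neighborSet u with hNdef
    have hred : Transformable G (fun S => (internalNodes S).ncard ≤ 2)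
        (dstar u v A) (dstar u v (A \ N)) :=
      reduce (Ne.symm hvu) A.ncard A le_rfl huA hvA h1 h2
    have hred' : Transformable G (fun S => (internalNodes S).ncard ≤ 2)
        (dstar u v' A') (dstar u v' (A' \ N)) :=
      reduce (Ne.symm hv'u) A'.ncard A' le_rfl huA' hv'A' h1' h2'
    -- the set of non-neighbors of u (other than u) has at most one element
    set W := Set.univ \ insert u N with hWdef
    have huN : u ∉ N := fun h => G.irrefl h
    have hWcard : W.ncard ≤ 1 := by
      have hins : (insert u N).ncard = N.ncard + 1 := Set.ncard_insert_of_notMem huN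
        (Set.toFinite _)
      have hd := Set.ncard_diff (Set.subset_univ (insert u N)) (Set.toFinite _)
      rw [← hWdef] at hd
      have hle : (insert u N).ncard ≤ (Set.univ : Set V).ncard :=
        Set.ncard_le_ncard (Set.subset_univ _) (Set.toFinite _)
      rw [Set.ncard_univ, Nat.card_eq_fintype_card] at hd hle
      omega
    by_cases hAN : A \ N = ∅
    · have hA'N : A' \ N = ∅ := by
        by_contra h
        obtain ⟨w, hwA', hwN⟩ := Set.nonempty_iff_ne_empty.2 h
        have hwu : w ≠ u := fun h => huA' (h ▸ hwA')
        have hwA : w ∉ A := fun h =>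
          Set.eq_empty_iff_forall_notMem.1 hAN w ⟨h, hwN⟩
        exact hwN (h1 w hwu hwA)
      rw [hTeq, hT'eq]
      refine hred.trans ?_
      rw [hAN]
      rw [dstar_empty_eq v']
      rw [hA'N] at hred'
      exact transformable_symm hred'
    · obtain ⟨w, hwA, hwN⟩ := Set.nonempty_iff_ne_empty.2 hAN
      have hwu : w ≠ u := fun h => huA (h ▸ hwA)
      have hwW : w ∈ W := ⟨Set.mem_univ w, by
        rintro (h | h)
        · exact hwu h
        · exact hwN h⟩
      have hWw : W = {w} := by
        have := Set.eq_of_subset_of_ncard_le (Set.singleton_subset_iff.2 hwW)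
          (by rw [Set.ncard_singleton]; exact hWcard) (Set.toFinite _)
        exact this.symm
      have hsubW : ∀ y, y ≠ u → y ∉ N → y = w := by
        intro y hyu hyN
        have : y ∈ W := ⟨Set.mem_univ y, by
          rintro (h | h)
          · exact hyu h
          · exact hyN h⟩
        rw [hWw] at this
        exact this
      have hANw : A \ N = {w} := by
        apply Set.eq_singleton_iff_unique_mem.2
        refine ⟨⟨hwA, hwN⟩, fun y hy => hsubW y (fun h => huA (h ▸ hy.1)) hy.2⟩
      have hwA' : w ∈ A' := by
        by_contra h
        exact hwN (h1' w hwu h)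
      have hA'Nw : A' \ N = {w} := by
        apply Set.eq_singleton_iff_unique_mem.2
        refine ⟨⟨hwA', hwN⟩, fun y hy => hsubW y (fun h => huA' (h ▸ hy.1)) hy.2⟩
      rw [hTeq, hT'eq]
      rw [hANw] at hred
      rw [hA'Nw] at hred'
      by_cases hvv' : v = v'
      · subst hvv'
        exact hred.trans (transformable_symm hred')
      · have hwv : w ≠ v := fun h => hvA (h ▸ hwA)
        have hwv' : w ≠ v' := fun h => hv'A' (h ▸ hwA')
        have h1w : ∀ y, y ≠ u → y ∉ ({w} : Set V) → G.Adj u y := by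
          intro y hyu hyw
          by_contra hyN
          exact hyw (Set.mem_singleton_iff.2 (hsubW y hyu hyN))
        have hstep := flip2_step (G := G) hvu hv'u hwu hwv hwv' hvv' h1w
          (h2 w hwA) (h2' w hwA')
        exact hred.trans (Relation.ReflTransGen.head hstep (transformable_symm hred'))
end

section
/- Let G be a finite connected simple graph on n ≥ 4 vertices and let T₁ and T₂ be two spanning trees of G each having exactly one internal node (i.e. each is a spanning star). Then there exists a transformation from T₁ to T₂ in which every tree of the sequence has at most one internal node if and only if T₁ and T₂ have the same internal node. -/
open SimpleGraph

private lemma walk_closure {V : Type*} {T : SimpleGraph V} {u v : V}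
    (hu : T.neighborSet u = {v}) (hv : T.neighborSet v = {u}) :
    ∀ {a b : V}, T.Walk a b → (a = u ∨ a = v) → (b = u ∨ b = v) := by
  intro a b p
  induction p with
  | nil => exact id
  | @cons s m t h p ih =>
    intro hs
    apply ih
    rcases hs with rfl | rfl
    · right
      have hm : m ∈ T.neighborSet s := h
      rw [hu] at hm; exact hm
    · left
      have hm : m ∈ T.neighborSet s := h
      rw [hv] at hm; exact hm

private lemma star_char {V : Type*} [Fintype V]
    {T : SimpleGraph V} (hT : T.IsTree) {c : V}
    (hc : internalNodes T = {c}) (u v : V) :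
    T.Adj u v ↔ (u = c ∧ v ≠ c) ∨ (v = c ∧ u ≠ c) := by
  have leaf : ∀ w : V, w ≠ c → ∃ x, T.neighborSet w = {x} := by
    intro w hw
    have hwn : w ∉ internalNodes T := by rw [hc]; simpa using hw
    have : (T.neighborSet w).ncard = 1 := by
      by_contra h; exact hwn h
    exact Set.ncard_eq_one.mp this
  have adjc : ∀ w : V, w ≠ c → T.Adj w c := by
    intro w hw
    obtain ⟨x, hx⟩ := leaf w hw
    have hwx : T.Adj w x := by
      have : x ∈ T.neighborSet w := by rw [hx]; rfl
      exact this
    by_cases hxc : x = c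
    · rwa [hxc] at hwx
    · exfalso
      obtain ⟨y, hy⟩ := leaf x hxc
      have hwin : w ∈ T.neighborSet x := hwx.symm
      rw [hy] at hwin
      have hy' : T.neighborSet x = {w} := by rw [hy, hwin]
      obtain ⟨p⟩ := hT.isConnected.preconnected w c
      rcases walk_closure hx hy' p (Or.inl rfl) with h1 | h1
      · exact hw h1.symm
      · exact hxc h1.symm
  constructor
  · intro h
    by_cases hu : u = c
    · subst hu
      exact Or.inl ⟨rfl, h.ne'⟩
    · obtain ⟨x, hx⟩ := leaf u hu
      have hvx : v = x := by
        have : v ∈ T.neighborSet u := h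
        rw [hx] at this; exact this
      have hcx : c = x := by
        have : c ∈ T.neighborSet u := adjc u hu
        rw [hx] at this; exact this
      exact Or.inr ⟨by rw [hvx, ← hcx], hu⟩
  · rintro (⟨rfl, hv⟩ | ⟨rfl, hu⟩)
    · exact (adjc v hv).symm
    · exact adjc u hu

private lemma exists_center {V : Type*} [Fintype V] (h3 : 3 ≤ Fintype.card V)
    {T : SimpleGraph V} (hT : T.IsTree)
    (hk : (internalNodes T).ncard ≤ 1) : ∃ c, internalNodes T = {c} := by
  classical
  rcases Nat.lt_or_ge (internalNodes T).ncard 1 with h | h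
  · exfalso
    have h0 : internalNodes T = ∅ := (Set.ncard_eq_zero (Set.toFinite _)).mp (by omega)
    have leaf : ∀ w : V, ∃ x, T.neighborSet w = {x} := by
      intro w
      have : w ∉ internalNodes T := by rw [h0]; exact Set.notMem_empty w
      have : (T.neighborSet w).ncard = 1 := by
        by_contra hh; exact this hh
      exact Set.ncard_eq_one.mp this
    have : Nonempty V := by
      rw [← Fintype.card_pos_iff]; omega
    obtain ⟨u⟩ := this
    obtain ⟨v, hv⟩ := leaf u
    obtain ⟨w, hw⟩ := leaf v
    have huv : T.Adj u v := by
      have : v ∈ T.neighborSet u := by rw [hv]; rfl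
      exact this
    have hwu : w = u := by
      have : u ∈ T.neighborSet v := huv.symm
      rw [hw] at this; exact this.symm
    subst hwu
    obtain ⟨x, hx⟩ : ∃ x : V, x ∉ ({w, v} : Finset V) := by
      by_contra hcon
      push_neg at hcon
      have hsub : (Finset.univ : Finset V) ⊆ {w, v} := fun z _ => hcon z
      have h1 := Finset.card_le_card hsub
      have h2 : ({w, v} : Finset V).card ≤ 2 := (Finset.card_insert_le w {v}).trans (by simp)
      simp only [Finset.card_univ] at h1
      omega
    simp only [Finset.mem_insert, Finset.mem_singleton, not_or] at hx
    obtain ⟨p⟩ := hT.isConnected.preconnected w x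
    rcases walk_closure hv hw p (Or.inl rfl) with h1 | h1
    · exact hx.1 h1
    · exact hx.2 h1
  · exact Set.ncard_eq_one.mp (le_antisymm hk h)
private lemma step_eq {V : Type*} [Fintype V] (hn : 4 ≤ Fintype.card V)
    {G T₁ T₂ : SimpleGraph V}
    (h : Step G (fun S => (internalNodes S).ncard ≤ 1) T₁ T₂) :
    internalNodes T₁ = internalNodes T₂ := by
  classical
  obtain ⟨hs1, hs2, hp1, hp2, e, he1, he2, f, hf2, hf1, hE⟩ := h
  have h3 : 3 ≤ Fintype.card V := by omega
  obtain ⟨c₁, hc₁⟩ := exists_center h3 hs1.2 hp1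
  obtain ⟨c₂, hc₂⟩ := exists_center h3 hs2.2 hp2
  rw [hc₁, hc₂]
  by_contra hne
  have hcc : c₁ ≠ c₂ := fun hq => hne (by rw [hq])
  obtain ⟨x, hx⟩ : ∃ x : V, x ∉ ({c₁, c₂} : Finset V) := by
    by_contra hcon
    push_neg at hcon
    have h1 := Finset.card_le_card (fun z _ => hcon z : (Finset.univ : Finset V) ⊆ {c₁, c₂})
    have h2 : ({c₁, c₂} : Finset V).card ≤ 2 := (Finset.card_insert_le c₁ {c₂}).trans (by simp)
    simp only [Finset.card_univ] at h1
    omega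
  obtain ⟨y, hy⟩ : ∃ y : V, y ∉ ({c₁, c₂, x} : Finset V) := by
    by_contra hcon
    push_neg at hcon
    have h1 := Finset.card_le_card (fun z _ => hcon z : (Finset.univ : Finset V) ⊆ {c₁, c₂, x})
    have h2 : ({c₁, c₂, x} : Finset V).card ≤ 3 :=
      (Finset.card_insert_le c₁ {c₂, x}).trans
        (by simpa using Nat.succ_le_succ ((Finset.card_insert_le c₂ {x}).trans (c := 2) (by simp)))
    simp only [Finset.card_univ] at h1
    omega
  simp only [Finset.mem_insert, Finset.mem_singleton, not_or] at hx hy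
  have key : ∀ z : V, z ≠ c₁ → z ≠ c₂ → s(c₁, z) = e := by
    intro z hz1 hz2
    have h1 : s(c₁, z) ∈ T₁.edgeSet := by
      rw [SimpleGraph.mem_edgeSet]
      exact (star_char hs1.2 hc₁ c₁ z).mpr (Or.inl ⟨rfl, hz1⟩)
    have h2 : s(c₁, z) ∉ T₂.edgeSet := by
      rw [SimpleGraph.mem_edgeSet, star_char hs2.2 hc₂ c₁ z]
      rintro (⟨h, -⟩ | ⟨h, -⟩)
      · exact hcc h
      · exact hz2 h
    by_contra hne'
    exact h2 (by rw [hE]; exact Or.inl ⟨h1, hne'⟩)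
  have hxy : s(c₁, x) = s(c₁, y) := (key x hx.1 hx.2).trans (key y hy.1 hy.2.1).symm
  rw [Sym2.eq_iff] at hxy
  rcases hxy with ⟨-, h⟩ | ⟨h, -⟩
  · exact hy.2.2 h.symm
  · exact hy.1 h.symm

/-- On a connected graph with at least four vertices, two spanning stars (spanning trees
with exactly one internal node) are connected by a transformation keeping at most one
internal node if and only if they have the same internal node. -/
theorem spanning_star_reconfiguration_iff
    {V : Type*} [Fintype V] (hn : 4 ≤ Fintype.card V)
    (G : SimpleGraph V) (hG : G.Connected)
    (T₁ T₂ : SimpleGraph V)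
    (h₁ : IsSpanningTree G T₁) (h₂ : IsSpanningTree G T₂)
    (hk₁ : (internalNodes T₁).ncard = 1) (hk₂ : (internalNodes T₂).ncard = 1) :
    Transformable G (fun S => (internalNodes S).ncard ≤ 1) T₁ T₂ ↔
      internalNodes T₁ = internalNodes T₂ := by
  constructor
  · intro h
    clear hk₂ h₂
    induction h with
    | refl => rfl
    | tail _ hstep ih => exact ih.trans (step_eq hn hstep)
  · intro h
    obtain ⟨c, hc⟩ := Set.ncard_eq_one.mp hk₁
    have hc₂' : internalNodes T₂ = {c} := by rw [← h]; exact hc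
    have hT : T₁ = T₂ := by
      ext u v
      rw [star_char h₁.2 hc u v, star_char h₂.2 hc₂' u v]
    rw [hT]
    exact Relation.ReflTransGen.refl
end

section
/- Let G be a finite simple graph that is the join of two graphs on disjoint nonempty vertex sets A and B (i.e. every vertex of A is adjacent in G to every vertex of B), and let T be a spanning tree of G whose set of internal nodes meets both A and B. Then there exists a transformation from T to a spanning tree T' of G having at most two internal nodes, one in A and one in B, such that every tree S of the sequence satisfies in(S) ⊆ in(T). -/
open SimpleGraph

namespace JoinTransformAux

variable {V : Type*}

lemma reachable_trans_of_adj {S S' : SimpleGraph V}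
    (h : ∀ u v, S.Adj u v → S'.Reachable u v) {u v : V}
    (huv : S.Reachable u v) : S'.Reachable u v := by
  obtain ⟨p⟩ := huv
  induction p with
  | nil => exact Reachable.refl _
  | cons ha _ ih => exact (h _ _ ha).trans ih

lemma neighborSet_nonempty_of_connected {S : SimpleGraph V} (hS : S.Connected)
    {x y : V} (hxy : x ≠ y) (v : V) : (S.neighborSet v).Nonempty := by
  rcases eq_or_ne v x with rfl | hvx
  · obtain ⟨p⟩ := hS.preconnected v y
    cases p with
    | nil => exact absurd rfl hxy
    | cons ha _ => exact ⟨_, ha⟩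
  · obtain ⟨p⟩ := hS.preconnected v x
    cases p with
    | nil => exact absurd rfl hvx
    | cons ha _ => exact ⟨_, ha⟩

lemma last_edge {S : SimpleGraph V} {u w : V} (p : S.Walk u w) (h : u ≠ w) :
    ∃ x, S.Adj w x ∧ s(w, x) ∈ p.edges := by
  induction p with
  | nil => exact absurd rfl h
  | @cons u x w' ha q ih =>
    rcases eq_or_ne x w' with rfl | hxw
    · exact ⟨u, ha.symm, by simp [Sym2.eq_swap]⟩
    · obtain ⟨z, h1, h2⟩ := ih hxw
      exact ⟨z, h1, by simp [h2]⟩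

lemma adj_of_length_one {S : SimpleGraph V} {u w : V} (p : S.Walk u w)
    (h : p.length = 1) : S.Adj u w := by
  cases p with
  | nil => simp at h
  | cons ha q =>
    cases q with
    | nil => exact ha
    | cons _ _ => simp [SimpleGraph.Walk.length_cons] at h

lemma reach_split {S S' : SimpleGraph V} {x y : V}
    (hsub : S.edgeSet \ {s(x, y)} ⊆ S'.edgeSet) :
    ∀ {c w : V} (p : S.Walk c w), p.IsPath → s(x, y) ∈ p.edges →
      (S'.Reachable c x ∧ S'.Reachable y w) ∨ (S'.Reachable c y ∧ S'.Reachable x w) := by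
  intro c w p
  induction p with
  | nil => intro _ he; simp at he
  | @cons c d w ha q ih =>
    intro hp he
    rw [SimpleGraph.Walk.edges_cons, List.mem_cons] at he
    by_cases hcd : s(c, d) = s(x, y)
    · have hq : s(x, y) ∉ q.edges := by
        have hnd := hp.isTrail.edges_nodup
        rw [SimpleGraph.Walk.edges_cons] at hnd
        rw [← hcd]
        exact (List.nodup_cons.mp hnd).1
      have hqr : S'.Reachable d w := by
        refine ⟨q.transfer S' fun e' he' => hsub ⟨q.edges_subset_edgeSet he', ?_⟩⟩
        intro hmem
        rw [Set.mem_singleton_iff] at hmem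
        exact hq (hmem ▸ he')
      rcases Sym2.eq_iff.mp hcd with ⟨rfl, rfl⟩ | ⟨rfl, rfl⟩
      · exact Or.inl ⟨Reachable.refl _, hqr⟩
      · exact Or.inr ⟨Reachable.refl _, hqr⟩
    · have he' : s(x, y) ∈ q.edges := he.resolve_left fun h => hcd h.symm
      have hcd' : S'.Reachable c d := by
        have h2 : s(c, d) ∈ S'.edgeSet := hsub ⟨ha, by simpa using hcd⟩
        rw [SimpleGraph.mem_edgeSet] at h2
        exact h2.reachable
      rcases ih hp.of_cons he' with ⟨h1, h2⟩ | ⟨h1, h2⟩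
      · exact Or.inl ⟨hcd'.trans h1, h2⟩
      · exact Or.inr ⟨hcd'.trans h1, h2⟩

lemma dstar_walk_length {T' : SimpleGraph V} {A B : Set V} {a b : V}
    (hd : Disjoint A B) (haA : a ∈ A) (hbB : b ∈ B)
    (habs : ∀ u v, T'.Adj u v ↔ u ≠ v ∧
      ((u = a ∧ v ∈ B) ∨ (v = a ∧ u ∈ B) ∨ (u = b ∧ v ∈ A) ∨ (v = b ∧ u ∈ A)))
    {w : V} (hw : w ∈ B) (p : T'.Walk a w) (hp : p.IsPath) : p.length = 1 := by
  have naB : a ∉ B := Set.disjoint_left.mp hd haA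
  have nbA : b ∉ A := Set.disjoint_right.mp hd hbB
  cases p with
  | nil => exact absurd hw naB
  | @cons _ x _ h1 q =>
    have hxB : x ∈ B := by
      rcases (habs a x).mp h1 with ⟨hne, ⟨_, h⟩ | ⟨_, h⟩ | ⟨h, _⟩ | ⟨h, _⟩⟩
      · exact h
      · exact absurd h naB
      · exact absurd (h ▸ hbB : a ∈ B) naB
      · exact h ▸ hbB
    cases q with
    | nil => simp
    | @cons _ y _ h2 r =>
      exfalso
      have hnd := hp.support_nodup
      rw [SimpleGraph.Walk.support_cons, SimpleGraph.Walk.support_cons,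
        List.nodup_cons] at hnd
      obtain ⟨hanotin, hnd2⟩ := hnd
      rw [List.nodup_cons] at hnd2
      obtain ⟨hxnotin, _⟩ := hnd2
      have hya : y ≠ a := by
        intro h
        exact hanotin (by
          right
          exact h ▸ r.start_mem_support)
      have hxbyA : x = b ∧ y ∈ A := by
        rcases (habs x y).mp h2 with ⟨hne, ⟨h, _⟩ | ⟨h, hb'⟩ | h | ⟨_, h⟩⟩
        · exact absurd (h ▸ hxB) naB
        · exact absurd h hya
        · exact h
        · exact absurd (Set.mem_inter h hxB) (by rw [Set.disjoint_iff_inter_eq_empty] at hd; simp [hd])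
      obtain ⟨hxb, hyA⟩ := hxbyA
      cases r with
      | nil => exact absurd (Set.mem_inter hyA hw) (by rw [Set.disjoint_iff_inter_eq_empty] at hd; simp [hd])
      | @cons _ z _ h3 r' =>
        have hz : z = b := by
          rcases (habs y z).mp h3 with ⟨hne, ⟨h, _⟩ | ⟨_, h⟩ | ⟨h, _⟩ | ⟨h, _⟩⟩
          · exact absurd h hya
          · exact absurd (Set.mem_inter hyA h) (by rw [Set.disjoint_iff_inter_eq_empty] at hd; simp [hd])
          · exact absurd (h ▸ hyA) nbA
          · exact h
        apply hxnotin
        rw [SimpleGraph.Walk.support_cons]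
        right
        rw [hxb, ← hz]
        exact r'.start_mem_support
      
lemma step_core [Fintype V] {G T T' S : SimpleGraph V} {A B : Set V} {a b : V}
    (hd : Disjoint A B) (haA : a ∈ A) (hbB : b ∈ B)
    (hjoin : ∀ x ∈ A, ∀ y ∈ B, G.Adj x y)
    (habs : ∀ u v, T'.Adj u v ↔ u ≠ v ∧
      ((u = a ∧ v ∈ B) ∨ (v = a ∧ u ∈ B) ∨ (u = b ∧ v ∈ A) ∨ (v = b ∧ u ∈ A)))
    (haT : a ∈ internalNodes T) (hbT : b ∈ internalNodes T)
    (hS : IsSpanningTree G S) (hin : internalNodes S ⊆ internalNodes T)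
    {w : V} (hwB : w ∈ B) (hfT' : s(a, w) ∈ T'.edgeSet) (hfS : s(a, w) ∉ S.edgeSet) :
    ∃ S', Step G (fun X => internalNodes X ⊆ internalNodes T) S S' ∧
      S'.edgeSet \ T'.edgeSet ⊂ S.edgeSet \ T'.edgeSet := by
  classical
  obtain ⟨hle, htree⟩ := hS
  have hconn : S.Connected := htree.isConnected
  have naB : a ∉ B := Set.disjoint_left.mp hd haA
  have naw : a ≠ w := fun h => naB (h ▸ hwB)
  obtain ⟨p0⟩ := hconn.preconnected a w
  obtain ⟨pw, hpw⟩ := p0.toPath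
  -- find the edge e = s(x,y) to remove
  have hkey : ∃ e, e ∈ pw.edges ∧ e ∉ T'.edgeSet ∧ (w ∉ internalNodes T → w ∈ e) := by
    obtain ⟨x, hwx, hex⟩ := last_edge pw naw
    by_cases hLT : s(w, x) ∈ T'.edgeSet
    · -- then w = b, so w is internal in T; find any non-T' edge on the path
      have hwb : w = b := by
        rw [SimpleGraph.mem_edgeSet] at hLT
        rcases (habs w x).mp hLT with ⟨hne, ⟨h, _⟩ | ⟨h, _⟩ | ⟨h, _⟩ | ⟨_, h⟩⟩
        · exact absurd (h ▸ hwB) naB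
        · exfalso
          apply hfS
          subst h
          exact S.mem_edgeSet.mpr hwx.symm
        · exact h
        · exact absurd hwB (Set.disjoint_left.mp hd h)
      have hwT : w ∈ internalNodes T := hwb ▸ hbT
      by_contra hcon
      have hall : ∀ e ∈ pw.edges, e ∈ T'.edgeSet := by
        intro e he
        by_contra heT
        exact hcon ⟨e, he, heT, fun h => absurd hwT h⟩
      have hlen := dstar_walk_length hd haA hbB habs hwB (pw.transfer T' hall)
        (hpw.transfer hall)
      rw [SimpleGraph.Walk.length_transfer] at hlen
      exact hfS (S.mem_edgeSet.mpr (adj_of_length_one pw hlen))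
    · exact ⟨s(w, x), hex, hLT, fun _ => Sym2.mem_mk_left w x⟩
  rw [Sym2.exists] at hkey
  obtain ⟨x, y, hepw0, heT', hwe0⟩ := hkey
  have heS : s(x, y) ∈ S.edgeSet := pw.edges_subset_edgeSet hepw0
  have hxy : S.Adj x y := pw.adj_of_mem_edges hepw0
  obtain ⟨S', hS'edge⟩ : ∃ S' : SimpleGraph V,
      S'.edgeSet = S.edgeSet \ {s(x, y)} ∪ {s(a, w)} := by
    refine ⟨fromEdgeSet (S.edgeSet \ {s(x, y)} ∪ {s(a, w)}), ?_⟩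
    rw [SimpleGraph.edgeSet_fromEdgeSet]
    apply sdiff_eq_self_iff_disjoint.mpr
    rw [Set.disjoint_left]
    rintro z hz1 (⟨h1, _⟩ | h1)
    · exact (SimpleGraph.not_isDiag_of_mem_edgeSet S h1) hz1
    · rw [Set.mem_singleton_iff] at h1
      subst h1
      exact naw (Sym2.mk_isDiag_iff.mp hz1)
  have hsub : S.edgeSet \ {s(x, y)} ⊆ S'.edgeSet := by
    rw [hS'edge]; exact Set.subset_union_left
  have hfS' : s(a, w) ∈ S'.edgeSet := by
    rw [hS'edge]; exact Or.inr rfl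
  have hS'aw : S'.Adj a w := S'.mem_edgeSet.mp hfS'
  have hxyR : S'.Reachable x y := by
    rcases reach_split hsub pw hpw hepw0 with ⟨h1, h2⟩ | ⟨h1, h2⟩
    · exact h1.symm.trans (hS'aw.reachable.trans h2.symm)
    · exact h2.trans (hS'aw.reachable.symm.trans h1)
  have hpre : ∀ u v, S.Adj u v → S'.Reachable u v := by
    intro u v huv
    by_cases h : s(u, v) = s(x, y)
    · rcases Sym2.eq_iff.mp h with ⟨rfl, rfl⟩ | ⟨rfl, rfl⟩
      · exact hxyR
      · exact hxyR.symm
    · have h2 : s(u, v) ∈ S'.edgeSet := hsub ⟨huv, by simpa using h⟩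
      exact (S'.mem_edgeSet.mp h2).reachable
  have hS'conn : S'.Connected := by
    have : Nonempty V := hconn.nonempty
    exact ⟨fun u v => reachable_trans_of_adj hpre (hconn.preconnected u v)⟩
  have hS'acyc : S'.IsAcyclic := by
    intro v cyc hcyc
    by_cases hfc : s(a, w) ∈ cyc.edges
    · have hre := (adj_and_reachable_delete_edges_iff_exists_cycle (G := S')).mpr
        ⟨v, cyc, hcyc, hfc⟩
      obtain ⟨q⟩ := hre.2
      have hdel : (S' \ fromEdgeSet {s(a, w)}).edgeSet = S'.edgeSet \ {s(a, w)} := by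
        rw [SimpleGraph.edgeSet_sdiff, SimpleGraph.edgeSet_fromEdgeSet]
        exact SimpleGraph.edgeSet_sdiff_sdiff_isDiag S' {s(a, w)}
      have hqe : ∀ e' ∈ q.edges, e' ∈ S.edgeSet ∧ e' ≠ s(x, y) := by
        intro e' he'
        have h1 := q.edges_subset_edgeSet he'
        rw [SimpleGraph.edgeSet_deleteEdges, hS'edge] at h1
        obtain ⟨h1, h2⟩ := h1
        rcases h1 with ⟨h3, h4⟩ | h3
        · exact ⟨h3, by simpa using h4⟩
        · exact absurd h3 h2
      obtain ⟨q', hq'e⟩ : ∃ q' : S.Walk a w, q'.edges = q.edges :=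
        ⟨q.transfer S (fun e' he' => (hqe e' he').1), q.edges_transfer _⟩
      have huniq := (isAcyclic_iff_path_unique.mp htree.IsAcyclic)
        ⟨pw, hpw⟩ q'.toPath
      have hmem : s(x, y) ∈ (q'.toPath : S.Walk a w).edges := by
        rw [← huniq]; exact hepw0
      have hmem2 := SimpleGraph.Walk.edges_toPath_subset q' hmem
      rw [hq'e] at hmem2
      exact (hqe _ hmem2).2 rfl
    · have hsubS : ∀ e' ∈ cyc.edges, e' ∈ S.edgeSet := by
        intro e' he'
        have h1 := cyc.edges_subset_edgeSet he'
        rw [hS'edge] at h1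
        rcases h1 with ⟨h1, _⟩ | h1
        · exact h1
        · rw [Set.mem_singleton_iff] at h1
          exact absurd (h1 ▸ he') hfc
      exact htree.IsAcyclic (cyc.transfer S hsubS) (hcyc.transfer hsubS)
  have hS'le : S' ≤ G := by
    rw [← SimpleGraph.edgeSet_subset_edgeSet, hS'edge]
    rintro z (⟨hz, _⟩ | hz)
    · exact SimpleGraph.edgeSet_mono hle hz
    · rw [Set.mem_singleton_iff] at hz
      subst hz
      exact G.mem_edgeSet.mpr (hjoin a haA w hwB)
  have hinS' : internalNodes S' ⊆ internalNodes T := by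
    intro v hv
    by_contra hvT
    have hvnotS : v ∉ internalNodes S := fun h => hvT (hin h)
    have hvS : (S.neighborSet v).ncard = 1 := not_not.mp hvnotS
    have hva : v ≠ a := fun h => hvT (h ▸ haT)
    apply hv
    show (S'.neighborSet v).ncard = 1
    rcases eq_or_ne v w with hvw | hvw
    · subst hvw
      have hnsS : ∃ z, S.neighborSet v = {z} ∧ s(v, z) = s(x, y) := by
        obtain ⟨z, hz⟩ := Set.ncard_eq_one.mp hvS
        refine ⟨z, hz, ?_⟩
        rcases Sym2.mem_iff.mp (hwe0 hvT) with h | h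
        · have h3 : y ∈ S.neighborSet v := by rw [h]; exact hxy
          rw [hz, Set.mem_singleton_iff] at h3
          rw [h, ← h3]
        · have h3 : x ∈ S.neighborSet v := by rw [h]; exact hxy.symm
          rw [hz, Set.mem_singleton_iff] at h3
          rw [h, ← h3, Sym2.eq_swap]
      obtain ⟨z, hz, hvz⟩ := hnsS
      have hns : S'.neighborSet v = {a} := by
        ext u
        simp only [SimpleGraph.mem_neighborSet, Set.mem_singleton_iff]
        constructor
        · intro hu
          have h2 := S'.mem_edgeSet.mpr hu
          rw [hS'edge] at h2
          rcases h2 with ⟨h1, h2⟩ | h1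
          · exfalso
            apply h2
            have h3 : u ∈ S.neighborSet v := S.mem_edgeSet.mp h1
            rw [hz, Set.mem_singleton_iff] at h3
            rw [Set.mem_singleton_iff, h3]
            exact hvz
          · rcases Sym2.eq_iff.mp (Set.mem_singleton_iff.mp h1) with ⟨h3, _⟩ | ⟨_, h4⟩
            · exact absurd h3 (Ne.symm naw)
            · exact h4
        · rintro rfl
          exact hS'aw.symm
      rw [hns]
      exact Set.ncard_singleton a
    · have hsub2 : S'.neighborSet v ⊆ S.neighborSet v := by
        intro u hu
        have h2 := S'.mem_edgeSet.mpr hu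
        rw [hS'edge] at h2
        rcases h2 with ⟨h2, _⟩ | h2
        · exact S.mem_edgeSet.mp h2
        · exfalso
          rcases Sym2.eq_iff.mp (Set.mem_singleton_iff.mp h2) with ⟨h3, _⟩ | ⟨h3, _⟩
          · exact hva h3
          · exact hvw h3
      have hne : (S'.neighborSet v).Nonempty := neighborSet_nonempty_of_connected hS'conn naw v
      have hle1 : (S'.neighborSet v).ncard ≤ 1 := hvS ▸ Set.ncard_le_ncard hsub2 (Set.toFinite _)
      have hge1 : 0 < (S'.neighborSet v).ncard := (Set.ncard_pos (Set.toFinite _)).mpr hne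
      omega
  have heS' : s(x, y) ∉ S'.edgeSet := by
    rw [hS'edge]
    rintro (⟨_, h2⟩ | h2)
    · exact h2 rfl
    · rw [Set.mem_singleton_iff] at h2
      exact hfS (h2 ▸ heS)
  have hmeas : S'.edgeSet \ T'.edgeSet ⊂ S.edgeSet \ T'.edgeSet := by
    constructor
    · rintro z ⟨hz1, hz2⟩
      rw [hS'edge] at hz1
      rcases hz1 with ⟨h1, _⟩ | h1
      · exact ⟨h1, hz2⟩
      · rw [Set.mem_singleton_iff] at h1
        subst h1
        exact absurd hfT' hz2
    · intro hcon
      exact heS' (hcon ⟨heS, heT'⟩).1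
  exact ⟨S', ⟨⟨hle, htree⟩, ⟨hS'le, ⟨hS'conn, hS'acyc⟩⟩, hin, hinS',
    ⟨s(x, y), heS, heS', s(a, w), hfS', hfS, hS'edge⟩⟩, hmeas⟩

lemma step_lemma [Fintype V] {G T T' S : SimpleGraph V} {A B : Set V} {a b : V}
    (hd : Disjoint A B) (haA : a ∈ A) (hbB : b ∈ B)
    (hjoin : ∀ x ∈ A, ∀ y ∈ B, G.Adj x y)
    (habs : ∀ u v, T'.Adj u v ↔ u ≠ v ∧
      ((u = a ∧ v ∈ B) ∨ (v = a ∧ u ∈ B) ∨ (u = b ∧ v ∈ A) ∨ (v = b ∧ u ∈ A)))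
    (haT : a ∈ internalNodes T) (hbT : b ∈ internalNodes T)
    (hS : IsSpanningTree G S) (hin : internalNodes S ⊆ internalNodes T)
    {c w : V} (hcw : T'.Adj c w) (hfS : s(c, w) ∉ S.edgeSet) :
    ∃ S', Step G (fun X => internalNodes X ⊆ internalNodes T) S S' ∧
      S'.edgeSet \ T'.edgeSet ⊂ S.edgeSet \ T'.edgeSet := by
  have habs' : ∀ u v, T'.Adj u v ↔ u ≠ v ∧
      ((u = b ∧ v ∈ A) ∨ (v = b ∧ u ∈ A) ∨ (u = a ∧ v ∈ B) ∨ (v = a ∧ u ∈ B)) := by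
    intro u v
    rw [habs u v]
    tauto
  have hjoin' : ∀ x ∈ B, ∀ y ∈ A, G.Adj x y := fun x hx y hy => (hjoin y hy x hx).symm
  rcases (habs c w).mp hcw with ⟨hne, ⟨h1, h2⟩ | ⟨h1, h2⟩ | ⟨h1, h2⟩ | ⟨h1, h2⟩⟩
  · subst h1
    exact step_core hd haA hbB hjoin habs haT hbT hS hin h2
      (T'.mem_edgeSet.mpr hcw) hfS
  · subst h1
    rw [Sym2.eq_swap] at hfS
    exact step_core hd haA hbB hjoin habs haT hbT hS hin h2
      (by rw [Sym2.eq_swap]; exact T'.mem_edgeSet.mpr hcw) hfS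
  · subst h1
    exact step_core hd.symm hbB haA hjoin' habs' hbT haT hS hin h2
      (T'.mem_edgeSet.mpr hcw) hfS
  · subst h1
    rw [Sym2.eq_swap] at hfS
    exact step_core hd.symm hbB haA hjoin' habs' hbT haT hS hin h2
      (by rw [Sym2.eq_swap]; exact T'.mem_edgeSet.mpr hcw) hfS

lemma main [Fintype V] {G T T' : SimpleGraph V} {A B : Set V} {a b : V}
    (hd : Disjoint A B) (haA : a ∈ A) (hbB : b ∈ B) (hcov : A ∪ B = Set.univ)
    (hjoin : ∀ x ∈ A, ∀ y ∈ B, G.Adj x y)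
    (habs : ∀ u v, T'.Adj u v ↔ u ≠ v ∧
      ((u = a ∧ v ∈ B) ∨ (v = a ∧ u ∈ B) ∨ (u = b ∧ v ∈ A) ∨ (v = b ∧ u ∈ A)))
    (haT : a ∈ internalNodes T) (hbT : b ∈ internalNodes T)
    (hT'conn : T'.Connected) :
    ∀ n (S : SimpleGraph V), (S.edgeSet \ T'.edgeSet).ncard = n →
      IsSpanningTree G S → internalNodes S ⊆ internalNodes T →
      ∃ T'', IsSpanningTree G T'' ∧ internalNodes T'' ⊆ {a, b} ∧
        Transformable G (fun X => internalNodes X ⊆ internalNodes T) S T'' := by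
  classical
  intro n
  induction n using Nat.strong_induction_on with
  | _ n ih =>
    intro S hn hS hin
    by_cases hdone : internalNodes S ⊆ {a, b}
    · exact ⟨S, hS, hdone, Relation.ReflTransGen.refl⟩
    have hab : a ≠ b := fun h => Set.disjoint_left.mp hd haA (h ▸ hbB)
    have hf : ∃ c w, T'.Adj c w ∧ s(c, w) ∉ S.edgeSet := by
      by_contra hcon
      push_neg at hcon
      by_cases hrev : S.edgeSet ⊆ T'.edgeSet
      · apply hdone
        intro v hv
        by_contra hvab
        simp only [Set.mem_insert_iff, Set.mem_singleton_iff, not_or] at hvab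
        obtain ⟨hva, hvb⟩ := hvab
        exfalso
        apply hv
        show (S.neighborSet v).ncard = 1
        have hsing : ∃ t, S.neighborSet v ⊆ {t} := by
          have hv2 : v ∈ A ∪ B := hcov ▸ Set.mem_univ v
          rcases hv2 with hvA | hvB
          · refine ⟨b, ?_⟩
            intro u hu
            have h2 : T'.Adj v u := T'.mem_edgeSet.mp (hrev (S.mem_edgeSet.mpr hu))
            rcases (habs v u).mp h2 with ⟨_, ⟨h, _⟩ | ⟨_, h⟩ | ⟨h, _⟩ | ⟨h, _⟩⟩
            · exact absurd h hva
            · exact absurd h (Set.disjoint_left.mp hd hvA)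
            · exact absurd h hvb
            · exact Set.mem_singleton_iff.mpr h
          · refine ⟨a, ?_⟩
            intro u hu
            have h2 : T'.Adj v u := T'.mem_edgeSet.mp (hrev (S.mem_edgeSet.mpr hu))
            rcases (habs v u).mp h2 with ⟨_, ⟨h, _⟩ | ⟨h, _⟩ | ⟨h, _⟩ | ⟨_, h⟩⟩
            · exact absurd h hva
            · exact Set.mem_singleton_iff.mpr h
            · exact absurd h hvb
            · exact absurd h (Set.disjoint_right.mp hd hvB)
        obtain ⟨t, ht⟩ := hsing
        have h1 : (S.neighborSet v).Nonempty :=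
          neighborSet_nonempty_of_connected hS.2.isConnected hab v
        have h2 : (S.neighborSet v).ncard ≤ 1 := by
          have := Set.ncard_le_ncard ht (Set.toFinite _)
          simpa using this
        have h3 := (Set.ncard_pos (Set.toFinite _)).mpr h1
        omega
      · obtain ⟨e, heS, heT'⟩ := (Set.not_subset).mp hrev
        have hTS : ∀ e' ∈ T'.edgeSet, e' ∈ S.edgeSet := by
          intro e' he'
          revert he'
          induction e' using Sym2.ind with
          | _ u v =>
            intro he'
            exact hcon u v (T'.mem_edgeSet.mp he')
        revert heS heT'
        induction e using Sym2.ind with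
        | _ x y =>
          intro heS heT'
          have hxy : S.Adj x y := S.mem_edgeSet.mp heS
          obtain ⟨q0⟩ := hT'conn.preconnected x y
          obtain ⟨q, hqe⟩ : ∃ q : S.Walk x y, ∀ e' ∈ q.edges, e' ∈ T'.edgeSet :=
            ⟨q0.transfer S (fun e' he' => hTS e' (q0.edges_subset_edgeSet he')), by
              intro e' he'
              rw [q0.edges_transfer] at he'
              exact q0.edges_subset_edgeSet he'⟩
          have huniq := (isAcyclic_iff_path_unique.mp hS.2.IsAcyclic)
            (Path.singleton hxy) q.toPath
          have hmem : s(x, y) ∈ (q.toPath : S.Walk x y).edges := by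
            rw [← huniq]
            simp [Path.singleton]
          have h5 := SimpleGraph.Walk.edges_toPath_subset q hmem
          exact heT' (hqe _ h5)
    obtain ⟨c, w, hcw, hfs⟩ := hf
    obtain ⟨S', hstep, hlt⟩ := step_lemma hd haA hbB hjoin habs haT hbT hS hin hcw hfs
    have hlt' : (S'.edgeSet \ T'.edgeSet).ncard < n :=
      hn ▸ Set.ncard_lt_ncard hlt (Set.toFinite _)
    obtain ⟨T'', h1, h2, h3⟩ := ih _ hlt' S' rfl hstep.2.1 hstep.2.2.2.1
    exact ⟨T'', h1, h2, Relation.ReflTransGen.head hstep h3⟩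

end JoinTransformAux

/-- If `G` is the join of two graphs on nonempty vertex sets `A` and `B`, and `T` is a
spanning tree whose internal nodes meet both `A` and `B`, then `T` can be transformed,
never creating a new internal node, into a spanning tree with at most two internal
nodes, one in `A` and one in `B`. -/
theorem join_transform_to_two_internal_nodes
    {V : Type*} [Fintype V] (G : SimpleGraph V) (A B : Set V)
    (hA : A.Nonempty) (hB : B.Nonempty) (hd : Disjoint A B)
    (hcov : A ∪ B = Set.univ)
    (hjoin : ∀ a ∈ A, ∀ b ∈ B, G.Adj a b)
    (T : SimpleGraph V) (hT : IsSpanningTree G T)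
    (hTA : (internalNodes T ∩ A).Nonempty) (hTB : (internalNodes T ∩ B).Nonempty) :
    ∃ T' : SimpleGraph V, ∃ a ∈ A, ∃ b ∈ B,
      IsSpanningTree G T' ∧ internalNodes T' ⊆ {a, b} ∧
      Transformable G (fun S => internalNodes S ⊆ internalNodes T) T T' := by
  classical
  obtain ⟨a, haT, haA⟩ := hTA
  obtain ⟨b, hbT, hbB⟩ := hTB
  have haB : a ∉ B := Set.disjoint_left.mp hd haA
  have hbA : b ∉ A := Set.disjoint_right.mp hd hbB
  have hab : a ≠ b := fun h => haB (h ▸ hbB)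
  let T' : SimpleGraph V :=
    { Adj := fun u v => u ≠ v ∧
        ((u = a ∧ v ∈ B) ∨ (v = a ∧ u ∈ B) ∨ (u = b ∧ v ∈ A) ∨ (v = b ∧ u ∈ A)),
      symm := by
        constructor; rintro u v ⟨h1, h2⟩
        exact ⟨h1.symm, by tauto⟩,
      loopless := ⟨fun v h => h.1 rfl⟩ }
  have habs : ∀ u v, T'.Adj u v ↔ u ≠ v ∧
      ((u = a ∧ v ∈ B) ∨ (v = a ∧ u ∈ B) ∨ (u = b ∧ v ∈ A) ∨ (v = b ∧ u ∈ A)) :=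
    fun u v => Iff.rfl
  have hT'conn : T'.Connected := by
    have hreach : ∀ v, T'.Reachable v b := by
      intro v
      have hv : v ∈ A ∪ B := hcov ▸ Set.mem_univ v
      rcases hv with hvA | hvB
      · have h1 : T'.Adj v b :=
          ⟨fun h => hbA (h ▸ hvA), Or.inr (Or.inr (Or.inr ⟨rfl, hvA⟩))⟩
        exact h1.reachable
      · rcases eq_or_ne v b with rfl | hvb
        · exact Reachable.refl _
        · have h1 : T'.Adj v a := ⟨fun h => haB (h ▸ hvB), Or.inr (Or.inl ⟨rfl, hvB⟩)⟩
          have h2 : T'.Adj a b := ⟨hab, Or.inl ⟨rfl, hbB⟩⟩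
          exact h1.reachable.trans h2.reachable
    have : Nonempty V := ⟨a⟩
    exact ⟨fun u v => (hreach u).trans (hreach v).symm⟩
  obtain ⟨T'', h1, h2, h3⟩ := JoinTransformAux.main hd haA hbB hcov hjoin habs haT hbT
    hT'conn _ T rfl hT (fun _ h => h)
  exact ⟨T'', a, haA, b, hbB, h1, h2, h3⟩
end

section
/- Let G be a finite connected simple graph, let T be a spanning tree of G, and let u and v be two distinct internal nodes of T such that the closed neighborhood of u in G is contained in the closed neighborhood of v in G (N_G[u] ⊆ N_G[v]). Then there exists a transformation from T to a spanning tree T' with in(T') ⊆ in(T) \ {u}, such that every tree S of the sequence satisfies in(S) ⊆ in(T). In particular, T does not minimize the number of internal nodes within its edge-flip reconfiguration class with threshold |in(T)|. -/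
open SimpleGraph

lemma reach_trans_aux {V : Type*} {A B : SimpleGraph V}
    (h : ∀ x y, A.Adj x y → B.Reachable x y) {x y : V} (hr : A.Reachable x y) :
    B.Reachable x y := by
  obtain ⟨p⟩ := hr
  induction p with
  | nil => exact Reachable.refl _
  | cons ha _ ih => exact (h _ _ ha).trans ih

lemma sdiff_single_adj {V : Type*} {A : SimpleGraph V} {e : Sym2 V} {x y : V} :
    (A \ fromEdgeSet {e}).Adj x y ↔ A.Adj x y ∧ s(x,y) ≠ e := by
  simp only [sdiff_adj, fromEdgeSet_adj, Set.mem_singleton_iff, not_and, not_not]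
  constructor
  · rintro ⟨h1, h2⟩
    refine ⟨h1, fun hc => h1.ne (h2 hc)⟩
  · rintro ⟨h1, h2⟩
    exact ⟨h1, fun hc => absurd hc h2⟩

lemma flip_lemma {V : Type*} {G S : SimpleGraph V} (hSG : S ≤ G) (hS : S.IsTree)
    {u v w : V} (huv : u ≠ v) (huw : S.Adj u w) (hGvw : G.Adj v w)
    (hreach : (S \ fromEdgeSet {s(u,w)}).Reachable u v) :
    ∃ S' : SimpleGraph V, S' ≤ G ∧ S'.IsTree ∧
      S'.edgeSet = (S.edgeSet \ {s(u,w)}) ∪ {s(v,w)} ∧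
      (¬ S.Adj v w) ∧
      S'.neighborSet u = S.neighborSet u \ {w} ∧
      S'.neighborSet v = insert w (S.neighborSet v) ∧
      S'.neighborSet w = insert v (S.neighborSet w \ {u}) ∧
      (∀ x, x ≠ u → x ≠ v → x ≠ w → S'.neighborSet x = S.neighborSet x) := by
  have huw' : u ≠ w := huw.ne
  have hvw' : v ≠ w := hGvw.ne
  have hbridge : ¬ (S \ fromEdgeSet {s(u,w)}).Reachable u w :=
    ((isBridge_iff).mp (isAcyclic_iff_forall_adj_isBridge.mp hS.IsAcyclic huw))
  have hvw : ¬ S.Adj v w := by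
    intro hc
    apply hbridge
    refine hreach.trans ?_
    refine Adj.reachable (sdiff_single_adj.mpr ⟨hc, ?_⟩)
    intro h; rw [Sym2.eq_iff] at h
    rcases h with ⟨h1, _⟩ | ⟨h1, _⟩
    · exact huv h1.symm
    · exact hvw' h1
  refine ⟨fromEdgeSet ((S.edgeSet \ {s(u,w)}) ∪ {s(v,w)}), ?_⟩
  set S' : SimpleGraph V := fromEdgeSet ((S.edgeSet \ {s(u,w)}) ∪ {s(v,w)}) with hS'def
  have hS'adj : ∀ x y : V, S'.Adj x y ↔
      ((S.Adj x y ∧ s(x,y) ≠ s(u,w)) ∨ s(x,y) = s(v,w)) := by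
    intro x y
    rw [hS'def, fromEdgeSet_adj]
    constructor
    · rintro ⟨h1, h2⟩
      rcases h1 with ⟨h1, h3⟩ | h1
      · exact Or.inl ⟨h1, h3⟩
      · exact Or.inr h1
    · rintro (⟨h1, h2⟩ | h1)
      · exact ⟨Or.inl ⟨h1, h2⟩, h1.ne⟩
      · refine ⟨Or.inr h1, ?_⟩
        rw [Sym2.eq_iff] at h1
        rcases h1 with ⟨rfl, rfl⟩ | ⟨rfl, rfl⟩
        · exact hvw'
        · exact hvw'.symm
  have hedge : S'.edgeSet = (S.edgeSet \ {s(u,w)}) ∪ {s(v,w)} := by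
    rw [hS'def, edgeSet_fromEdgeSet, sdiff_eq_left]
    rw [Set.disjoint_left]
    rintro e' (⟨h1, _⟩ | h1)
    · exact fun hd => not_isDiag_of_mem_edgeSet S h1 hd
    · rw [Set.mem_singleton_iff] at h1
      subst h1
      simpa [Sym2.isDiag_iff_proj_eq] using hvw'
  have hdelle : (S \ fromEdgeSet {s(u,w)}) ≤ S' := by
    intro x y h
    rw [sdiff_single_adj] at h
    exact (hS'adj x y).mpr (Or.inl h)
  have hadj'vw : S'.Adj v w := (hS'adj v w).mpr (Or.inr rfl)
  have hruw : S'.Reachable u w :=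
    (Reachable.mono hdelle hreach).trans hadj'vw.reachable
  have hle : S' ≤ G := by
    intro x y h
    rcases (hS'adj x y).mp h with ⟨h1, _⟩ | h1
    · exact hSG h1
    · rw [Sym2.eq_iff] at h1
      rcases h1 with ⟨rfl, rfl⟩ | ⟨rfl, rfl⟩
      · exact hGvw
      · exact hGvw.symm
  have hconn : S'.Connected := by
    have hne : Nonempty V := hS.isConnected.nonempty
    refine Connected.mk ?_
    intro x y
    refine reach_trans_aux ?_ (hS.isConnected.preconnected x y)
    intro a b hab
    by_cases hab' : s(a,b) = s(u,w)
    · rw [Sym2.eq_iff] at hab'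
      rcases hab' with ⟨rfl, rfl⟩ | ⟨rfl, rfl⟩
      · exact hruw
      · exact hruw.symm
    · exact Adj.reachable ((hS'adj a b).mpr (Or.inl ⟨hab, hab'⟩))
  have hacyc : S'.IsAcyclic := by
    intro x c hc
    by_cases hfc : s(v,w) ∈ c.edges
    · have h2 : (S' \ fromEdgeSet {s(v,w)}).Reachable v w :=
        (adj_and_reachable_delete_edges_iff_exists_cycle.mpr ⟨x, c, hc, hfc⟩).2
      have hle2 : (S' \ fromEdgeSet {s(v,w)}) ≤ (S \ fromEdgeSet {s(u,w)}) := by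
        intro a b hab
        rw [sdiff_single_adj] at hab ⊢
        rcases (hS'adj a b).mp hab.1 with ⟨h1, h3⟩ | h1
        · exact ⟨h1, h3⟩
        · exact absurd h1 hab.2
      exact hbridge (hreach.trans (Reachable.mono hle2 h2))
    · have hsub : ∀ e' ∈ c.edges, e' ∈ S.edgeSet := by
        intro e' he'
        have := c.edges_subset_edgeSet he'
        rw [hedge] at this
        rcases this with ⟨h1, _⟩ | h1
        · exact h1
        · rw [Set.mem_singleton_iff] at h1
          exact absurd (h1 ▸ he') hfc
      exact hS.IsAcyclic _ (hc.transfer hsub)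
  refine ⟨hle, ⟨hconn, hacyc⟩, hedge, hvw, ?_, ?_, ?_, ?_⟩
  · ext y
    rw [mem_neighborSet, hS'adj, Set.mem_diff, Set.mem_singleton_iff, ← mem_neighborSet]
    constructor
    · rintro (⟨h1, h2⟩ | h1)
      · refine ⟨h1, fun hy => h2 ?_⟩
        rw [hy]
      · rw [Sym2.eq_iff] at h1
        rcases h1 with ⟨h1, _⟩ | ⟨h1, _⟩
        · exact absurd h1 huv
        · exact absurd h1 huw'
    · rintro ⟨h1, h2⟩
      refine Or.inl ⟨h1, fun hc => ?_⟩
      rw [Sym2.eq_iff] at hc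
      rcases hc with ⟨_, h3⟩ | ⟨h3, _⟩
      · exact h2 h3
      · exact huw' h3
  · ext y
    rw [mem_neighborSet, hS'adj, Set.mem_insert_iff, ← mem_neighborSet]
    constructor
    · rintro (⟨h1, _⟩ | h1)
      · exact Or.inr h1
      · rw [Sym2.eq_iff] at h1
        rcases h1 with ⟨_, h2⟩ | ⟨h1, _⟩
        · exact Or.inl h2
        · exact absurd h1 hvw'
    · rintro (rfl | h1)
      · exact Or.inr rfl
      · refine Or.inl ⟨h1, fun hc => ?_⟩
        rw [Sym2.eq_iff] at hc
        rcases hc with ⟨h3, _⟩ | ⟨h3, _⟩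
        · exact huv h3.symm
        · exact hvw' h3
  · ext y
    rw [mem_neighborSet, hS'adj, Set.mem_insert_iff, Set.mem_diff,
      Set.mem_singleton_iff, ← mem_neighborSet]
    constructor
    · rintro (⟨h1, h2⟩ | h1)
      · refine Or.inr ⟨h1, fun hy => h2 ?_⟩
        rw [hy, Sym2.eq_iff]
        exact Or.inr ⟨rfl, rfl⟩
      · rw [Sym2.eq_iff] at h1
        rcases h1 with ⟨h1, _⟩ | ⟨_, h2⟩
        · exact absurd h1 hvw'.symm
        · exact Or.inl h2
    · rintro (rfl | ⟨h1, h2⟩)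
      · refine Or.inr ?_
        rw [Sym2.eq_iff]
        exact Or.inr ⟨rfl, rfl⟩
      · refine Or.inl ⟨h1, fun hc => ?_⟩
        rw [Sym2.eq_iff] at hc
        rcases hc with ⟨h3, _⟩ | ⟨_, h4⟩
        · exact huw' h3.symm
        · exact h2 h4
  · intro x hxu hxv hxw
    ext y
    rw [mem_neighborSet, hS'adj, ← mem_neighborSet]
    constructor
    · rintro (⟨h1, _⟩ | h1)
      · exact h1
      · rw [Sym2.eq_iff] at h1
        rcases h1 with ⟨h1, _⟩ | ⟨h1, _⟩
        · exact absurd h1 hxv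
        · exact absurd h1 hxw
    · intro h1
      refine Or.inl ⟨h1, fun hc => ?_⟩
      rw [Sym2.eq_iff] at hc
      rcases hc with ⟨h3, _⟩ | ⟨h3, _⟩
      · exact hxu h3
      · exact hxw h3

lemma exists_ne_of_two_le_ncard {V : Type*} {s : Set V}
    (h : 2 ≤ s.ncard) (a : V) : ∃ b ∈ s, b ≠ a := by
  by_contra hc
  push_neg at hc
  have hsub : s ⊆ {a} := fun b hb => hc b hb
  have := Set.ncard_le_ncard hsub (Set.finite_singleton a)
  simp [Set.ncard_singleton] at this
  omega

lemma deg_ge_one {V : Type*} {S : SimpleGraph V} {x y : V} (hxy : x ≠ y)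
    (hr : S.Reachable x y) : (S.neighborSet x).Nonempty := by
  obtain ⟨p⟩ := hr
  cases p with
  | nil => exact absurd rfl hxy
  | cons ha _ => exact ⟨_, ha⟩

lemma main_aux {V : Type*} [Fintype V] {G T : SimpleGraph V} {u v : V} (huv : u ≠ v)
    (hu : u ∈ internalNodes T)
    (hnbr : insert u (G.neighborSet u) ⊆ insert v (G.neighborSet v)) :
    ∀ n (S : SimpleGraph V), IsSpanningTree G S →
      internalNodes S ⊆ internalNodes T → v ∈ internalNodes S →
      (S.neighborSet u).ncard = n + 1 →
      ∃ T', IsSpanningTree G T' ∧ internalNodes T' ⊆ internalNodes T ∧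
        (T'.neighborSet u).ncard = 1 ∧
        Transformable G (fun S => internalNodes S ⊆ internalNodes T) S T' := by
  intro n
  induction n with
  | zero =>
    intro S hS hint hvS hdeg
    exact ⟨S, hS, hint, hdeg, Relation.ReflTransGen.refl⟩
  | succ n ih =>
    intro S hS hint hvS hdeg
    classical
    have h2 : 2 ≤ (S.neighborSet u).ncard := by omega
    -- find a suitable neighbor w of u and a walk from u to v avoiding s(u,w)
    obtain ⟨w, hw, hwv, q, hq⟩ :
        ∃ w ∈ S.neighborSet u, w ≠ v ∧ ∃ q : S.Walk u v, s(u,w) ∉ q.edges := by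
      by_cases hadj : S.Adj u v
      · obtain ⟨w, hw, hwv⟩ := exists_ne_of_two_le_ncard h2 v
        refine ⟨w, hw, hwv, Walk.cons hadj Walk.nil, ?_⟩
        intro hmem
        rw [Walk.edges_cons, Walk.edges_nil, List.mem_singleton, Sym2.eq_iff] at hmem
        rcases hmem with ⟨_, h3⟩ | ⟨h3, _⟩
        · exact hwv h3
        · exact huv h3
      · obtain ⟨p0⟩ := hS.2.isConnected.preconnected u v
        obtain ⟨p, hp⟩ := p0.toPath
        cases p with
        | nil => exact absurd rfl huv
        | @cons _ w0 _ h q' =>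
          obtain ⟨w, hw, hww0⟩ := exists_ne_of_two_le_ncard h2 w0
          have hwv : w ≠ v := fun hc => hadj (hc ▸ hw)
          refine ⟨w, hw, hwv, Walk.cons h q', ?_⟩
          intro hmem
          rw [Walk.edges_cons, List.mem_cons] at hmem
          rcases hmem with h1 | h1
          · rw [Sym2.eq_iff] at h1
            rcases h1 with ⟨_, h3⟩ | ⟨h3, _⟩
            · exact hww0 h3
            · exact h.ne (h3.symm ▸ rfl)
          · rw [Walk.cons_isPath_iff] at hp
            exact hp.2 (Walk.fst_mem_support_of_mem_edges q' h1)
    have hGvw : G.Adj v w := by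
      have hwG : w ∈ insert v (G.neighborSet v) :=
        hnbr (Set.mem_insert_of_mem _ (hS.1 hw))
      rw [Set.mem_insert_iff] at hwG
      rcases hwG with h1 | h1
      · exact absurd h1 hwv
      · exact h1
    have hreach : (S \ fromEdgeSet {s(u,w)}).Reachable u v := by
      have hsub : ∀ e' ∈ q.edges, e' ∈ (S \ fromEdgeSet {s(u,w)}).edgeSet := by
        intro e' he'
        rw [edgeSet_sdiff, edgeSet_fromEdgeSet, edgeSet_sdiff_sdiff_isDiag,
          Set.mem_diff, Set.mem_singleton_iff]
        exact ⟨q.edges_subset_edgeSet he', fun hc => hq (hc ▸ he')⟩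
      exact (q.transfer _ hsub).reachable
    obtain ⟨S', hle, htree, hedge, hvwS, hNu, hNv, hNw, hNx⟩ :=
      flip_lemma hS.1 hS.2 huv hw hGvw hreach
    -- degree facts
    have hdu : (S'.neighborSet u).ncard = n + 1 := by
      rw [hNu, Set.ncard_diff_singleton_of_mem hw, hdeg]
      omega
    have hvdeg : 2 ≤ (S.neighborSet v).ncard := by
      have h1 : (S.neighborSet v).Nonempty :=
        deg_ge_one huv.symm (hS.2.isConnected.preconnected v u)
      have h1' : 0 < (S.neighborSet v).ncard :=
        (Set.ncard_pos (Set.toFinite _)).mpr h1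
      have h2' : (S.neighborSet v).ncard ≠ 1 := hvS
      omega
    have hdv : (S'.neighborSet v).ncard = (S.neighborSet v).ncard + 1 := by
      have hnm : w ∉ S.neighborSet v := fun hc => hvwS hc
      rw [hNv, Set.ncard_insert_of_notMem hnm (Set.toFinite _)]
    have hdw : (S'.neighborSet w).ncard = (S.neighborSet w).ncard := by
      have hu_mem : u ∈ S.neighborSet w := hw.symm
      have h1 : 0 < (S.neighborSet w).ncard :=
        (Set.ncard_pos (Set.toFinite _)).mpr ⟨u, hu_mem⟩
      have hv_nmem : v ∉ S.neighborSet w \ {u} := fun hc => hvwS hc.1.symm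
      rw [hNw, Set.ncard_insert_of_notMem hv_nmem (Set.toFinite _),
        Set.ncard_diff_singleton_of_mem hu_mem]
      omega
    have hvS' : v ∈ internalNodes S' := by
      simp only [internalNodes, Set.mem_setOf_eq, hdv]
      omega
    have hint' : internalNodes S' ⊆ internalNodes T := by
      intro x hx
      by_cases hxu : x = u
      · exact hxu ▸ hu
      · by_cases hxv : x = v
        · exact hxv ▸ hint hvS
        · by_cases hxw : x = w
          · subst hxw
            simp only [internalNodes, Set.mem_setOf_eq, hdw] at hx
            exact hint hx
          · simp only [internalNodes, Set.mem_setOf_eq, hNx x hxu hxv hxw] at hx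
            exact hint hx
    have hflip : EdgeFlip S S' := by
      refine ⟨s(u,w), (S.mem_edgeSet).mpr hw, ?_, s(v,w), ?_, ?_, hedge⟩
      · rw [hedge]
        rintro (⟨_, h3⟩ | h3)
        · exact h3 rfl
        · rw [Set.mem_singleton_iff, Sym2.eq_iff] at h3
          rcases h3 with ⟨h4, _⟩ | ⟨h4, _⟩
          · exact huv h4
          · exact (Adj.ne hw) h4
      · rw [hedge]
        exact Or.inr rfl
      · exact fun hc => hvwS ((S.mem_edgeSet).mp hc)
    have hstep : Step G (fun S => internalNodes S ⊆ internalNodes T) S S' :=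
      ⟨hS, ⟨hle, htree⟩, hint, hint', hflip⟩
    obtain ⟨T', hT1, hT2, hT3, hT4⟩ := ih S' ⟨hle, htree⟩ hint' hvS' hdu
    exact ⟨T', hT1, hT2, hT3, Relation.ReflTransGen.head hstep hT4⟩


/-- If `u` and `v` are distinct internal nodes of a spanning tree `T` with
`N_G[u] ⊆ N_G[v]`, then `T` can be transformed, never creating a new internal node,
into a spanning tree `T'` with `in(T') ⊆ in(T) \ {u}`; in particular `T'` has strictly
fewer internal nodes than `T`. -/
theorem remove_dominated_internal_node
    {V : Type*} [Fintype V] (G : SimpleGraph V) (hG : G.Connected)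
    (T : SimpleGraph V) (hT : IsSpanningTree G T)
    (u v : V) (huv : u ≠ v)
    (hu : u ∈ internalNodes T) (hv : v ∈ internalNodes T)
    (hnbr : insert u (G.neighborSet u) ⊆ insert v (G.neighborSet v)) :
    ∃ T' : SimpleGraph V, IsSpanningTree G T' ∧
      internalNodes T' ⊆ internalNodes T \ {u} ∧
      (internalNodes T').ncard < (internalNodes T).ncard ∧
      Transformable G (fun S => internalNodes S ⊆ internalNodes T) T T' := by
  have hdeg : 0 < (T.neighborSet u).ncard :=
    (Set.ncard_pos (Set.toFinite _)).mpr
      (deg_ge_one huv (hT.2.isConnected.preconnected u v))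
  obtain ⟨n, hn⟩ : ∃ n, (T.neighborSet u).ncard = n + 1 :=
    ⟨(T.neighborSet u).ncard - 1, by omega⟩
  obtain ⟨T', hT1, hT2, hT3, hT4⟩ :=
    main_aux huv hu hnbr n T hT (fun _ hx => hx) hv hn
  have hu' : u ∉ internalNodes T' := by
    simp only [internalNodes, Set.mem_setOf_eq, hT3]
    exact fun hc => hc rfl
  refine ⟨T', hT1, ?_, ?_, hT4⟩
  · intro x hx
    exact ⟨hT2 hx, fun hxu => hu' ((Set.mem_singleton_iff.mp hxu) ▸ hx)⟩
  · refine Set.ncard_lt_ncard ⟨hT2, fun hsub => hu' (hsub hu)⟩ (Set.toFinite _)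
end

section
/- Let G be a finite connected simple graph, let T be a spanning tree of G, and let u, v, w be three distinct internal nodes of T that are pairwise adjacent in G and satisfy N_G[u] ⊆ N_G[v] ∪ N_G[w]. Then there exists a transformation from T to a spanning tree T' with in(T') ⊆ in(T) \ {u}, such that every tree S of the sequence satisfies in(S) ⊆ in(T). -/
open SimpleGraph

section Helpers

variable {V : Type*}


lemma delete_reach_or' {S : SimpleGraph V} (u x : V) {y t : V} (p : S.Walk y t) :
    (S.deleteEdges {s(u,x)}).Reachable y t ∨ (S.deleteEdges {s(u,x)}).Reachable y u ∨
      (S.deleteEdges {s(u,x)}).Reachable y x := by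
  induction p with
  | nil => exact Or.inl (Reachable.refl _)
  | @cons a b c h q ih =>
    by_cases he : s(a, b) = s(u, x)
    · rw [Sym2.eq_iff] at he
      rcases he with ⟨rfl, rfl⟩ | ⟨rfl, rfl⟩
      · exact Or.inr (Or.inl (Reachable.refl _))
      · exact Or.inr (Or.inr (Reachable.refl _))
    · have hadj : (S.deleteEdges {s(u,x)}).Adj a b := by
        rw [deleteEdges_adj]
        exact ⟨h, by simpa using he⟩
      rcases ih with h1 | h1 | h1
      · exact Or.inl (hadj.reachable.trans h1)
      · exact Or.inr (Or.inl (hadj.reachable.trans h1))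
      · exact Or.inr (Or.inr (hadj.reachable.trans h1))

lemma delete_reach_or {S : SimpleGraph V} {u x y : V} (p : S.Walk y u) :
    (S.deleteEdges {s(u,x)}).Reachable y u ∨ (S.deleteEdges {s(u,x)}).Reachable y x := by
  rcases delete_reach_or' u x p with h | h | h
  · exact Or.inl h
  · exact Or.inl h
  · exact Or.inr h

lemma tree_bridge {S : SimpleGraph V} (hS : S.IsAcyclic) {u x : V} (hadj : S.Adj u x) :
    ¬ (S.deleteEdges {s(u,x)}).Reachable u x :=
  isBridge_iff.mp (isAcyclic_iff_forall_adj_isBridge.mp hS hadj)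

lemma side_iff {S : SimpleGraph V} (hS : S.IsAcyclic) (hc : S.Connected) {u x : V}
    (hadj : S.Adj u x) (y : V) :
    (S.deleteEdges {s(u,x)}).Reachable x y ↔ ¬ (S.deleteEdges {s(u,x)}).Reachable u y := by
  constructor
  · intro h1 h2
    exact tree_bridge hS hadj (h2.trans h1.symm)
  · intro h2
    obtain ⟨p⟩ := hc.preconnected y u
    rcases delete_reach_or (x := x) p with h | h
    · exact absurd h.symm h2
    · exact h.symm

lemma side_avoids {S : SimpleGraph V} (hS : S.IsAcyclic) {u x x' y : V} (hadj : S.Adj u x)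
    (h : (S.deleteEdges {s(u,x)}).Reachable x y) :
    (S.deleteEdges {s(u,x), s(u,x')}).Reachable x y := by
  classical
  obtain ⟨p⟩ := h
  by_cases hu : u ∈ p.support
  · exact absurd ⟨(p.takeUntil u hu).reverse⟩ (tree_bridge hS hadj)
  · refine ⟨p.transfer _ fun e he => ?_⟩
    have h1 := p.edges_subset_edgeSet he
    rw [edgeSet_deleteEdges] at h1 ⊢
    refine ⟨h1.1, ?_⟩
    have h2 : e ≠ s(u, x') := by
      rintro rfl
      exact hu (p.fst_mem_support_of_mem_edges he)
    simp only [Set.mem_insert_iff, Set.mem_singleton_iff]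
    push_neg
    exact ⟨by simpa using h1.2, h2⟩

lemma sides_disjoint {S : SimpleGraph V} (hS : S.IsAcyclic) {u x x' y : V} (hx : S.Adj u x)
    (hx' : S.Adj u x') (hne : x ≠ x')
    (h1 : (S.deleteEdges {s(u,x)}).Reachable x y)
    (h2 : (S.deleteEdges {s(u,x')}).Reachable x' y) : False := by
  have d1 := side_avoids (x' := x') hS hx h1
  have d2 := side_avoids (x' := x) hS hx' h2
  rw [Set.pair_comm] at d2
  have hr : (S.deleteEdges {s(u,x)}).Reachable x x' :=
    (d1.trans d2.symm).mono (deleteEdges_anti (by simp))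
  have hadjx' : (S.deleteEdges {s(u,x)}).Adj u x' := by
    rw [deleteEdges_adj]
    refine ⟨hx', ?_⟩
    simp only [Set.mem_singleton_iff, Sym2.congr_right]
    exact hne.symm
  exact tree_bridge hS hx (hadjx'.reachable.trans hr.symm)

lemma exists_adj {S : SimpleGraph V} (hc : S.Connected) {y z : V} (hyz : y ≠ z) :
    ∃ t, S.Adj y t := by
  obtain ⟨p⟩ := hc.preconnected y z
  cases p with
  | nil => exact absurd rfl hyz
  | cons h _ => exact ⟨_, h⟩

lemma flip_all [Fintype V] [Nontrivial V] {G S : SimpleGraph V}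
    (hSG : S ≤ G) (hS : S.IsTree) {a b c d : V}
    (hab : S.Adj a b) (hGcd : G.Adj c d)
    (hac : (S.deleteEdges {s(a,b)}).Reachable a c)
    (hbd : (S.deleteEdges {s(a,b)}).Reachable b d)
    (hne : s(c,d) ≠ s(a,b)) (had : a ≠ d) (hbc : b ≠ c) :
    IsSpanningTree G (S.deleteEdges {s(a,b)} ⊔ edge c d) ∧
    EdgeFlip S (S.deleteEdges {s(a,b)} ⊔ edge c d) ∧
    internalNodes (S.deleteEdges {s(a,b)} ⊔ edge c d) ⊆
      internalNodes S ∪ (({c,d} : Set V) \ ({a,b} : Set V)) ∧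
    (a ∉ ({c,d} : Set V) →
      (S.deleteEdges {s(a,b)} ⊔ edge c d).neighborSet a = S.neighborSet a \ {b}) ∧
    (a = c → (S.deleteEdges {s(a,b)} ⊔ edge c d).neighborSet a
      = insert d (S.neighborSet a \ {b})) := by
  set K := S.deleteEdges {s(a,b)} with hK
  set F := K ⊔ edge c d with hF
  have hcd : c ≠ d := hGcd.ne
  have hab' : a ≠ b := hab.ne
  have hBridge : ¬ K.Reachable a b := tree_bridge hS.IsAcyclic hab
  have hcdS : s(c,d) ∉ S.edgeSet := by
    intro hmem
    have hKcd : K.Adj c d := by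
      rw [hK, deleteEdges_adj]
      exact ⟨hmem, by simpa using hne⟩
    exact hBridge ((hac.trans hKcd.reachable).trans hbd.symm)
  have hEdge : F.edgeSet = (S.edgeSet \ {s(a,b)}) ∪ {s(c,d)} := by
    rw [hF, edgeSet_sup, hK, edgeSet_deleteEdges, edge_edgeSet_of_ne hcd]
  have hFadj : ∀ p q, F.Adj p q ↔
      (S.Adj p q ∧ s(p,q) ≠ s(a,b)) ∨ ((p = c ∧ q = d) ∨ (p = d ∧ q = c)) := by
    intro p q
    rw [hF, sup_adj, hK, deleteEdges_adj, edge_adj]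
    constructor
    · rintro (⟨h1, h2⟩ | ⟨h1, _⟩)
      · exact Or.inl ⟨h1, by simpa using h2⟩
      · exact Or.inr h1
    · rintro (⟨h1, h2⟩ | h1)
      · exact Or.inl ⟨h1, by simpa using h2⟩
      · refine Or.inr ⟨h1, ?_⟩
        rcases h1 with ⟨rfl, rfl⟩ | ⟨rfl, rfl⟩
        exacts [hcd, hcd.symm]
  have hKF : K ≤ F := le_sup_left
  have hFcd : F.Adj c d := (hFadj c d).mpr (Or.inr (Or.inl ⟨rfl, rfl⟩))
  have hFab : F.Reachable a b := ((hac.mono hKF).trans hFcd.reachable).trans (hbd.mono hKF).symm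
  have hFconn : F.Connected := by
    have hne' : Nonempty V := ⟨a⟩
    refine ⟨fun p q => ?_⟩
    obtain ⟨wlk⟩ := hS.isConnected.preconnected p q
    induction wlk with
    | nil => exact Reachable.refl _
    | @cons p r q h pw ih =>
      refine Reachable.trans ?_ ih
      by_cases he : s(p, r) = s(a, b)
      · rw [Sym2.eq_iff] at he
        rcases he with ⟨rfl, rfl⟩ | ⟨rfl, rfl⟩
        · exact hFab
        · exact hFab.symm
      · exact (Adj.reachable ((hFadj p r).mpr (Or.inl ⟨h, he⟩)))
  have hFacyc : F.IsAcyclic := by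
    intro r C hC
    by_cases hf : s(c,d) ∈ C.edges
    · have h1 : (F \ fromEdgeSet {s(c,d)}).Reachable c d :=
        (adj_and_reachable_delete_edges_iff_exists_cycle.mpr ⟨r, C, hC, hf⟩).2
      have hFe : F.deleteEdges {s(c,d)} = K := by
        rw [← edgeSet_inj, edgeSet_deleteEdges, hEdge, hK, edgeSet_deleteEdges]
        ext g
        simp only [Set.mem_diff, Set.mem_union, Set.mem_singleton_iff]
        constructor
        · rintro ⟨h1 | h1, h2⟩
          · exact h1
          · exact absurd h1 h2
        · rintro ⟨h1, h2⟩
          exact ⟨Or.inl ⟨h1, h2⟩, fun hg => hcdS (hg ▸ h1)⟩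
      rw [show (F \ fromEdgeSet {s(c,d)}) = F.deleteEdges {s(c,d)} from rfl, hFe] at h1
      exact hBridge ((hac.trans h1).trans hbd.symm)
    · have hsub : ∀ g ∈ C.edges, g ∈ S.edgeSet := by
        intro g hg
        have hmem := C.edges_subset_edgeSet hg
        rw [hEdge] at hmem
        rcases hmem with ⟨h1, _⟩ | h1
        · exact h1
        · rw [Set.mem_singleton_iff] at h1
          exact absurd (h1 ▸ hg) hf
      exact hS.IsAcyclic (C.transfer S hsub) (hC.transfer hsub)
  have hFG : F ≤ G := by
    rw [hF]
    refine sup_le ((deleteEdges_le _).trans hSG) ?_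
    intro p q hpq
    rw [edge_adj] at hpq
    rcases hpq.1 with ⟨rfl, rfl⟩ | ⟨rfl, rfl⟩
    exacts [hGcd, hGcd.symm]
  have hsp : IsSpanningTree G F := ⟨hFG, hFconn, hFacyc⟩
  have heF : s(a,b) ∉ F.edgeSet := by
    rw [hEdge]
    rintro (⟨_, h⟩ | h)
    · exact h rfl
    · exact hne (Set.mem_singleton_iff.mp h).symm
  have hflip : EdgeFlip S F :=
    ⟨s(a,b), hab, heF, s(c,d), by rw [hEdge]; exact Or.inr rfl, hcdS, hEdge⟩
  -- neighborSet computations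
  have hNa : a ∉ ({c,d} : Set V) → F.neighborSet a = S.neighborSet a \ {b} := by
    intro ha
    simp only [Set.mem_insert_iff, Set.mem_singleton_iff, not_or] at ha
    ext z
    simp only [mem_neighborSet, hFadj, Set.mem_diff, Set.mem_singleton_iff]
    constructor
    · rintro (⟨h1, h2⟩ | ⟨⟨rfl, rfl⟩ | ⟨rfl, rfl⟩⟩)
      · exact ⟨h1, fun hz => h2 (by rw [hz])⟩
      · exact absurd rfl ha.1
      · exact absurd rfl ha.2
    · rintro ⟨h1, h2⟩
      refine Or.inl ⟨h1, fun he => h2 ?_⟩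
      rw [Sym2.eq_iff] at he
      rcases he with ⟨-, rfl⟩ | ⟨hba, -⟩
      · rfl
      · exact absurd hba hab'
  have hNb : b ∉ ({c,d} : Set V) → F.neighborSet b = S.neighborSet b \ {a} := by
    intro hb
    simp only [Set.mem_insert_iff, Set.mem_singleton_iff, not_or] at hb
    ext z
    simp only [mem_neighborSet, hFadj, Set.mem_diff, Set.mem_singleton_iff]
    constructor
    · rintro (⟨h1, h2⟩ | ⟨⟨rfl, rfl⟩ | ⟨rfl, rfl⟩⟩)
      · refine ⟨h1, fun hz => h2 ?_⟩
        rw [hz, Sym2.eq_swap]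
      · exact absurd rfl hb.1
      · exact absurd rfl hb.2
    · rintro ⟨h1, h2⟩
      refine Or.inl ⟨h1, fun he => h2 ?_⟩
      rw [Sym2.eq_iff] at he
      rcases he with ⟨hba, -⟩ | ⟨-, rfl⟩
      · exact absurd hba hab'.symm
      · rfl
  have hNout : ∀ y, y ∉ ({a,b} : Set V) → y ∉ ({c,d} : Set V) →
      F.neighborSet y = S.neighborSet y := by
    intro y hy1 hy2
    simp only [Set.mem_insert_iff, Set.mem_singleton_iff, not_or] at hy1 hy2
    ext z
    simp only [mem_neighborSet, hFadj]
    constructor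
    · rintro (⟨h1, _⟩ | ⟨⟨rfl, rfl⟩ | ⟨rfl, rfl⟩⟩)
      · exact h1
      · exact absurd rfl hy2.1
      · exact absurd rfl hy2.2
    · intro h1
      refine Or.inl ⟨h1, fun he => ?_⟩
      rw [Sym2.eq_iff] at he
      rcases he with ⟨rfl, -⟩ | ⟨rfl, -⟩
      · exact hy1.1 rfl
      · exact hy1.2 rfl
  have hNac : a = c → F.neighborSet a = insert d (S.neighborSet a \ {b}) := by
    rintro rfl
    ext z
    simp only [mem_neighborSet, hFadj, Set.mem_insert_iff, Set.mem_diff, Set.mem_singleton_iff]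
    constructor
    · rintro (⟨h1, h2⟩ | ⟨⟨-, rfl⟩ | ⟨h3, -⟩⟩)
      · refine Or.inr ⟨h1, fun hz => h2 (by rw [hz])⟩
      · exact Or.inl rfl
      · exact absurd h3 had
    · rintro (rfl | ⟨h1, h2⟩)
      · tauto
      · refine Or.inl ⟨h1, fun he => ?_⟩
        rw [Sym2.eq_iff] at he
        rcases he with ⟨-, rfl⟩ | ⟨hba, -⟩
        · exact h2 rfl
        · exact hab' hba
  have hNbd : b = d → F.neighborSet b = insert c (S.neighborSet b \ {a}) := by
    rintro rfl
    ext z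
    simp only [mem_neighborSet, hFadj, Set.mem_insert_iff, Set.mem_diff, Set.mem_singleton_iff]
    constructor
    · rintro (⟨h1, h2⟩ | ⟨⟨h3, -⟩ | ⟨-, rfl⟩⟩)
      · refine Or.inr ⟨h1, fun hz => h2 (by rw [hz, Sym2.eq_swap])⟩
      · exact absurd h3 hbc
      · exact Or.inl rfl
    · rintro (rfl | ⟨h1, h2⟩)
      · tauto
      · refine Or.inl ⟨h1, fun he => ?_⟩
        rw [Sym2.eq_iff] at he
        rcases he with ⟨hba, -⟩ | ⟨-, rfl⟩
        · exact hab' hba.symm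
        · exact h2 rfl
  have hbmem : b ∈ S.neighborSet a := hab
  have hamem : a ∈ S.neighborSet b := hab.symm
  -- internal nodes
  have hint : internalNodes F ⊆ internalNodes S ∪ (({c,d} : Set V) \ ({a,b} : Set V)) := by
    intro y hy
    simp only [internalNodes, Set.mem_setOf_eq] at hy
    by_cases hycd : y ∈ ({c,d} : Set V)
    · by_cases hyab : y ∈ ({a,b} : Set V)
      · left
        have hycd' := hycd
        have hyab' := hyab
        simp only [Set.mem_insert_iff, Set.mem_singleton_iff] at hycd' hyab'
        simp only [internalNodes, Set.mem_setOf_eq]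
        rcases hyab' with hya | hyb
        · -- y = a
          rw [hya] at hy ⊢
          rcases hycd' with hcc | hdd
          · -- a = c
            rw [hya] at hcc
            have hac' : a = c := hcc
            have hdN : d ∉ S.neighborSet a \ {b} := by
              rintro ⟨hmem, -⟩
              exact hcdS (by rw [← hac']; exact hmem)
            rw [hNac hac', Set.ncard_insert_of_notMem hdN,
              Set.ncard_diff_singleton_add_one hbmem] at hy
            exact hy
          · rw [hya] at hdd
            exact absurd hdd had
        · rw [hyb] at hy ⊢
          rcases hycd' with hcc | hdd
          · rw [hyb] at hcc
            exact absurd hcc hbc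
          · rw [hyb] at hdd
            have hbd' : b = d := hdd
            have hcN : c ∉ S.neighborSet b \ {a} := by
              rintro ⟨hmem, -⟩
              apply hcdS
              rw [Sym2.eq_swap, ← hbd']
              exact hmem
            rw [hNbd hbd', Set.ncard_insert_of_notMem hcN,
              Set.ncard_diff_singleton_add_one hamem] at hy
            exact hy
      · exact Or.inr ⟨hycd, hyab⟩
    · left
      simp only [internalNodes, Set.mem_setOf_eq]
      by_cases hyab : y ∈ ({a,b} : Set V)
      · have hpos : 0 < (F.neighborSet y).ncard := by
          rw [Set.ncard_pos (Set.toFinite _)]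
          obtain ⟨t, ht⟩ := exists_ne y
          exact exists_adj hFconn (Ne.symm ht)
        simp only [Set.mem_insert_iff, Set.mem_singleton_iff] at hyab
        rcases hyab with hya | hyb
        · rw [hya] at hy hpos hycd ⊢
          rw [hNa hycd] at hy hpos
          have := Set.ncard_diff_singleton_add_one hbmem (Set.toFinite _)
          omega
        · rw [hyb] at hy hpos hycd ⊢
          rw [hNb hycd] at hy hpos
          have := Set.ncard_diff_singleton_add_one hamem (Set.toFinite _)
          omega
      · rw [hNout y hyab hycd] at hy
        exact hy
  exact ⟨hsp, hflip, hint, hNa, hNac⟩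

end Helpers

/-- If `u`, `v`, `w` are three distinct, pairwise adjacent internal nodes of a spanning
tree `T` with `N_G[u] ⊆ N_G[v] ∪ N_G[w]`, then `T` can be transformed, never creating a
new internal node, into a spanning tree `T'` with `in(T') ⊆ in(T) \ {u}`. -/
theorem remove_doubly_dominated_internal_node
    {V : Type*} [Fintype V] (G : SimpleGraph V) (hG : G.Connected)
    (T : SimpleGraph V) (hT : IsSpanningTree G T)
    (u v w : V) (huv : u ≠ v) (huw : u ≠ w) (hvw : v ≠ w)
    (hadj₁ : G.Adj u v) (hadj₂ : G.Adj u w) (hadj₃ : G.Adj v w)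
    (hu : u ∈ internalNodes T) (hv : v ∈ internalNodes T) (hw : w ∈ internalNodes T)
    (hnbr : insert u (G.neighborSet u) ⊆
      insert v (G.neighborSet v) ∪ insert w (G.neighborSet w)) :
    ∃ T' : SimpleGraph V, IsSpanningTree G T' ∧
      internalNodes T' ⊆ internalNodes T \ {u} ∧
      Transformable G (fun S => internalNodes S ⊆ internalNodes T) T T' := by
  classical
  have hnontriv : Nontrivial V := ⟨u, v, huv⟩
  set P : SimpleGraph V → Prop := fun S => internalNodes S ⊆ internalNodes T with hP
  have aux : ∀ n (S : SimpleGraph V), (S.neighborSet u).ncard = n → IsSpanningTree G S →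
      internalNodes S ⊆ internalNodes T →
      ∃ T' : SimpleGraph V, IsSpanningTree G T' ∧ internalNodes T' ⊆ internalNodes T \ {u} ∧
        Transformable G P S T' := by
    intro n
    induction n using Nat.strong_induction_on with
    | _ n IH =>
    intro S hcard hSsp hPS
    obtain ⟨hSG, hS⟩ := hSsp
    by_cases hn1 : n = 1
    · refine ⟨S, ⟨hSG, hS⟩, ?_, Relation.ReflTransGen.refl⟩
      intro y hy
      refine ⟨hPS hy, ?_⟩
      rintro rfl
      simp only [internalNodes, Set.mem_setOf_eq] at hy
      rw [hcard] at hy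
      exact hy hn1
    have hn0 : n ≠ 0 := by
      rintro rfl
      obtain ⟨t, ht⟩ := exists_adj hS.isConnected huv
      have htm : t ∈ S.neighborSet u := ht
      rw [Set.ncard_eq_zero (Set.toFinite _)] at hcard
      rw [hcard] at htm
      exact htm
    have hn2 : 2 ≤ n := by omega
    have chain : ∀ S' F' : SimpleGraph V, IsSpanningTree G S' →
        internalNodes S' ⊆ internalNodes T →
        IsSpanningTree G F' → internalNodes F' ⊆ internalNodes T → EdgeFlip S' F' →
        (F'.neighborSet u).ncard < n →
        ∃ T', IsSpanningTree G T' ∧ internalNodes T' ⊆ internalNodes T \ {u} ∧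
          Transformable G P S' T' := by
      intro S' F' h1 h2 h3 h4 h5 h6
      obtain ⟨T', a1, a2, a3⟩ := IH _ h6 F' rfl h3 h4
      exact ⟨T', a1, a2, Relation.ReflTransGen.head ⟨h1, h3, h2, h4, h5⟩ a3⟩
    have key : ∀ x z : V, S.Adj u x → G.Adj z x → z ∈ internalNodes T → z ≠ u →
        (S.deleteEdges {s(u,x)}).Reachable u z →
        ∃ T', IsSpanningTree G T' ∧ internalNodes T' ⊆ internalNodes T \ {u} ∧
          Transformable G P S T' := by
      intro x z hux hzx hzT hzu hreach
      have hzxne : z ≠ x := by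
        rintro rfl
        exact tree_bridge hS.IsAcyclic hux hreach
      have hne : s(z,x) ≠ s(u,x) := by
        intro h
        rw [Sym2.eq_iff] at h
        rcases h with ⟨h, -⟩ | ⟨h, -⟩
        · exact hzu h
        · exact hzxne h
      obtain ⟨hsp, hflip, hint, hNa, -⟩ :=
        flip_all hSG hS hux hzx hreach (Reachable.refl x) hne hux.ne hzxne.symm
      have hNu : (S.deleteEdges {s(u,x)} ⊔ edge z x).neighborSet u
          = S.neighborSet u \ {x} := by
        apply hNa
        simp only [Set.mem_insert_iff, Set.mem_singleton_iff]
        push_neg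
        exact ⟨Ne.symm hzu, hux.ne⟩
      have hcard' : ((S.deleteEdges {s(u,x)} ⊔ edge z x).neighborSet u).ncard = n - 1 := by
        rw [hNu, Set.ncard_diff_singleton_of_mem (show x ∈ S.neighborSet u from hux), hcard]
      have hPF : internalNodes (S.deleteEdges {s(u,x)} ⊔ edge z x) ⊆ internalNodes T := by
        intro y hy
        rcases hint hy with h | ⟨h1, h2⟩
        · exact hPS h
        · rcases h1 with rfl | h1
          · exact hzT
          · rw [Set.mem_singleton_iff] at h1
            subst h1
            exact absurd (Or.inr rfl) h2
      refine chain S _ ⟨hSG, hS⟩ hPS hsp hPF hflip ?_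
      rw [hcard']
      omega
    by_cases hyes : ∃ x ∈ S.neighborSet u, (S.deleteEdges {s(u,x)}).Reachable u v ∧
        (S.deleteEdges {s(u,x)}).Reachable u w
    · obtain ⟨x, hx, hrv, hrw⟩ := hyes
      have hux : S.Adj u x := hx
      have hGux : G.Adj u x := hSG hux
      have hxvw : x ∈ insert v (G.neighborSet v) ∪ insert w (G.neighborSet w) :=
        hnbr (Set.mem_insert_iff.mpr (Or.inr hGux))
      have hxv : x ≠ v := by
        rintro rfl
        exact tree_bridge hS.IsAcyclic hux hrv
      have hxw : x ≠ w := by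
        rintro rfl
        exact tree_bridge hS.IsAcyclic hux hrw
      rcases hxvw with h | h
      · rcases Set.mem_insert_iff.mp h with h1 | h1
        · exact absurd h1 hxv
        · exact key x v hux h1 hv huv.symm hrv
      · rcases Set.mem_insert_iff.mp h with h1 | h1
        · exact absurd h1 hxw
        · exact key x w hux h1 hw huw.symm hrw
    · push_neg at hyes
      have hside : ∀ x, S.Adj u x → ((S.deleteEdges {s(u,x)}).Reachable x v ∨
          (S.deleteEdges {s(u,x)}).Reachable x w) := by
        intro x hx
        by_cases h : (S.deleteEdges {s(u,x)}).Reachable u v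
        · exact Or.inr ((side_iff hS.IsAcyclic hS.isConnected hx w).mpr (hyes x hx h))
        · exact Or.inl ((side_iff hS.IsAcyclic hS.isConnected hx v).mpr h)
      obtain ⟨x₁, x₂, hx₁m, hx₂m, hx12⟩ := (Set.one_lt_ncard_iff (Set.toFinite _)).mp
        (by rw [hcard]; omega)
      have main : ∀ x₁ x₂ : V, S.Adj u x₁ → S.Adj u x₂ → x₁ ≠ x₂ →
          (S.deleteEdges {s(u,x₁)}).Reachable x₁ v →
          (S.deleteEdges {s(u,x₂)}).Reachable x₂ w →
          ∃ T', IsSpanningTree G T' ∧ internalNodes T' ⊆ internalNodes T \ {u} ∧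
            Transformable G P S T' := by
        clear hx₁m hx₂m hx12
        intro x₁ x₂ h1 h2 h12 hv1 hw2
        have hNeq : S.neighborSet u = {x₁, x₂} := by
          apply Set.Subset.antisymm
          · intro x hx
            have hxadj : S.Adj u x := hx
            rcases hside x hxadj with h | h
            · refine Set.mem_insert_iff.mpr (Or.inl ?_)
              by_contra hne'
              exact sides_disjoint hS.IsAcyclic hxadj h1 hne' h hv1
            · refine Set.mem_insert_iff.mpr (Or.inr (Set.mem_singleton_iff.mpr ?_))
              by_contra hne'
              exact sides_disjoint hS.IsAcyclic hxadj h2 hne' h hw2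
          · rintro x (rfl | hx)
            · exact h1
            · rw [Set.mem_singleton_iff] at hx
              subst hx
              exact h2
        have hv_x2 : ¬ (S.deleteEdges {s(u,x₂)}).Reachable x₂ v := fun h =>
          sides_disjoint hS.IsAcyclic h1 h2 h12 hv1 h
        have hurv2 : (S.deleteEdges {s(u,x₂)}).Reachable u v := by
          by_contra h
          exact hv_x2 ((side_iff hS.IsAcyclic hS.isConnected h2 v).mpr h)
        have hvx2 : v ≠ x₂ := by
          rintro rfl
          exact hv_x2 (Reachable.refl _)
        have huvw : u ∉ ({v,w} : Set V) := by
          simp only [Set.mem_insert_iff, Set.mem_singleton_iff]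
          push_neg
          exact ⟨huv, huw⟩
        have hnevw : s(v,w) ≠ s(u,x₂) := by
          intro h
          rw [Sym2.eq_iff] at h
          rcases h with ⟨h, -⟩ | ⟨-, h⟩
          · exact huv h.symm
          · exact huw h.symm
        obtain ⟨hsp, hflip, hint, hNa, -⟩ :=
          flip_all hSG hS h2 hadj₃ hurv2 hw2 hnevw huw (Ne.symm hvx2)
        have hNu : (S.deleteEdges {s(u,x₂)} ⊔ edge v w).neighborSet u
            = S.neighborSet u \ {x₂} := hNa huvw
        have hcard' : ((S.deleteEdges {s(u,x₂)} ⊔ edge v w).neighborSet u).ncard = 1 := by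
          rw [hNu, hNeq, Set.pair_diff_right h12, Set.ncard_singleton]
        have hPF : internalNodes (S.deleteEdges {s(u,x₂)} ⊔ edge v w)
            ⊆ internalNodes T := by
          intro y hy
          rcases hint hy with h | ⟨hm, -⟩
          · exact hPS h
          · rcases hm with rfl | hm
            · exact hv
            · rw [Set.mem_singleton_iff] at hm
              subst hm
              exact hw
        exact chain S _ ⟨hSG, hS⟩ hPS hsp hPF hflip (by omega)
      rcases hside x₁ hx₁m with hv1 | hw1 <;> rcases hside x₂ hx₂m with hv2 | hw2
      · exact (sides_disjoint hS.IsAcyclic hx₁m hx₂m hx12 hv1 hv2).elim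
      · exact main x₁ x₂ hx₁m hx₂m hx12 hv1 hw2
      · exact main x₂ x₁ hx₂m hx₁m hx12.symm hv2 hw1
      · exact (sides_disjoint hS.IsAcyclic hx₁m hx₂m hx12 hw1 hw2).elim
  exact aux _ T rfl hT (fun y hy => hy)
end

section
/- Let R be the edge-gadget graph on the twelve vertices x_u, y_u, x_v, y_v, r₁, r₂, r₃, r₄, r₅, r₆, r₇, r₈ whose edges are: the path x_u r₁ r₂ r₃ r₄ y_u (edges x_u r₁, r₁ r₂, r₂ r₃, r₃ r₄, r₄ y_u), the path x_v r₅ r₆ r₇ r₈ y_v (edges x_v r₅, r₅ r₆, r₆ r₇, r₇ r₈, r₈ y_v), and the four cross edges x_v r₂, y_v r₃, x_u r₆, y_u r₇. Then R has no Hamiltonian path with one endpoint in {x_u, y_u} and the other endpoint in {x_v, y_v}. -/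
open SimpleGraph

/-- The edges of the edge-gadget graph on twelve vertices, with the encoding
`0 = x_u`, `1 = y_u`, `2 = x_v`, `3 = y_v`, `4, …, 11 = r₁, …, r₈`. -/
def gadgetEdges : List (Fin 12 × Fin 12) :=
  [(0, 4), (4, 5), (5, 6), (6, 7), (7, 1),
   (2, 8), (8, 9), (9, 10), (10, 11), (11, 3),
   (2, 5), (3, 6), (0, 9), (1, 10)]

/-- The edge-gadget graph `R`. -/
def gadgetGraph : SimpleGraph (Fin 12) :=
  SimpleGraph.fromRel (fun u w => (u, w) ∈ gadgetEdges)

/-- Boolean adjacency. -/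
def adjB (a b : Fin 12) : Bool :=
  decide ((a, b) ∈ gadgetEdges) || decide ((b, a) ∈ gadgetEdges)

/-- Extend each reversed partial path by one new adjacent vertex. -/
def stepP (ps : List (List (Fin 12))) : List (List (Fin 12)) :=
  ps.flatMap fun p =>
    ((List.finRange 12).filter fun v => adjB v p.headI && !(decide (v ∈ p))).map (· :: p)

/-- All reversed simple paths of length `n+1` ending at `s`. -/
def pathsP (s : Fin 12) : Nat → List (List (Fin 12))
  | 0 => [[s]]
  | n + 1 => stepP (pathsP s n)

lemma complete (s : Fin 12) :
    ∀ n (l : List (Fin 12)), l.Chain' (fun a b => adjB a b = true) → l.Nodup →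
      l.getLast? = some s → l.length = n + 1 → l ∈ pathsP s n := by
  intro n
  induction n with
  | zero =>
    intro l _ _ hlast hlen
    match l, hlen with
    | [a], _ =>
      simp only [List.getLast?_singleton, Option.some.injEq] at hlast
      subst hlast
      simp [pathsP]
  | succ n ih =>
    intro l hchain hnodup hlast hlen
    match l, hlen with
    | v :: b :: q, hlen =>
      have hq : (b :: q) ∈ pathsP s n := by
        refine ih (b :: q) hchain.tail (List.Nodup.of_cons hnodup) ?_ ?_
        · rw [← List.getLast?_cons_cons]; exact hlast
        · simpa using hlen
      have hadj : adjB v (b :: q).headI = true := by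
        rcases List.isChain_cons_cons.mp hchain with ⟨h1, _⟩
        simpa using h1
      have hnm : v ∉ (b :: q) := by
        simp only [List.nodup_cons] at hnodup
        exact hnodup.1
      simp only [pathsP, stepP, List.mem_flatMap]
      refine ⟨b :: q, hq, ?_⟩
      simp only [List.mem_map, List.mem_filter, List.mem_finRange, true_and]
      exact ⟨v, ⟨by simp [hnm]; exact hadj, rfl⟩⟩

lemma check0 : ∀ l ∈ pathsP (0 : Fin 12) 11, l.headI ≠ 2 ∧ l.headI ≠ 3 := by decide +kernel

lemma check1 : ∀ l ∈ pathsP (1 : Fin 12) 11, l.headI ≠ 2 ∧ l.headI ≠ 3 := by decide +kernel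

/-- The edge-gadget graph has no Hamiltonian path from a vertex of `{x_u, y_u}`
to a vertex of `{x_v, y_v}`: there is no path visiting every vertex exactly once
with one endpoint in `{0, 1}` and the other in `{2, 3}`. -/
theorem gadget_no_crossing_hamiltonian_path :
    ¬ ∃ (s t : Fin 12), (s = 0 ∨ s = 1) ∧ (t = 2 ∨ t = 3) ∧
      ∃ p : gadgetGraph.Walk s t, p.IsPath ∧ ∀ v : Fin 12, v ∈ p.support := by
  rintro ⟨s, t, hs, ht, p, hp, hall⟩
  set l : List (Fin 12) := p.reverse.support with hl
  have hchain : l.Chain' (fun a b => adjB a b = true) := by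
    refine (p.reverse.isChain_adj_support).imp ?_
    intro a b hab
    rcases hab with ⟨_, h | h⟩ <;> simp [adjB, h]
  have hnodup : l.Nodup := hp.reverse.support_nodup
  have hsupr : l = p.support.reverse := Walk.support_reverse p
  have hlast : l.getLast? = some s := by
    rw [hsupr, List.getLast?_reverse]
    rw [p.support_eq_cons]; rfl
  have hlen : l.length = 12 := by
    have huniv : l.toFinset = Finset.univ := by
      apply Finset.eq_univ_iff_forall.mpr
      intro v
      rw [List.mem_toFinset, hsupr, List.mem_reverse]
      exact hall v
    have := List.toFinset_card_of_nodup hnodup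
    rw [huniv] at this
    simpa using this.symm
  have hmem : l ∈ pathsP s 11 := complete s 11 l hchain hnodup hlast hlen
  have hhead : l.headI = t := by
    rw [hl, p.reverse.support_eq_cons]; rfl
  rcases hs with rfl | rfl
  · rcases ht with rfl | rfl
    · exact (check0 l hmem).1 (hhead)
    · exact (check0 l hmem).2 (hhead)
  · rcases ht with rfl | rfl
    · exact (check1 l hmem).1 (hhead)
    · exact (check1 l hmem).2 (hhead)
end

section
/- Let G be a finite simple graph with vertex set {v₁, …, v_n} (n ≥ 1) and let G' be the graph on vertex set A ∪ B ∪ {x, y}, where A = {a₁, …, a_n}, B = {b_{i,t} : 1 ≤ i ≤ n, t ∈ {0,1}}, with edges: a_i is adjacent to b_{j,t} (for t ∈ {0,1}) if and only if v_j ∈ N_G[v_i]; x is adjacent to every vertex of A; and x is adjacent to y. Then for every spanning tree T of G', the set {v_i : a_i is an internal node of T} is a dominating set of G. -/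
open SimpleGraph

/-- The graph `G'` built from `G`: vertex set `A ∪ B ∪ {x, y}` where
`A = {aᵢ : i ∈ V}` is encoded as `Sum.inl i`, `B = {b_{j,t}}` as
`Sum.inr (Sum.inl (j, t))`, `x` as `Sum.inr (Sum.inr false)` and
`y` as `Sum.inr (Sum.inr true)`. The vertex `aᵢ` is adjacent to `b_{j,t}`
iff `v_j ∈ N_G[v_i]`, `x` is adjacent to every vertex of `A`, and `x` is
adjacent to `y`. -/
def Gprime {V : Type*} (G : SimpleGraph V) :
    SimpleGraph (V ⊕ (V × Bool) ⊕ Bool) :=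
  SimpleGraph.fromRel (fun u w =>
    match u, w with
    | Sum.inl i, Sum.inr (Sum.inl (j, _)) => i = j ∨ G.Adj i j
    | Sum.inl _, Sum.inr (Sum.inr b) => b = false
    | Sum.inr (Sum.inr false), Sum.inr (Sum.inr true) => True
    | _, _ => False)

/-- For every spanning tree `T` of `G'`, the set of vertices of `G` whose `A`-copy is an
internal node of `T` is a dominating set of `G`. -/
theorem internal_nodes_dominate
    {V : Type*} [Fintype V] [Nonempty V] (G : SimpleGraph V)
    (T : SimpleGraph (V ⊕ (V × Bool) ⊕ Bool))
    (hT : IsSpanningTree (Gprime G) T) :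
    ∀ w : V, ∃ d : V, Sum.inl d ∈ internalNodes T ∧ (d = w ∨ G.Adj d w) := by
  intro w
  classical
  set b : V ⊕ (V × Bool) ⊕ Bool := Sum.inr (Sum.inl (w, false)) with hb
  set x : V ⊕ (V × Bool) ⊕ Bool := Sum.inr (Sum.inr false) with hx
  have hbx : b ≠ x := by simp [hb, hx]
  obtain ⟨hle, htree⟩ := hT
  have hreach : T.Reachable b x := htree.isConnected.preconnected b x
  obtain ⟨p0⟩ := hreach
  let pp := p0.toPath
  obtain ⟨p, hp⟩ := pp
  obtain ⟨u, hadj, q, rfl⟩ := p.exists_eq_cons_of_ne hbx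
  -- u is an A-vertex
  have hadj' : (Gprime G).Adj b u := hle hadj
  have hux : u ≠ x := by
    rcases u with i | ⟨⟨j, t⟩⟩ | bb
    · simp [hx]
    · simp [hx]
    · exfalso
      simp only [Gprime, SimpleGraph.fromRel_adj, hb] at hadj'
      rcases hadj' with ⟨-, h | h⟩ <;> cases bb <;> simp_all
  obtain ⟨d, hdw, rfl⟩ : ∃ d : V, (d = w ∨ G.Adj d w) ∧ u = Sum.inl d := by
    rcases u with i | ⟨⟨j, t⟩⟩ | bb
    · refine ⟨i, ?_, rfl⟩
      simp only [Gprime, SimpleGraph.fromRel_adj, hb] at hadj'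
      rcases hadj' with ⟨-, h | h⟩
      · exact absurd h (by simp)
      · simpa using h
    · exfalso
      simp only [Gprime, SimpleGraph.fromRel_adj, hb] at hadj'
      rcases hadj' with ⟨-, h | h⟩ <;> simp_all
    · exfalso
      simp only [Gprime, SimpleGraph.fromRel_adj, hb] at hadj'
      rcases hadj' with ⟨-, h | h⟩ <;> cases bb <;> simp_all
  -- next step of the path
  obtain ⟨v, hadj2, r, rfl⟩ := q.exists_eq_cons_of_ne hux
  have hnodup := hp.support_nodup
  simp only [SimpleGraph.Walk.support_cons, List.nodup_cons] at hnodup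
  have hvb : v ≠ b := by
    intro h
    apply hnodup.1
    simp [SimpleGraph.Walk.support_cons, h.symm, SimpleGraph.Walk.start_mem_support]
  refine ⟨d, ?_, hdw⟩
  intro hcard
  obtain ⟨c, hc⟩ := Set.ncard_eq_one.mp hcard
  have h1 : b ∈ T.neighborSet (Sum.inl d) := hadj.symm
  have h2 : v ∈ T.neighborSet (Sum.inl d) := hadj2
  rw [hc] at h1 h2
  exact hvb (h2.trans h1.symm)
end

section
/- Let G be a finite simple graph with vertex set {v₁, …, v_n} (n ≥ 1) and let G' be the graph on vertex set A ∪ B ∪ {x, y}, where A = {a₁, …, a_n}, B = {b_{i,t} : 1 ≤ i ≤ n, t ∈ {0,1}}, with edges: a_i is adjacent to b_{j,t} (for t ∈ {0,1}) if and only if v_j ∈ N_G[v_i]; x is adjacent to every vertex of A; and x is adjacent to y. Then for every spanning tree T of G', there exists a transformation from T to a spanning tree T_A with in(T_A) ⊆ in(T) ∩ (A ∪ {x}), such that every tree S of the sequence satisfies in(S) ⊆ in(T). -/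
open SimpleGraph

section AuxTransform

variable {V : Type*} {G : SimpleGraph V}

lemma gp_adj_ax (G : SimpleGraph V) (i : V) :
    (Gprime G).Adj (Sum.inl i) (Sum.inr (Sum.inr false)) := by
  rw [Gprime, fromRel_adj]
  exact ⟨by simp, Or.inl rfl⟩

lemma gp_adj_y (G : SimpleGraph V) (w : V ⊕ (V × Bool) ⊕ Bool) :
    (Gprime G).Adj w (Sum.inr (Sum.inr true)) ↔ w = Sum.inr (Sum.inr false) := by
  rw [Gprime, fromRel_adj]
  rcases w with i | q | (_|_) <;> simp

lemma gp_adj_b (G : SimpleGraph V) {w : V ⊕ (V × Bool) ⊕ Bool} {q : V × Bool}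
    (h : (Gprime G).Adj w (Sum.inr (Sum.inl q))) : ∃ i, w = Sum.inl i := by
  rw [Gprime, fromRel_adj] at h
  rcases w with i | q' | (_|_)
  · exact ⟨i, rfl⟩
  · rcases q' with ⟨j, t⟩; rcases q with ⟨j', t'⟩; simp at h
  · simp at h
  · simp at h

lemma adj_xy {S : SimpleGraph (V ⊕ (V × Bool) ⊕ Bool)}
    (hS : IsSpanningTree (Gprime G) S) :
    S.Adj (Sum.inr (Sum.inr true)) (Sum.inr (Sum.inr false)) := by
  obtain ⟨w⟩ := hS.2.isConnected.preconnected
    (Sum.inr (Sum.inr true)) (Sum.inr (Sum.inr false))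
  cases w with
  | cons h q =>
    rename_i w2
    have hw2 : w2 = Sum.inr (Sum.inr false) := (gp_adj_y G w2).mp (hS.1 h).symm
    exact hw2 ▸ h

lemma y_nbhd {S : SimpleGraph (V ⊕ (V × Bool) ⊕ Bool)}
    (hS : IsSpanningTree (Gprime G) S) :
    S.neighborSet (Sum.inr (Sum.inr true)) = {Sum.inr (Sum.inr false)} := by
  ext w
  simp only [mem_neighborSet, Set.mem_singleton_iff]
  constructor
  · intro h
    exact (gp_adj_y G w).mp (hS.1 h).symm
  · rintro rfl
    exact adj_xy hS

lemma y_leaf {S : SimpleGraph (V ⊕ (V × Bool) ⊕ Bool)}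
    (hS : IsSpanningTree (Gprime G) S) :
    (Sum.inr (Sum.inr true) : V ⊕ (V × Bool) ⊕ Bool) ∉ internalNodes S := by
  intro h
  exact h (by rw [y_nbhd hS]; simp)

lemma x_internal [Nonempty V] {S : SimpleGraph (V ⊕ (V × Bool) ⊕ Bool)}
    (hS : IsSpanningTree (Gprime G) S) :
    (Sum.inr (Sum.inr false) : V ⊕ (V × Bool) ⊕ Bool) ∈ internalNodes S := by
  classical
  intro hcard
  -- the neighbor set of x is exactly {y}
  obtain ⟨z, hz⟩ := Set.ncard_eq_one.mp hcard
  have hyz : z = Sum.inr (Sum.inr true) := by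
    have : (Sum.inr (Sum.inr true) : V ⊕ (V × Bool) ⊕ Bool) ∈
        S.neighborSet (Sum.inr (Sum.inr false)) := (adj_xy hS).symm
    rw [hz] at this
    exact (Set.mem_singleton_iff.mp this).symm
  subst hyz
  -- path from x to a vertex of A
  obtain ⟨v0⟩ := ‹Nonempty V›
  obtain ⟨w0⟩ := hS.2.isConnected.preconnected (Sum.inr (Sum.inr false)) (Sum.inl v0)
  obtain ⟨q, hq⟩ := w0.toPath
  cases q with
  | cons h1 q1 =>
    rename_i w1
    have hw1 : w1 = Sum.inr (Sum.inr true) := by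
      have : w1 ∈ S.neighborSet (Sum.inr (Sum.inr false)) := h1
      rw [hz] at this; exact this
    subst hw1
    cases q1 with
    | cons h2 q2 =>
      rename_i w2
      have hw2 : w2 = Sum.inr (Sum.inr false) := (gp_adj_y G w2).mp (hS.1 h2).symm
      subst hw2
      rw [Walk.cons_isPath_iff] at hq
      exact hq.2 (by rw [Walk.support_cons]; exact List.mem_cons_of_mem _ q2.start_mem_support)

/-- measure: number of edges touching `B` -/
noncomputable def Mz {V : Type*} (S : SimpleGraph (V ⊕ (V × Bool) ⊕ Bool)) : ℕ :=
  (S.edgeSet ∩ {ed | ∃ q : V × Bool,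
    (Sum.inr (Sum.inl q) : V ⊕ (V × Bool) ⊕ Bool) ∈ ed}).ncard

lemma flip_step_s14 [Fintype V] [Nonempty V] (G : SimpleGraph V)
    {S : SimpleGraph (V ⊕ (V × Bool) ⊕ Bool)}
    (hS : IsSpanningTree (Gprime G) S) {p : V × Bool}
    (hb : (Sum.inr (Sum.inl p) : V ⊕ (V × Bool) ⊕ Bool) ∈ internalNodes S) :
    ∃ S', IsSpanningTree (Gprime G) S' ∧ internalNodes S' ⊆ internalNodes S ∧
      EdgeFlip S S' ∧ Mz S' < Mz S := by
  classical
  obtain ⟨w0⟩ := hS.2.isConnected.preconnected (Sum.inr (Sum.inl p))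
    (Sum.inr (Sum.inr false))
  obtain ⟨q0, hq0⟩ := w0.toPath
  cases q0 with
  | cons h1 q1 =>
    rename_i a₀
    rw [Walk.cons_isPath_iff] at hq0
    -- (Sum.inr (Sum.inl p)) has degree ≥ 2
    have hdeg : 1 < (S.neighborSet (Sum.inr (Sum.inl p))).ncard := by
      have h0 : 0 < (S.neighborSet (Sum.inr (Sum.inl p))).ncard :=
        (Set.ncard_pos (Set.toFinite _)).2 ⟨a₀, h1⟩
      have := hb
      simp only [internalNodes, Set.mem_setOf_eq] at this
      omega
    obtain ⟨a, haS, hane⟩ := Set.exists_ne_of_one_lt_ncard hdeg a₀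
    have haS : S.Adj (Sum.inr (Sum.inl p)) a := haS
    obtain ⟨i, rfl⟩ := gp_adj_b G ((hS.1 haS).symm)
    set e : Sym2 (V ⊕ (V × Bool) ⊕ Bool) := s((Sum.inr (Sum.inl p)), Sum.inl i) with hedef
    set f : Sym2 (V ⊕ (V × Bool) ⊕ Bool) := s(Sum.inl i, (Sum.inr (Sum.inr false))) with hfdef
    have hfe : f ≠ e := by simp [hedef, hfdef, Sym2.eq_iff]
    -- the path avoids e
    have havoid : ∀ e' ∈ (Walk.cons h1 q1).edges, e' ∉ ({e} : Set (Sym2 _)) := by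
      intro e' he' hee'
      rw [Set.mem_singleton_iff] at hee'
      subst hee'
      rw [Walk.edges_cons, List.mem_cons] at he'
      rcases he' with he' | he'
      · rw [hedef, Sym2.eq_iff] at he'
        rcases he' with ⟨-, h⟩ | ⟨h, h'⟩
        · exact hane h
        · exact haS.ne h'.symm
      · have hbs : (Sum.inr (Sum.inl p)) ∈ q1.support := Walk.fst_mem_support_of_mem_edges q1 he'
        exact hq0.2 hbs
    have hbx : (S.deleteEdges {e}).Reachable (Sum.inr (Sum.inl p)) (Sum.inr (Sum.inr false)) :=
      ⟨(Walk.cons h1 q1).toDeleteEdges {e} havoid⟩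
    have heS : e ∈ S.edgeSet := haS
    have hebridge : S.IsBridge e :=
      (isAcyclic_iff_forall_edge_isBridge.mp hS.2.IsAcyclic) heS
    have hnra : ¬ (S.deleteEdges {e}).Reachable (Sum.inr (Sum.inl p)) (Sum.inl i) :=
      (isBridge_iff.mp hebridge)
    have hax : ¬ (S.deleteEdges {e}).Reachable (Sum.inl i) (Sum.inr (Sum.inr false)) := fun h =>
      hnra (hbx.trans h.symm)
    have hfS : f ∉ S.edgeSet := by
      intro hf
      exact hax ⟨Walk.cons (deleteEdges_adj.mpr ⟨hf, by
        simp only [Set.mem_singleton_iff]; exact hfe⟩) Walk.nil⟩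
    -- the new tree
    set S' : SimpleGraph (V ⊕ (V × Bool) ⊕ Bool) :=
      fromEdgeSet ((S.edgeSet \ {e}) ∪ {f}) with hS'def
    have hE' : S'.edgeSet = (S.edgeSet \ {e}) ∪ {f} := by
      rw [hS'def, edgeSet_fromEdgeSet]
      ext z
      simp only [Set.mem_diff, Set.mem_setOf_eq]
      refine ⟨fun h => h.1, fun h => ⟨h, ?_⟩⟩
      intro hzd
      rcases h with ⟨hz, -⟩ | hz
      · exact S.not_isDiag_of_mem_edgeSet hz hzd
      · rw [Set.mem_singleton_iff] at hz
        subst hz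
        simp [hfdef] at hzd
    have hS'adj : ∀ u v, S'.Adj u v ↔
        (s(u, v) ∈ S.edgeSet \ {e} ∨ s(u, v) = f) ∧ u ≠ v := by
      intro u v
      rw [hS'def, fromEdgeSet_adj, Set.mem_union, Set.mem_singleton_iff]
    -- S' ≤ G'
    have hle : S' ≤ Gprime G := by
      intro u v huv
      rw [hS'adj] at huv
      rcases huv.1 with ⟨hm, -⟩ | hm
      · exact hS.1 hm
      · rw [hfdef, Sym2.eq_iff] at hm
        rcases hm with ⟨rfl, rfl⟩ | ⟨rfl, rfl⟩
        · exact gp_adj_ax G i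
        · exact (gp_adj_ax G i).symm
    have hSml : S.deleteEdges {e} ≤ S' := by
      intro u v huv
      rw [deleteEdges_adj] at huv
      rw [hS'adj]
      exact ⟨Or.inl ⟨huv.1, huv.2⟩, huv.1.ne⟩
    have hadj_f : S'.Adj (Sum.inl i) (Sum.inr (Sum.inr false)) := by
      rw [hS'adj]
      exact ⟨Or.inr rfl, by simp⟩
    have hreach_ab : S'.Reachable (Sum.inl i) (Sum.inr (Sum.inl p)) :=
      hadj_f.reachable.trans ((hbx.mono hSml).symm)
    have hadjreach : ∀ u v, S.Adj u v → S'.Reachable u v := by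
      intro u v huv
      by_cases hc : s(u, v) = e
      · rw [hedef, Sym2.eq_iff] at hc
        rcases hc with ⟨rfl, rfl⟩ | ⟨rfl, rfl⟩
        · exact hreach_ab.symm
        · exact hreach_ab
      · exact ((hS'adj u v).mpr ⟨Or.inl ⟨huv, hc⟩, huv.ne⟩).reachable
    have hlift : ∀ (u v : V ⊕ (V × Bool) ⊕ Bool) (w : S.Walk u v),
        S'.Reachable u v := by
      intro u v w
      induction w with
      | nil => exact Reachable.refl _
      | cons h _ ih => exact (hadjreach _ _ h).trans ih
    have hconn' : S'.Connected := by
      have hne : Nonempty (V ⊕ (V × Bool) ⊕ Bool) := ⟨(Sum.inr (Sum.inl p))⟩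
      constructor
      intro u v
      obtain ⟨w⟩ := hS.2.isConnected.preconnected u v
      exact hlift u v w
    have hacyc : S'.IsAcyclic := by
      intro v0 c hc
      by_cases hfc : f ∈ c.edges
      · have hbridge : S'.IsBridge f := by
          rw [hfdef, isBridge_iff]
          refine fun hr => hax (Reachable.mono ?_ hr)
          intro u v huv
          have h1 : S'.Adj u v := huv.1
          have h2 : ¬ (fromEdgeSet {f} : SimpleGraph _).Adj u v := huv.2
          rw [hS'adj] at h1
          rw [fromEdgeSet_adj] at h2
          rcases h1.1 with ⟨hm, hme⟩ | hm
          · exact deleteEdges_adj.mpr ⟨hm, hme⟩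
          · exact absurd ⟨hm, h1.2⟩ h2
        exact (isBridge_iff_forall_cycle_notMem (G := S') (e := f) hadj_f).mp hbridge c hc hfc
      · have hsub : ∀ e' ∈ c.edges, e' ∈ S.edgeSet := by
          intro e' he'
          have := c.edges_subset_edgeSet he'
          rw [hE'] at this
          rcases this with ⟨h, -⟩ | h
          · exact h
          · rw [Set.mem_singleton_iff] at h
            exact absurd (h ▸ he') hfc
        exact hS.2.IsAcyclic (c.transfer S hsub) (hc.transfer hsub)
    have hST' : IsSpanningTree (Gprime G) S' := ⟨hle, hconn', hacyc⟩
    -- edge flip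
    have hflip : EdgeFlip S S' := by
      refine ⟨e, heS, ?_, f, ?_, hfS, hE'⟩
      · rw [hE']
        rintro (⟨-, h⟩ | h)
        · exact h rfl
        · exact hfe h.symm
      · rw [hE']; exact Or.inr rfl
    -- internal nodes
    have hint : internalNodes S' ⊆ internalNodes S := by
      intro v hv
      simp only [internalNodes, Set.mem_setOf_eq] at hv ⊢
      by_cases hvb : v = (Sum.inr (Sum.inl p))
      · exact hvb ▸ hb
      by_cases hvx : v = (Sum.inr (Sum.inr false))
      · exact hvx ▸ (x_internal hS)
      by_cases hva : v = Sum.inl i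
      · subst hva
        have hNa : S'.neighborSet (Sum.inl i) =
            insert (Sum.inr (Sum.inr false)) (S.neighborSet (Sum.inl i) \ {(Sum.inr (Sum.inl p))}) := by
          ext u
          simp only [mem_neighborSet, Set.mem_insert_iff, Set.mem_diff,
            Set.mem_singleton_iff]
          rw [hS'adj]
          constructor
          · rintro ⟨⟨hm, hme⟩ | hm, hne⟩
            · refine Or.inr ⟨hm, ?_⟩
              intro hub; subst hub
              exact hme (by rw [hedef]; exact Sym2.eq_swap)
            · rw [hfdef, Sym2.eq_iff] at hm
              rcases hm with ⟨-, rfl⟩ | ⟨h, -⟩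
              · exact Or.inl rfl
              · exact absurd h (by simp)
          · rintro (rfl | ⟨hm, hub⟩)
            · exact ⟨Or.inr rfl, by simp⟩
            · refine ⟨Or.inl ⟨hm, ?_⟩, hm.ne⟩
              intro hc
              rw [Set.mem_singleton_iff, hedef, Sym2.eq_iff] at hc
              rcases hc with ⟨h, -⟩ | ⟨-, h⟩
              · exact absurd h.symm (by simp)
              · exact hub h
        have hxnot : (Sum.inr (Sum.inr false)) ∉ S.neighborSet (Sum.inl i) \ {(Sum.inr (Sum.inl p))} := by
          rintro ⟨hm, -⟩
          exact hfS hm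
        have hbmem : (Sum.inr (Sum.inl p)) ∈ S.neighborSet (Sum.inl i) := haS.symm
        have : (S'.neighborSet (Sum.inl i)).ncard =
            (S.neighborSet (Sum.inl i)).ncard := by
          rw [hNa, Set.ncard_insert_of_notMem hxnot (Set.toFinite _),
            Set.ncard_diff_singleton_add_one hbmem (Set.toFinite _)]
        rwa [this] at hv
      · -- all other vertices: neighborhood unchanged
        have : S'.neighborSet v = S.neighborSet v := by
          ext u
          simp only [mem_neighborSet]
          rw [hS'adj]
          constructor
          · rintro ⟨⟨hm, -⟩ | hm, hne⟩
            · exact hm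
            · rw [hfdef, Sym2.eq_iff] at hm
              rcases hm with ⟨h, -⟩ | ⟨h, -⟩
              · exact absurd h hva
              · exact absurd h hvx
          · intro hm
            refine ⟨Or.inl ⟨hm, ?_⟩, hm.ne⟩
            intro hc
            rw [Set.mem_singleton_iff, hedef, Sym2.eq_iff] at hc
            rcases hc with ⟨h, -⟩ | ⟨h, -⟩
            · exact hvb h
            · exact hva h
        rwa [this] at hv
    -- measure decreases
    have hmz : Mz S' < Mz S := by
      have hset : S'.edgeSet ∩ {ed | ∃ q : V × Bool,
          (Sum.inr (Sum.inl q) : V ⊕ (V × Bool) ⊕ Bool) ∈ ed} =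
          (S.edgeSet ∩ {ed | ∃ q : V × Bool,
          (Sum.inr (Sum.inl q) : V ⊕ (V × Bool) ⊕ Bool) ∈ ed}) \ {e} := by
        rw [hE']
        ext z
        simp only [Set.mem_inter_iff, Set.mem_union, Set.mem_diff,
          Set.mem_singleton_iff, Set.mem_setOf_eq]
        constructor
        · rintro ⟨⟨hz, hze⟩ | hz, hP⟩
          · exact ⟨⟨hz, hP⟩, hze⟩
          · subst hz
            obtain ⟨q, hq⟩ := hP
            rw [hfdef, Sym2.mem_iff] at hq
            rcases hq with h | h <;> simp at h
        · rintro ⟨⟨hz, hP⟩, hze⟩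
          exact ⟨Or.inl ⟨hz, hze⟩, hP⟩
      have hemem : e ∈ S.edgeSet ∩ {ed | ∃ q : V × Bool,
          (Sum.inr (Sum.inl q) : V ⊕ (V × Bool) ⊕ Bool) ∈ ed} := by
        refine ⟨heS, ⟨p, ?_⟩⟩
        rw [hedef, Sym2.mem_iff]
        exact Or.inl rfl
      rw [Mz, Mz, hset]
      exact Set.ncard_diff_singleton_lt_of_mem hemem (Set.toFinite _)
    exact ⟨S', hST', hint, hflip, hmz⟩

lemma transform_aux [Fintype V] [Nonempty V] (G : SimpleGraph V)
    (T : SimpleGraph (V ⊕ (V × Bool) ⊕ Bool)) :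
    ∀ (n : ℕ) (S : SimpleGraph (V ⊕ (V × Bool) ⊕ Bool)), Mz S = n →
      IsSpanningTree (Gprime G) S → internalNodes S ⊆ internalNodes T →
      ∃ TA, IsSpanningTree (Gprime G) TA ∧ internalNodes TA ⊆ internalNodes T ∧
        (∀ q : V × Bool,
          (Sum.inr (Sum.inl q) : V ⊕ (V × Bool) ⊕ Bool) ∉ internalNodes TA) ∧
        Transformable (Gprime G) (fun S => internalNodes S ⊆ internalNodes T) S TA := by
  intro n
  induction n using Nat.strong_induction_on with
  | _ n ih =>
    intro S hn hS hin
    by_cases hB : ∃ q : V × Bool,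
        (Sum.inr (Sum.inl q) : V ⊕ (V × Bool) ⊕ Bool) ∈ internalNodes S
    · obtain ⟨q, hq⟩ := hB
      obtain ⟨S', hS', hsub, hflip, hlt⟩ := flip_step_s14 G hS hq
      obtain ⟨TA, h1, h2, h3, h4⟩ :=
        ih (Mz S') (hn ▸ hlt) S' rfl hS' (hsub.trans hin)
      exact ⟨TA, h1, h2, h3,
        Relation.ReflTransGen.head ⟨hS, hS', hin, hsub.trans hin, hflip⟩ h4⟩
    · push_neg at hB
      exact ⟨S, hS, hin, hB, Relation.ReflTransGen.refl⟩


end AuxTransform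

/-- Every spanning tree `T` of `G'` can be transformed, never creating a new internal
node, into a spanning tree `T_A` whose internal nodes are contained in
`in(T) ∩ (A ∪ {x})`. -/
theorem transform_to_A_tree
    {V : Type*} [Fintype V] [Nonempty V] (G : SimpleGraph V)
    (T : SimpleGraph (V ⊕ (V × Bool) ⊕ Bool))
    (hT : IsSpanningTree (Gprime G) T) :
    ∃ TA : SimpleGraph (V ⊕ (V × Bool) ⊕ Bool),
      IsSpanningTree (Gprime G) TA ∧
      internalNodes TA ⊆ internalNodes T ∩
        (Set.range Sum.inl ∪ {Sum.inr (Sum.inr false)}) ∧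
      Transformable (Gprime G) (fun S => internalNodes S ⊆ internalNodes T) T TA := by
  obtain ⟨TA, h1, h2, h3, h4⟩ :=
    transform_aux G T (Mz T) T rfl hT (subset_refl _)
  refine ⟨TA, h1, ?_, h4⟩
  intro v hv
  refine ⟨h2 hv, ?_⟩
  rcases v with i | q | (_ | _)
  · exact Or.inl ⟨i, rfl⟩
  · exact absurd hv (h3 q)
  · exact Or.inr rfl
  · exact absurd hv (y_leaf h1)
end

section
/- Let G be a finite simple graph with vertex set {v₁, …, v_n} (n ≥ 1) and let G' be the graph on vertex set A ∪ B ∪ {x, y}, where A = {a₁, …, a_n}, B = {b_{i,t} : 1 ≤ i ≤ n, t ∈ {0,1}}, with edges: a_i is adjacent to b_{j,t} (for t ∈ {0,1}) if and only if v_j ∈ N_G[v_i]; x is adjacent to every vertex of A; and x is adjacent to y. Then for every dominating set D of G, there exists a spanning tree T of G' whose set of internal nodes is contained in {x} ∪ {a_i : v_i ∈ D}; in particular T has at most |D| + 1 internal nodes. -/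
open SimpleGraph

namespace DomTree

variable {V : Type*}

/-- The candidate spanning tree: `x` is adjacent to `y` and to every `aᵢ`,
and each `b_{j,t}` is attached to `a_{d j}`. -/
def ATree (d : V → V) : SimpleGraph (V ⊕ (V × Bool) ⊕ Bool) :=
  SimpleGraph.fromRel (fun u w =>
    match u, w with
    | Sum.inr (Sum.inr false), Sum.inl _ => True
    | Sum.inr (Sum.inr false), Sum.inr (Sum.inr true) => True
    | Sum.inl i, Sum.inr (Sum.inl (j, _)) => i = d j
    | _, _ => False)

variable {d : V → V}

lemma adj_y_iff {u : V ⊕ (V × Bool) ⊕ Bool} :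
    (ATree d).Adj (Sum.inr (Sum.inr true)) u ↔ u = Sum.inr (Sum.inr false) := by
  constructor
  · rintro ⟨hne, h | h⟩
    · rcases u with i | ⟨⟨j, t⟩⟩ | b <;> simp_all [ATree]
    · rcases u with i | ⟨⟨j, t⟩⟩ | (_|_) <;> simp_all [ATree]
  · rintro rfl
    exact ⟨by simp, Or.inr trivial⟩

lemma adj_b_iff {j : V} {t : Bool} {u : V ⊕ (V × Bool) ⊕ Bool} :
    (ATree d).Adj (Sum.inr (Sum.inl (j, t))) u ↔ u = Sum.inl (d j) := by
  constructor
  · rintro ⟨hne, h | h⟩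
    · rcases u with i | ⟨⟨j', t'⟩⟩ | (_|_) <;> simp_all [ATree]
    · rcases u with i | ⟨⟨j', t'⟩⟩ | (_|_) <;> simp_all [ATree]
  · rintro rfl
    exact ⟨by simp, Or.inr rfl⟩

lemma adj_a_iff {i : V} {u : V ⊕ (V × Bool) ⊕ Bool} :
    (ATree d).Adj (Sum.inl i) u ↔
      u = Sum.inr (Sum.inr false) ∨ ∃ j t, u = Sum.inr (Sum.inl (j, t)) ∧ d j = i := by
  constructor
  · rintro ⟨hne, h | h⟩ <;> rcases u with i' | ⟨⟨j', t'⟩⟩ | (_|_) <;>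
      simp_all [ATree]
  · rintro (rfl | ⟨j, t, rfl, rfl⟩)
    · exact ⟨by simp, Or.inr trivial⟩
    · exact ⟨by simp, Or.inl rfl⟩

lemma adj_x_iff {u : V ⊕ (V × Bool) ⊕ Bool} :
    (ATree d).Adj (Sum.inr (Sum.inr false)) u ↔
      u = Sum.inr (Sum.inr true) ∨ ∃ i, u = Sum.inl i := by
  constructor
  · rintro ⟨hne, h | h⟩
    · rcases u with i' | ⟨⟨j', t'⟩⟩ | (_|_) <;> simp_all [ATree]
    · rcases u with i' | ⟨⟨j', t'⟩⟩ | (_|_) <;> simp_all [ATree]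
  · rintro (rfl | ⟨i, rfl⟩)
    · exact ⟨by simp, Or.inl trivial⟩
    · exact ⟨by simp, Or.inl trivial⟩


/-- Case analysis for adjacency in `ATree`. -/
lemma adj_cases {u w : V ⊕ (V × Bool) ⊕ Bool} (h : (ATree d).Adj u w) :
    (u = Sum.inr (Sum.inr false) ∧ (w = Sum.inr (Sum.inr true) ∨ ∃ i, w = Sum.inl i)) ∨
    (w = Sum.inr (Sum.inr false) ∧ (u = Sum.inr (Sum.inr true) ∨ ∃ i, u = Sum.inl i)) ∨
    (∃ i j t, u = Sum.inl i ∧ w = Sum.inr (Sum.inl (j, t)) ∧ d j = i) ∨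
    (∃ i j t, w = Sum.inl i ∧ u = Sum.inr (Sum.inl (j, t)) ∧ d j = i) := by
  rcases u with i | ⟨⟨j, t⟩⟩ | (_|_)
  · rcases adj_a_iff.mp h with rfl | ⟨j, t, rfl, rfl⟩
    · exact Or.inr (Or.inl ⟨rfl, Or.inr ⟨i, rfl⟩⟩)
    · exact Or.inr (Or.inr (Or.inl ⟨d j, j, t, rfl, rfl, rfl⟩))
  · rcases adj_b_iff.mp h with rfl
    exact Or.inr (Or.inr (Or.inr ⟨d j, j, t, rfl, rfl, rfl⟩))
  · exact Or.inl ⟨rfl, adj_x_iff.mp h⟩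
  · rcases adj_y_iff.mp h with rfl
    exact Or.inr (Or.inl ⟨rfl, Or.inl rfl⟩)

lemma reach_closed {W : Type*} {H : SimpleGraph W} {S : Set W}
    (hS : ∀ a b, a ∈ S → H.Adj a b → b ∈ S) {u v : W}
    (h : H.Reachable u v) (hu : u ∈ S) : v ∈ S := by
  obtain ⟨p⟩ := h
  induction p with
  | nil => exact hu
  | cons h p ih => exact ih (hS _ _ hu h)

lemma connected (d : V → V) [Nonempty V] : (ATree d).Connected := by
  have key : ∀ u, (ATree d).Reachable u (Sum.inr (Sum.inr false)) := by
    rintro (i | ⟨⟨j, t⟩⟩ | (_|_))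
    · exact (Adj.reachable (adj_a_iff.mpr (Or.inl rfl)))
    · exact (Adj.reachable (adj_b_iff.mpr rfl)).trans
        (Adj.reachable (adj_a_iff.mpr (Or.inl rfl)))
    · exact Reachable.refl _
    · exact Adj.reachable (adj_y_iff.mpr rfl)
  exact ⟨fun u v => (key u).trans (key v).symm⟩

lemma acyclic (d : V → V) : (ATree d).IsAcyclic := by
  rw [isAcyclic_iff_forall_adj_isBridge]
  intro u w h
  rcases adj_cases h with ⟨rfl, rfl | ⟨i, rfl⟩⟩ | ⟨rfl, rfl | ⟨i, rfl⟩⟩ |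
      ⟨i, j, t, rfl, rfl, rfl⟩ | ⟨i, j, t, rfl, rfl, rfl⟩
  -- x—y
  · intro hr
    have : Sum.inr (Sum.inr false) ∈ ({Sum.inr (Sum.inr true)} :
        Set (V ⊕ (V × Bool) ⊕ Bool)) := by
      refine reach_closed ?_ hr.symm rfl
      rintro a b rfl ⟨hadj, hne⟩
      rcases adj_y_iff.mp hadj with rfl
      simp at hne
    simp at this
  -- x—aᵢ
  · intro hr
    have : Sum.inr (Sum.inr false) ∈
        ({Sum.inl i} ∪ {w | ∃ j t, w = Sum.inr (Sum.inl (j, t)) ∧ d j = i} :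
          Set (V ⊕ (V × Bool) ⊕ Bool)) := by
      refine reach_closed ?_ hr.symm (Or.inl rfl)
      rintro a b (rfl | ⟨j, t, rfl, rfl⟩) ⟨hadj, hne⟩
      · rcases adj_a_iff.mp hadj with rfl | ⟨j, t, rfl, rfl⟩
        · exact (hne (by simp [Sym2.eq_iff])).elim
        · exact Or.inr ⟨j, t, rfl, rfl⟩
      · rcases adj_b_iff.mp hadj with rfl
        exact Or.inl rfl
    rcases this with h' | ⟨j, t, h', _⟩ <;> simp_all
  -- y—x : impossible adjacency direction is fine, but the pattern gives u = y, w = x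
  · intro hr
    have : Sum.inr (Sum.inr false) ∈ ({Sum.inr (Sum.inr true)} :
        Set (V ⊕ (V × Bool) ⊕ Bool)) := by
      refine reach_closed ?_ hr rfl
      rintro a b rfl ⟨hadj, hne⟩
      rcases adj_y_iff.mp hadj with rfl
      simp [Sym2.eq_iff] at hne
    simp at this
  -- aᵢ—x
  · intro hr
    have : Sum.inr (Sum.inr false) ∈
        ({Sum.inl i} ∪ {w | ∃ j t, w = Sum.inr (Sum.inl (j, t)) ∧ d j = i} :
          Set (V ⊕ (V × Bool) ⊕ Bool)) := by
      refine reach_closed ?_ hr (Or.inl rfl)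
      rintro a b (rfl | ⟨j, t, rfl, rfl⟩) ⟨hadj, hne⟩
      · rcases adj_a_iff.mp hadj with rfl | ⟨j, t, rfl, rfl⟩
        · exact (hne (by simp [Sym2.eq_iff])).elim
        · exact Or.inr ⟨j, t, rfl, rfl⟩
      · rcases adj_b_iff.mp hadj with rfl
        exact Or.inl rfl
    rcases this with h' | ⟨j, t, h', _⟩ <;> simp_all
  -- a_{d j}—b_{j,t}
  · intro hr
    have : Sum.inl (d j) ∈ ({Sum.inr (Sum.inl (j, t))} :
        Set (V ⊕ (V × Bool) ⊕ Bool)) := by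
      refine reach_closed ?_ hr.symm rfl
      rintro a b rfl ⟨hadj, hne⟩
      rcases adj_b_iff.mp hadj with rfl
      simp [Sym2.eq_iff] at hne
    simp at this
  -- b_{j,t}—a_{d j}
  · intro hr
    have : Sum.inl (d j) ∈ ({Sum.inr (Sum.inl (j, t))} :
        Set (V ⊕ (V × Bool) ⊕ Bool)) := by
      refine reach_closed ?_ hr rfl
      rintro a b rfl ⟨hadj, hne⟩
      rcases adj_b_iff.mp hadj with rfl
      simp [Sym2.eq_iff] at hne
    simp at this


lemma neighborSet_y : (ATree d).neighborSet (Sum.inr (Sum.inr true)) =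
    {Sum.inr (Sum.inr false)} := by
  ext u; simp [neighborSet, adj_y_iff]

lemma neighborSet_b {j : V} {t : Bool} :
    (ATree d).neighborSet (Sum.inr (Sum.inl (j, t))) = {Sum.inl (d j)} := by
  ext u; simp [neighborSet, adj_b_iff]

lemma neighborSet_a {i : V} (hi : ∀ j, d j ≠ i) :
    (ATree d).neighborSet (Sum.inl i) = {Sum.inr (Sum.inr false)} := by
  ext u
  simp only [neighborSet, Set.mem_setOf_eq, Set.mem_singleton_iff, adj_a_iff]
  constructor
  · rintro (rfl | ⟨j, t, rfl, h⟩)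
    · rfl
    · exact absurd h (hi j)
  · rintro rfl; exact Or.inl rfl

end DomTree

/-- From every dominating set `D` of `G` one gets a spanning tree of `G'` whose internal
nodes are contained in `{x} ∪ {aᵢ : vᵢ ∈ D}`; in particular it has at most `|D| + 1`
internal nodes. -/
theorem dominating_set_gives_spanning_tree
    {V : Type*} [Fintype V] [Nonempty V] (G : SimpleGraph V)
    (D : Set V) (hD : ∀ w : V, w ∈ D ∨ ∃ d ∈ D, G.Adj d w) :
    ∃ T : SimpleGraph (V ⊕ (V × Bool) ⊕ Bool),
      IsSpanningTree (Gprime G) T ∧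
      internalNodes T ⊆ insert (Sum.inr (Sum.inr false)) (Sum.inl '' D) ∧
      (internalNodes T).ncard ≤ D.ncard + 1 := by
  classical
  have hd' : ∀ w : V, ∃ u, u ∈ D ∧ (w = u ∨ G.Adj u w) := by
    intro w
    rcases hD w with h | ⟨u, hu, hadj⟩
    · exact ⟨w, h, Or.inl rfl⟩
    · exact ⟨u, hu, Or.inr hadj⟩
  choose d hdD hdadj using hd'
  refine ⟨DomTree.ATree d, ⟨?_, DomTree.connected d, DomTree.acyclic d⟩, ?_, ?_⟩
  · -- ATree d ≤ Gprime G
    intro u w h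
    rcases DomTree.adj_cases h with ⟨rfl, rfl | ⟨i, rfl⟩⟩ | ⟨rfl, rfl | ⟨i, rfl⟩⟩ |
        ⟨i, j, t, rfl, rfl, rfl⟩ | ⟨i, j, t, rfl, rfl, rfl⟩
    · exact ⟨by simp, Or.inl trivial⟩
    · exact ⟨by simp, Or.inr rfl⟩
    · exact ⟨by simp, Or.inr trivial⟩
    · exact ⟨by simp, Or.inl rfl⟩
    · refine ⟨by simp, Or.inl ?_⟩
      show d j = j ∨ G.Adj (d j) j
      rcases hdadj j with h' | h'
      · exact Or.inl h'.symm
      · exact Or.inr h'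
    · refine ⟨by simp, Or.inr ?_⟩
      show d j = j ∨ G.Adj (d j) j
      rcases hdadj j with h' | h'
      · exact Or.inl h'.symm
      · exact Or.inr h'
  · -- internal nodes
    rintro (i | ⟨⟨j, t⟩⟩ | (_|_)) hv
    · by_cases hi : i ∈ D
      · exact Set.mem_insert_iff.mpr (Or.inr ⟨i, hi, rfl⟩)
      · exfalso
        apply hv
        rw [DomTree.neighborSet_a (fun j hj => hi (by rw [← hj]; exact hdD j))]
        exact Set.ncard_singleton _
    · exact absurd (by rw [DomTree.neighborSet_b]; exact Set.ncard_singleton _) hv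
    · exact Set.mem_insert _ _
    · exact absurd (by rw [DomTree.neighborSet_y]; exact Set.ncard_singleton _) hv
  · -- cardinality bound
    have hDfin : D.Finite := Set.toFinite D
    have h1 : (internalNodes (DomTree.ATree d)).ncard ≤
        (insert (Sum.inr (Sum.inr false) : V ⊕ (V × Bool) ⊕ Bool)
          (Sum.inl '' D)).ncard := by
      apply Set.ncard_le_ncard ?_ ((hDfin.image _).insert _)
      rintro (i | ⟨⟨j, t⟩⟩ | (_|_)) hv
      · by_cases hi : i ∈ D
        · exact Set.mem_insert_iff.mpr (Or.inr ⟨i, hi, rfl⟩)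
        · exfalso
          apply hv
          rw [DomTree.neighborSet_a (fun j hj => hi (by rw [← hj]; exact hdD j))]
          exact Set.ncard_singleton _
      · exact absurd (by rw [DomTree.neighborSet_b]; exact Set.ncard_singleton _) hv
      · exact Set.mem_insert _ _
      · exact absurd (by rw [DomTree.neighborSet_y]; exact Set.ncard_singleton _) hv
    calc (internalNodes (DomTree.ATree d)).ncard
        ≤ (insert (Sum.inr (Sum.inr false) : V ⊕ (V × Bool) ⊕ Bool)
            (Sum.inl '' D)).ncard := h1
      _ ≤ (Sum.inl '' D : Set (V ⊕ (V × Bool) ⊕ Bool)).ncard + 1 :=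
          Set.ncard_insert_le _ _
      _ = D.ncard + 1 := by rw [Set.ncard_image_of_injective _ Sum.inl_injective]
end
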